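/- arXiv:1709.07628 — 5 statements merged into one kernel-verified Lean document; each statement's English description precedes it below -/
import Mathlib

section
/- Let π be a graphic sequence with n terms in which each term is at most n/24 and such that π + 1 is graphic. Let (G, I) and (G′, J) be any two Kundu realizations of π + 1. Then (G, I) can be transformed into (G′, J) by a finite sequence of swap operations such that every intermediate graph, together with a displayed perfect matching, is again a Kundu realization of π + 1, and at each step the image of the current displayed 1-factor under the swap is the next displayed 1-factor (i.e. each swap is a K-swap). -/
open scoped Classical

set_option linter.unusedSectionVars false
set_option linter.unreachableTactic false
set_option linter.unusedTactic false
set_option linter.unusedVariables false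
set_option maxHeartbeats 1000000

open scoped symmDiff

/-- The degree of vertex `v` in the simple graph `G`. -/
noncomputable def deg {V : Type*} [Fintype V] (G : SimpleGraph V) (v : V) : ℕ :=
  (Finset.univ.filter fun w => G.Adj v w).card

/-- A sequence `π` is graphic if some simple graph realizes it degree-wise. -/
def IsGraphic {n : ℕ} (π : Fin n → ℕ) : Prop :=
  ∃ G : SimpleGraph (Fin n), ∀ i, deg G i = π i

/-- A swap operation on a simple graph `H`: the edges `ab, cd ∈ E(H)` (with `a,b,c,d`
distinct) are replaced by the two non-edges `bc, ad ∉ E(H)`, producing `H'`. -/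
def SwapStep {V : Type*} (H H' : SimpleGraph V) (a b c d : V) : Prop :=
  a ≠ b ∧ a ≠ c ∧ a ≠ d ∧ b ≠ c ∧ b ≠ d ∧ c ≠ d ∧
  H.Adj a b ∧ H.Adj c d ∧ ¬ H.Adj b c ∧ ¬ H.Adj a d ∧
  H'.edgeSet = (H.edgeSet \ {s(a, b), s(c, d)}) ∪ {s(b, c), s(a, d)}

/-- A Kundu-restricted swap (K-swap) on a pair `p = (G, I)` (standing for the graph
`G ∪ I` with displayed 1-factor `I`): a swap `ab, cd ⇒ bc, ad` on `G ∪ I` such that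
either both `ab, cd ∈ I` (and the new displayed 1-factor is `(I \ {ab,cd}) ∪ {bc,ad}`,
while `G` is unchanged), or both `ab, cd ∉ I` (and the displayed 1-factor is unchanged,
while the swap is performed inside `G`). -/
def KSwap {V : Type*} (p q : SimpleGraph V × SimpleGraph V) : Prop :=
  ∃ a b c d : V, SwapStep (p.1 ⊔ p.2) (q.1 ⊔ q.2) a b c d ∧
    ((p.2.Adj a b ∧ p.2.Adj c d ∧ q.1 = p.1 ∧
        q.2.edgeSet = (p.2.edgeSet \ {s(a, b), s(c, d)}) ∪ {s(b, c), s(a, d)}) ∨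
     (¬ p.2.Adj a b ∧ ¬ p.2.Adj c d ∧ q.2 = p.2 ∧
        q.1.edgeSet = (p.1.edgeSet \ {s(a, b), s(c, d)}) ∪ {s(b, c), s(a, d)}))

/-- `(G, I)` is a Kundu realization of `π + 1`: `G` realizes `π`, the displayed graph `I`
is a perfect matching (realizes the all-ones sequence), and `G` and `I` are edge-disjoint. -/
def KunduState {n : ℕ} (π : Fin n → ℕ) (p : SimpleGraph (Fin n) × SimpleGraph (Fin n)) :
    Prop :=
  (∀ i, deg p.1 i = π i) ∧ (∀ v, deg p.2 v = 1) ∧ Disjoint p.1 p.2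

namespace KAux

open Finset SimpleGraph

variable {V : Type*} [Fintype V]

noncomputable def NB (G : SimpleGraph V) (v : V) : Finset V :=
  Finset.univ.filter fun w => G.Adj v w

lemma deg_eq_NB (G : SimpleGraph V) (v : V) : deg G v = (NB G v).card := rfl

lemma mem_NB {G : SimpleGraph V} {v w : V} : w ∈ NB G v ↔ G.Adj v w := by simp [NB]

noncomputable def mySwap (H : SimpleGraph V) (a b c d : V) : SimpleGraph V :=
  SimpleGraph.fromEdgeSet ((H.edgeSet \ {s(a, b), s(c, d)}) ∪ {s(b, c), s(a, d)})

def SwapOK (H : SimpleGraph V) (a b c d : V) : Prop :=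
  a ≠ b ∧ a ≠ c ∧ a ≠ d ∧ b ≠ c ∧ b ≠ d ∧ c ≠ d ∧
  H.Adj a b ∧ H.Adj c d ∧ ¬ H.Adj b c ∧ ¬ H.Adj a d

lemma mySwap_adj {H : SimpleGraph V} {a b c d : V} (h : SwapOK H a b c d) (x y : V) :
    (mySwap H a b c d).Adj x y ↔
      (H.Adj x y ∧ ¬((x = a ∧ y = b ∨ x = b ∧ y = a) ∨ x = c ∧ y = d ∨ x = d ∧ y = c) ∨
        (x = b ∧ y = c ∨ x = c ∧ y = b) ∨ x = a ∧ y = d ∨ x = d ∧ y = a) := by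
  obtain ⟨hab, hac, had, hbc, hbd, hcd, h1, h2, h3, h4⟩ := h
  simp only [mySwap, fromEdgeSet_adj, Set.mem_union, Set.mem_diff, Set.mem_insert_iff,
    Set.mem_singleton_iff, SimpleGraph.mem_edgeSet, Sym2.eq_iff]
  constructor
  · exact fun h => h.1
  · intro h
    refine ⟨h, ?_⟩
    rcases h with ⟨hxy, -⟩ | (⟨rfl, rfl⟩ | ⟨rfl, rfl⟩) | ⟨rfl, rfl⟩ | ⟨rfl, rfl⟩
    · exact hxy.ne
    · exact hbc
    · exact fun e => hbc e.symm
    · exact had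
    · exact fun e => had e.symm

lemma mySwap_edgeSet {H : SimpleGraph V} {a b c d : V} (h : SwapOK H a b c d) :
    (mySwap H a b c d).edgeSet = (H.edgeSet \ {s(a, b), s(c, d)}) ∪ {s(b, c), s(a, d)} := by
  obtain ⟨hab, hac, had, hbc, hbd, hcd, h1, h2, h3, h4⟩ := h
  rw [mySwap, edgeSet_fromEdgeSet]
  ext e
  simp only [Set.mem_diff, Set.mem_setOf_eq]
  refine ⟨fun he => he.1, fun he => ⟨he, ?_⟩⟩
  rcases he with ⟨heH, -⟩ | he
  · exact SimpleGraph.not_isDiag_of_mem_edgeSet H heH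
  · simp only [Set.mem_insert_iff, Set.mem_singleton_iff] at he
    rcases he with rfl | rfl
    · rw [Sym2.mem_diagSet, Sym2.isDiag_iff_proj_eq]; exact hbc
    · rw [Sym2.mem_diagSet, Sym2.isDiag_iff_proj_eq]; exact had

lemma SwapOK.step {H : SimpleGraph V} {a b c d : V} (h : SwapOK H a b c d) :
    SwapStep H (mySwap H a b c d) a b c d := by
  obtain ⟨hab, hac, had, hbc, hbd, hcd, h1, h2, h3, h4⟩ := h
  exact ⟨hab, hac, had, hbc, hbd, hcd, h1, h2, h3, h4,
    mySwap_edgeSet ⟨hab, hac, had, hbc, hbd, hcd, h1, h2, h3, h4⟩⟩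

section NBlem
variable {H : SimpleGraph V} {a b c d : V}

lemma NB_mySwap_a (h : SwapOK H a b c d) :
    NB (mySwap H a b c d) a = insert d ((NB H a).erase b) := by
  obtain ⟨hab, hac, had, hbc, hbd, hcd, h1, h2, h3, h4⟩ := h
  ext x
  simp only [mem_NB, mem_insert, mem_erase,
    mySwap_adj ⟨hab, hac, had, hbc, hbd, hcd, h1, h2, h3, h4⟩]
  constructor
  · intro hh
    rcases hh with ⟨h5, h6⟩ | ((⟨e1, e2⟩ | ⟨e1, e2⟩) | ⟨e1, e2⟩ | ⟨e1, e2⟩) <;>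
      first | tauto | simp_all
  · intro hh
    rcases hh with rfl | ⟨hxb, hax⟩
    · tauto
    · refine Or.inl ⟨hax, ?_⟩
      rintro ((⟨e1, e2⟩ | ⟨e1, e2⟩) | ⟨e1, e2⟩ | ⟨e1, e2⟩) <;> simp_all

lemma NB_mySwap_b (h : SwapOK H a b c d) :
    NB (mySwap H a b c d) b = insert c ((NB H b).erase a) := by
  obtain ⟨hab, hac, had, hbc, hbd, hcd, h1, h2, h3, h4⟩ := h
  ext x
  simp only [mem_NB, mem_insert, mem_erase,
    mySwap_adj ⟨hab, hac, had, hbc, hbd, hcd, h1, h2, h3, h4⟩]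
  constructor
  · intro hh
    rcases hh with ⟨h5, h6⟩ | ((⟨e1, e2⟩ | ⟨e1, e2⟩) | ⟨e1, e2⟩ | ⟨e1, e2⟩) <;>
      first | tauto | simp_all
  · intro hh
    rcases hh with rfl | ⟨hxa, hbx⟩
    · tauto
    · refine Or.inl ⟨hbx, ?_⟩
      rintro ((⟨e1, e2⟩ | ⟨e1, e2⟩) | ⟨e1, e2⟩ | ⟨e1, e2⟩) <;> simp_all

lemma NB_mySwap_c (h : SwapOK H a b c d) :
    NB (mySwap H a b c d) c = insert b ((NB H c).erase d) := by
  obtain ⟨hab, hac, had, hbc, hbd, hcd, h1, h2, h3, h4⟩ := h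
  ext x
  simp only [mem_NB, mem_insert, mem_erase,
    mySwap_adj ⟨hab, hac, had, hbc, hbd, hcd, h1, h2, h3, h4⟩]
  constructor
  · intro hh
    rcases hh with ⟨h5, h6⟩ | ((⟨e1, e2⟩ | ⟨e1, e2⟩) | ⟨e1, e2⟩ | ⟨e1, e2⟩) <;>
      first | tauto | simp_all
  · intro hh
    rcases hh with rfl | ⟨hxd, hcx⟩
    · tauto
    · refine Or.inl ⟨hcx, ?_⟩
      rintro ((⟨e1, e2⟩ | ⟨e1, e2⟩) | ⟨e1, e2⟩ | ⟨e1, e2⟩) <;> simp_all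

lemma NB_mySwap_d (h : SwapOK H a b c d) :
    NB (mySwap H a b c d) d = insert a ((NB H d).erase c) := by
  obtain ⟨hab, hac, had, hbc, hbd, hcd, h1, h2, h3, h4⟩ := h
  ext x
  simp only [mem_NB, mem_insert, mem_erase,
    mySwap_adj ⟨hab, hac, had, hbc, hbd, hcd, h1, h2, h3, h4⟩]
  constructor
  · intro hh
    rcases hh with ⟨h5, h6⟩ | ((⟨e1, e2⟩ | ⟨e1, e2⟩) | ⟨e1, e2⟩ | ⟨e1, e2⟩) <;>
      first | tauto | simp_all
  · intro hh
    rcases hh with rfl | ⟨hxc, hdx⟩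
    · tauto
    · refine Or.inl ⟨hdx, ?_⟩
      rintro ((⟨e1, e2⟩ | ⟨e1, e2⟩) | ⟨e1, e2⟩ | ⟨e1, e2⟩) <;> simp_all

lemma NB_mySwap_other (h : SwapOK H a b c d) {v : V}
    (hva : v ≠ a) (hvb : v ≠ b) (hvc : v ≠ c) (hvd : v ≠ d) :
    NB (mySwap H a b c d) v = NB H v := by
  obtain ⟨hab, hac, had, hbc, hbd, hcd, h1, h2, h3, h4⟩ := h
  ext x
  simp only [mem_NB, mySwap_adj ⟨hab, hac, had, hbc, hbd, hcd, h1, h2, h3, h4⟩]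
  constructor
  · intro hh
    rcases hh with ⟨h5, h6⟩ | ((⟨e1, e2⟩ | ⟨e1, e2⟩) | ⟨e1, e2⟩ | ⟨e1, e2⟩) <;>
      first | tauto | simp_all
  · intro hvx
    refine Or.inl ⟨hvx, ?_⟩
    rintro ((⟨e1, e2⟩ | ⟨e1, e2⟩) | ⟨e1, e2⟩ | ⟨e1, e2⟩) <;> simp_all

lemma deg_mySwap (h : SwapOK H a b c d) (v : V) :
    deg (mySwap H a b c d) v = deg H v := by
  obtain ⟨hab, hac, had, hbc, hbd, hcd, h1, h2, h3, h4⟩ := h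
  have hOK : SwapOK H a b c d := ⟨hab, hac, had, hbc, hbd, hcd, h1, h2, h3, h4⟩
  by_cases hva : v = a
  · subst hva
    rw [deg_eq_NB, deg_eq_NB, NB_mySwap_a hOK, card_insert_of_notMem, card_erase_of_mem]
    · have hb : b ∈ NB H v := mem_NB.2 h1
      have hpos : 0 < (NB H v).card := card_pos.2 ⟨b, hb⟩
      omega
    · exact mem_NB.2 h1
    · simp only [mem_erase, mem_NB]
      rintro ⟨-, hadj⟩; exact h4 hadj
  by_cases hvb : v = b
  · subst hvb
    rw [deg_eq_NB, deg_eq_NB, NB_mySwap_b hOK, card_insert_of_notMem, card_erase_of_mem]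
    · have hb : a ∈ NB H v := mem_NB.2 h1.symm
      have hpos : 0 < (NB H v).card := card_pos.2 ⟨a, hb⟩
      omega
    · exact mem_NB.2 h1.symm
    · simp only [mem_erase, mem_NB]
      rintro ⟨-, hadj⟩; exact h3 hadj
  by_cases hvc : v = c
  · subst hvc
    rw [deg_eq_NB, deg_eq_NB, NB_mySwap_c hOK, card_insert_of_notMem, card_erase_of_mem]
    · have hb : d ∈ NB H v := mem_NB.2 h2
      have hpos : 0 < (NB H v).card := card_pos.2 ⟨d, hb⟩
      omega
    · exact mem_NB.2 h2
    · simp only [mem_erase, mem_NB]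
      rintro ⟨-, hadj⟩; exact h3 hadj.symm
  by_cases hvd : v = d
  · subst hvd
    rw [deg_eq_NB, deg_eq_NB, NB_mySwap_d hOK, card_insert_of_notMem, card_erase_of_mem]
    · have hb : c ∈ NB H v := mem_NB.2 h2.symm
      have hpos : 0 < (NB H v).card := card_pos.2 ⟨c, hb⟩
      omega
    · exact mem_NB.2 h2.symm
    · simp only [mem_erase, mem_NB]
      rintro ⟨-, hadj⟩; exact h4 hadj.symm
  · rw [deg_eq_NB, deg_eq_NB, NB_mySwap_other hOK hva hvb hvc hvd]

end NBlem


variable {n : ℕ} {π : Fin n → ℕ}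

def Step (π : Fin n → ℕ) (p q : SimpleGraph (Fin n) × SimpleGraph (Fin n)) : Prop :=
  KSwap p q ∧ KunduState π q

def Reach (π : Fin n → ℕ) : (SimpleGraph (Fin n) × SimpleGraph (Fin n)) →
    (SimpleGraph (Fin n) × SimpleGraph (Fin n)) → Prop :=
  Relation.ReflTransGen (Step π)

lemma disj_not_adj {G I : SimpleGraph (Fin n)} (hd : Disjoint G I) {x y : Fin n}
    (h : G.Adj x y) : ¬ I.Adj x y := by
  intro h'
  have hd' : Disjoint G.edgeSet I.edgeSet := SimpleGraph.disjoint_edgeSet.2 hd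
  exact Set.disjoint_left.1 hd' ((SimpleGraph.mem_edgeSet G).2 h) ((SimpleGraph.mem_edgeSet I).2 h')

lemma gswap_step {G I : SimpleGraph (Fin n)} (hK : KunduState π (G, I)) {a b c d : Fin n}
    (hab : a ≠ b) (hac : a ≠ c) (had : a ≠ d) (hbc : b ≠ c) (hbd : b ≠ d) (hcd : c ≠ d)
    (h1 : G.Adj a b) (h2 : G.Adj c d)
    (h3 : ¬ (G ⊔ I).Adj b c) (h4 : ¬ (G ⊔ I).Adj a d) :
    Step π (G, I) (mySwap G a b c d, I) := by
  obtain ⟨hdeg, hmat, hdisj⟩ := hK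
  have h3G : ¬ G.Adj b c := fun h => h3 (by simp [h])
  have h4G : ¬ G.Adj a d := fun h => h4 (by simp [h])
  have h3I : ¬ I.Adj b c := fun h => h3 (by simp [h])
  have h4I : ¬ I.Adj a d := fun h => h4 (by simp [h])
  have hOK : SwapOK G a b c d := ⟨hab, hac, had, hbc, hbd, hcd, h1, h2, h3G, h4G⟩
  have hIab : ¬ I.Adj a b := disj_not_adj hdisj h1
  have hIcd : ¬ I.Adj c d := disj_not_adj hdisj h2
  have hES := mySwap_edgeSet hOK
  have hsup : (mySwap G a b c d ⊔ I).edgeSet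
      = (((G ⊔ I).edgeSet) \ {s(a, b), s(c, d)}) ∪ {s(b, c), s(a, d)} := by
    rw [edgeSet_sup, edgeSet_sup, hES]
    ext e
    simp only [Set.mem_union, Set.mem_diff, Set.mem_insert_iff, Set.mem_singleton_iff]
    constructor
    · rintro ((⟨heG, hne⟩ | hadd) | heI)
      · exact Or.inl ⟨Or.inl heG, hne⟩
      · exact Or.inr hadd
      · refine Or.inl ⟨Or.inr heI, ?_⟩
        rintro (rfl | rfl)
        · exact hIab ((SimpleGraph.mem_edgeSet I).1 heI)
        · exact hIcd ((SimpleGraph.mem_edgeSet I).1 heI)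
    · rintro (⟨(heG | heI), hne⟩ | hadd)
      · exact Or.inl (Or.inl ⟨heG, hne⟩)
      · exact Or.inr heI
      · exact Or.inl (Or.inr hadd)
  have hstep : SwapStep (G ⊔ I) (mySwap G a b c d ⊔ I) a b c d :=
    ⟨hab, hac, had, hbc, hbd, hcd, by simp [h1], by simp [h2], h3, h4, hsup⟩
  have hdisj2 : Disjoint (mySwap G a b c d) I := by
    rw [← SimpleGraph.disjoint_edgeSet, hES, Set.disjoint_union_left]
    constructor
    · exact Set.disjoint_of_subset_left Set.diff_subset (SimpleGraph.disjoint_edgeSet.2 hdisj)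
    · rw [Set.disjoint_left]
      intro e he
      simp only [Set.mem_insert_iff, Set.mem_singleton_iff] at he
      rcases he with rfl | rfl
      · exact fun he2 => h3I ((SimpleGraph.mem_edgeSet I).1 he2)
      · exact fun he2 => h4I ((SimpleGraph.mem_edgeSet I).1 he2)
  refine ⟨⟨a, b, c, d, hstep, Or.inr ⟨hIab, hIcd, rfl, hES⟩⟩, ?_, ?_, hdisj2⟩
  · intro i; rw [show (mySwap G a b c d, I).1 = mySwap G a b c d from rfl,
      deg_mySwap hOK]; exact hdeg i
  · exact hmat

lemma mswap_step {G I : SimpleGraph (Fin n)} (hK : KunduState π (G, I)) {a b c d : Fin n}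
    (hab : a ≠ b) (hac : a ≠ c) (had : a ≠ d) (hbc : b ≠ c) (hbd : b ≠ d) (hcd : c ≠ d)
    (h1 : I.Adj a b) (h2 : I.Adj c d)
    (h3 : ¬ (G ⊔ I).Adj b c) (h4 : ¬ (G ⊔ I).Adj a d) :
    Step π (G, I) (G, mySwap I a b c d) := by
  obtain ⟨hdeg, hmat, hdisj⟩ := hK
  have h3G : ¬ G.Adj b c := fun h => h3 (by simp [h])
  have h4G : ¬ G.Adj a d := fun h => h4 (by simp [h])
  have h3I : ¬ I.Adj b c := fun h => h3 (by simp [h])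
  have h4I : ¬ I.Adj a d := fun h => h4 (by simp [h])
  have hOK : SwapOK I a b c d := ⟨hab, hac, had, hbc, hbd, hcd, h1, h2, h3I, h4I⟩
  have hGab : ¬ G.Adj a b := fun h => disj_not_adj hdisj h h1
  have hGcd : ¬ G.Adj c d := fun h => disj_not_adj hdisj h h2
  have hES := mySwap_edgeSet hOK
  have hsup : (G ⊔ mySwap I a b c d).edgeSet
      = (((G ⊔ I).edgeSet) \ {s(a, b), s(c, d)}) ∪ {s(b, c), s(a, d)} := by
    rw [edgeSet_sup, edgeSet_sup, hES]
    ext e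
    simp only [Set.mem_union, Set.mem_diff, Set.mem_insert_iff, Set.mem_singleton_iff]
    constructor
    · rintro (heG | (⟨heI, hne⟩ | hadd))
      · refine Or.inl ⟨Or.inl heG, ?_⟩
        rintro (rfl | rfl)
        · exact hGab ((SimpleGraph.mem_edgeSet G).1 heG)
        · exact hGcd ((SimpleGraph.mem_edgeSet G).1 heG)
      · exact Or.inl ⟨Or.inr heI, hne⟩
      · exact Or.inr hadd
    · rintro (⟨(heG | heI), hne⟩ | hadd)
      · exact Or.inl heG
      · exact Or.inr (Or.inl ⟨heI, hne⟩)
      · exact Or.inr (Or.inr hadd)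
  have hstep : SwapStep (G ⊔ I) (G ⊔ mySwap I a b c d) a b c d :=
    ⟨hab, hac, had, hbc, hbd, hcd, by simp [h1], by simp [h2], h3, h4, hsup⟩
  have hdisj2 : Disjoint G (mySwap I a b c d) := by
    rw [← SimpleGraph.disjoint_edgeSet, hES, Set.disjoint_union_right]
    constructor
    · exact Set.disjoint_of_subset_right Set.diff_subset (SimpleGraph.disjoint_edgeSet.2 hdisj)
    · rw [Set.disjoint_right]
      intro e he
      simp only [Set.mem_insert_iff, Set.mem_singleton_iff] at he
      rcases he with rfl | rfl
      · exact fun he2 => h3G ((SimpleGraph.mem_edgeSet G).1 he2)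
      · exact fun he2 => h4G ((SimpleGraph.mem_edgeSet G).1 he2)
  refine ⟨⟨a, b, c, d, hstep, Or.inl ⟨h1, h2, rfl, hES⟩⟩, ?_, ?_, hdisj2⟩
  · exact hdeg
  · intro v; rw [show (G, mySwap I a b c d).2 = mySwap I a b c d from rfl,
      deg_mySwap hOK]; exact hmat v


/-! ## Classical swap connectivity within a vertex set S -/

def PlainSwapIn (S : Finset (Fin n)) (H K : SimpleGraph (Fin n)) : Prop :=
  ∃ a b c d : Fin n, a ∈ S ∧ b ∈ S ∧ c ∈ S ∧ d ∈ S ∧ SwapOK H a b c d ∧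
    K = mySwap H a b c d

lemma mySwap_adj_off {H : SimpleGraph (Fin n)} {a b c d : Fin n} (h : SwapOK H a b c d)
    {x y : Fin n} (hx : x ≠ a ∧ x ≠ b ∧ x ≠ c ∧ x ≠ d) :
    ((mySwap H a b c d).Adj x y ↔ H.Adj x y) := by
  have := NB_mySwap_other h hx.1 hx.2.1 hx.2.2.1 hx.2.2.2
  constructor
  · intro hadj
    have : y ∈ NB H x := by rw [← this]; exact mem_NB.2 hadj
    exact mem_NB.1 this
  · intro hadj
    have h2 : y ∈ NB (mySwap H a b c d) x := by rw [this]; exact mem_NB.2 hadj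
    exact mem_NB.1 h2

lemma pswap_deg {S : Finset (Fin n)} {H K : SimpleGraph (Fin n)} (h : PlainSwapIn S H K) :
    ∀ v, deg K v = deg H v := by
  obtain ⟨a, b, c, d, -, -, -, -, hOK, rfl⟩ := h
  exact deg_mySwap hOK

lemma pswap_agree {S : Finset (Fin n)} {H K : SimpleGraph (Fin n)} (h : PlainSwapIn S H K)
    {x y : Fin n} (hxy : x ∉ S ∨ y ∉ S) : (K.Adj x y ↔ H.Adj x y) := by
  obtain ⟨a, b, c, d, ha, hb, hc, hd, hOK, rfl⟩ := h
  rcases hxy with hx | hy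
  · exact mySwap_adj_off hOK ⟨fun e => hx (e ▸ ha), fun e => hx (e ▸ hb),
      fun e => hx (e ▸ hc), fun e => hx (e ▸ hd)⟩
  · rw [SimpleGraph.adj_comm, SimpleGraph.adj_comm H x y]
    exact mySwap_adj_off hOK ⟨fun e => hy (e ▸ ha), fun e => hy (e ▸ hb),
      fun e => hy (e ▸ hc), fun e => hy (e ▸ hd)⟩

lemma rtg_deg {S : Finset (Fin n)} {H K : SimpleGraph (Fin n)}
    (h : Relation.ReflTransGen (PlainSwapIn S) H K) : ∀ v, deg K v = deg H v := by
  induction h with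
  | refl => exact fun v => rfl
  | tail _ hstep ih => exact fun v => (pswap_deg hstep v).trans (ih v)

lemma rtg_agree {S : Finset (Fin n)} {H K : SimpleGraph (Fin n)}
    (h : Relation.ReflTransGen (PlainSwapIn S) H K) {x y : Fin n}
    (hxy : x ∉ S ∨ y ∉ S) : (K.Adj x y ↔ H.Adj x y) := by
  induction h with
  | refl => exact Iff.rfl
  | tail _ hstep ih => exact (pswap_agree hstep hxy).trans ih

lemma sym2_ne_of_ne {a b c d : Fin n} (h1 : a ≠ c ∧ a ≠ d) :
    s(a, b) ≠ s(c, d) := by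
  rw [Ne, Sym2.eq_iff]
  rintro (⟨rfl, rfl⟩ | ⟨rfl, rfl⟩)
  · exact h1.1 rfl
  · exact h1.2 rfl

lemma pswap_rev {S : Finset (Fin n)} {H K : SimpleGraph (Fin n)} (h : PlainSwapIn S H K) :
    PlainSwapIn S K H := by
  obtain ⟨a, b, c, d, ha, hb, hc, hd, hOK, rfl⟩ := h
  obtain ⟨hab, hac, had, hbc, hbd, hcd, h1, h2, h3, h4⟩ := hOK
  have hOK : SwapOK H a b c d := ⟨hab, hac, had, hbc, hbd, hcd, h1, h2, h3, h4⟩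
  have hadj := mySwap_adj hOK
  have hOK2 : SwapOK (mySwap H a b c d) c b a d := by
    refine ⟨hbc.symm, hac.symm, hcd, hab.symm, hbd, had, ?_, ?_, ?_, ?_⟩
    · rw [hadj]; tauto
    · rw [hadj]; tauto
    · rw [hadj]
      rintro (⟨hba, hn⟩ | hh)
      · exact hn (by tauto)
      · rcases hh with (⟨e1, e2⟩ | ⟨e1, e2⟩) | ⟨e1, e2⟩ | ⟨e1, e2⟩ <;> simp_all
    · rw [hadj]
      rintro (⟨hcd', hn⟩ | hh)
      · exact hn (by tauto)
      · rcases hh with (⟨e1, e2⟩ | ⟨e1, e2⟩) | ⟨e1, e2⟩ | ⟨e1, e2⟩ <;> simp_all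
  refine ⟨c, b, a, d, hc, hb, ha, hd, hOK2, ?_⟩
  have hES2 := mySwap_edgeSet hOK2
  have hES := mySwap_edgeSet hOK
  apply SimpleGraph.edgeSet_inj.1
  rw [hES2, hES]
  have habE : s(a, b) ∈ H.edgeSet := (SimpleGraph.mem_edgeSet H).2 h1
  have hcdE : s(c, d) ∈ H.edgeSet := (SimpleGraph.mem_edgeSet H).2 h2
  have hbcE : s(b, c) ∉ H.edgeSet := fun he => h3 ((SimpleGraph.mem_edgeSet H).1 he)
  have hadE : s(a, d) ∉ H.edgeSet := fun he => h4 ((SimpleGraph.mem_edgeSet H).1 he)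
  ext e
  simp only [Set.mem_union, Set.mem_diff, Set.mem_insert_iff, Set.mem_singleton_iff]
  constructor
  · intro heH
    by_cases hp : e = s(a, b)
    · subst hp
      exact Or.inr (Or.inl Sym2.eq_swap)
    by_cases hq : e = s(c, d)
    · subst hq
      exact Or.inr (Or.inr rfl)
    · refine Or.inl ⟨Or.inl ⟨heH, ?_⟩, ?_⟩
      · rintro (rfl | rfl)
        · exact hp rfl
        · exact hq rfl
      · rintro (rfl | rfl)
        · exact hbcE (by rw [← Sym2.eq_swap]; exact heH)
        · exact hadE heH
  · rintro (⟨hin, hne2⟩ | hnew)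
    · rcases hin with ⟨heH, -⟩ | hA
      · exact heH
      · exfalso
        rcases hA with rfl | rfl
        · exact hne2 (Or.inl Sym2.eq_swap)
        · exact hne2 (Or.inr rfl)
    · rcases hnew with rfl | rfl
      · rw [Sym2.eq_swap]; exact habE
      · exact hcdE

lemma rtg_rev {S : Finset (Fin n)} {H K : SimpleGraph (Fin n)}
    (h : Relation.ReflTransGen (PlainSwapIn S) H K) :
    Relation.ReflTransGen (PlainSwapIn S) K H := by
  induction h with
  | refl => exact Relation.ReflTransGen.refl
  | tail _ hstep ih => exact Relation.ReflTransGen.head (pswap_rev hstep) ih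

noncomputable def degS (S : Finset (Fin n)) (H : SimpleGraph (Fin n)) (u : Fin n) : ℕ :=
  (NB H u ∩ S).card

lemma degS_congr {S : Finset (Fin n)} {H H' : SimpleGraph (Fin n)}
    (hdeg : ∀ v, deg H v = deg H' v)
    (hagree : ∀ a b : Fin n, (a ∉ S ∨ b ∉ S) → (H.Adj a b ↔ H'.Adj a b)) (u : Fin n) :
    degS S H u = degS S H' u := by
  have hsplit : ∀ K : SimpleGraph (Fin n), deg K u = (NB K u ∩ S).card + (NB K u \ S).card := by
    intro K
    rw [deg_eq_NB]
    exact (Finset.card_inter_add_card_sdiff _ _).symm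
  have hout : NB H u \ S = NB H' u \ S := by
    ext x
    simp only [Finset.mem_sdiff, mem_NB]
    constructor
    · rintro ⟨hadj, hx⟩; exact ⟨(hagree u x (Or.inr hx)).1 hadj, hx⟩
    · rintro ⟨hadj, hx⟩; exact ⟨(hagree u x (Or.inr hx)).2 hadj, hx⟩
  have h1 := hsplit H
  have h2 := hsplit H'
  rw [hout] at h1
  have := hdeg u
  unfold degS
  omega

lemma exchange_t {S : Finset (Fin n)} {H : SimpleGraph (Fin n)} {v₀ z w : Fin n}
    (hv₀S : v₀ ∈ S) (hzS : z ∈ S) (hw : H.Adj v₀ w) (hz : ¬ H.Adj v₀ z) (hzv₀ : z ≠ v₀)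
    (hge : degS S H w ≤ degS S H z) :
    ∃ t, t ∈ S ∧ H.Adj z t ∧ ¬ H.Adj w t ∧ t ≠ w ∧ t ≠ v₀ := by
  by_contra hcon
  push_neg at hcon
  have hsub : NB H z ∩ S ⊆ insert w (NB H w ∩ S) := by
    intro t ht
    rw [Finset.mem_inter, mem_NB] at ht
    by_cases htw : t = w
    · simp [htw]
    · rcases Classical.em (H.Adj w t) with hwt | hwt
      · exact Finset.mem_insert_of_mem (by rw [Finset.mem_inter, mem_NB]; exact ⟨hwt, ht.2⟩)
      · have htv₀ := hcon t ht.2 ht.1 hwt htw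
        exfalso
        subst htv₀
        exact hz ht.1.symm
  have hv₀w : v₀ ∈ NB H w ∩ S := by
    rw [Finset.mem_inter, mem_NB]; exact ⟨hw.symm, hv₀S⟩
  have hv₀z : v₀ ∉ NB H z ∩ S := by
    rw [Finset.mem_inter, mem_NB]
    rintro ⟨hadj, -⟩; exact hz hadj.symm
  have hsub2 : NB H z ∩ S ⊆ (insert w (NB H w ∩ S)).erase v₀ := by
    intro t ht
    rw [Finset.mem_erase]
    exact ⟨fun e => hv₀z (e ▸ ht), hsub ht⟩
  have hwnotin : w ∉ NB H w ∩ S := by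
    rw [Finset.mem_inter, mem_NB]
    rintro ⟨hadj, -⟩; exact H.irrefl hadj
  have hcard : ((insert w (NB H w ∩ S)).erase v₀).card = (NB H w ∩ S).card := by
    rw [Finset.card_erase_of_mem (Finset.mem_insert_of_mem hv₀w),
      Finset.card_insert_of_notMem hwnotin]
    omega
  have heq : NB H z ∩ S = (insert w (NB H w ∩ S)).erase v₀ := by
    apply Finset.eq_of_subset_of_card_le hsub2
    rw [hcard]
    exact hge
  have hwz : w ∈ NB H z ∩ S := by
    rw [heq, Finset.mem_erase]
    refine ⟨?_, Finset.mem_insert_self _ _⟩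
    rintro rfl; exact H.irrefl hw
  have hadjzw : H.Adj z w := by
    rw [Finset.mem_inter, mem_NB] at hwz; exact hwz.1
  have hzmem : z ∈ NB H z ∩ S := by
    rw [heq, Finset.mem_erase]
    refine ⟨hzv₀, Finset.mem_insert_of_mem ?_⟩
    rw [Finset.mem_inter, mem_NB]
    exact ⟨hadjzw.symm, hzS⟩
  rw [Finset.mem_inter, mem_NB] at hzmem
  exact H.irrefl hzmem.1

lemma phase (S : Finset (Fin n)) (v₀ : Fin n) (hv₀ : v₀ ∈ S) :
    ∀ (k : ℕ) (H H' : SimpleGraph (Fin n)),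
    (∀ v, deg H v = deg H' v) →
    (∀ a b : Fin n, (a ∉ S ∨ b ∉ S) → (H.Adj a b ↔ H'.Adj a b)) →
    ((NB H v₀ ∩ S) ∆ (NB H' v₀ ∩ S)).card ≤ k →
    ∃ H₁ H₁', Relation.ReflTransGen (PlainSwapIn S) H H₁ ∧
      Relation.ReflTransGen (PlainSwapIn S) H' H₁' ∧
      NB H₁ v₀ ∩ S = NB H₁' v₀ ∩ S ∧
      (∀ v, deg H₁ v = deg H₁' v) ∧
      (∀ a b : Fin n, (a ∉ S ∨ b ∉ S) → (H₁.Adj a b ↔ H₁'.Adj a b)) := by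
  intro k
  induction k with
  | zero =>
    intro H H' hdeg hagree hk
    refine ⟨H, H', Relation.ReflTransGen.refl, Relation.ReflTransGen.refl, ?_, hdeg, hagree⟩
    have hemp : (NB H v₀ ∩ S) ∆ (NB H' v₀ ∩ S) = ∅ :=
      Finset.card_eq_zero.1 (Nat.le_antisymm hk (Nat.zero_le _))
    ext x
    constructor
    · intro hx
      by_contra hx'
      have : x ∈ (NB H v₀ ∩ S) ∆ (NB H' v₀ ∩ S) :=
        Finset.mem_symmDiff.2 (Or.inl ⟨hx, hx'⟩)
      rw [hemp] at this
      exact absurd this (Finset.notMem_empty x)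
    · intro hx
      by_contra hx'
      have : x ∈ (NB H v₀ ∩ S) ∆ (NB H' v₀ ∩ S) :=
        Finset.mem_symmDiff.2 (Or.inr ⟨hx, hx'⟩)
      rw [hemp] at this
      exact absurd this (Finset.notMem_empty x)
  | succ k IH =>
    intro H H' hdeg hagree hk
    by_cases heq : NB H v₀ ∩ S = NB H' v₀ ∩ S
    · exact ⟨H, H', Relation.ReflTransGen.refl, Relation.ReflTransGen.refl, heq, hdeg, hagree⟩
    set A := NB H v₀ ∩ S with hA
    set B := NB H' v₀ ∩ S with hB
    have hcards : A.card = B.card := degS_congr hdeg hagree v₀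
    have hBA : (B \ A).Nonempty := by
      rw [Finset.sdiff_nonempty]
      intro hsub
      exact heq (Finset.eq_of_subset_of_card_le hsub (le_of_eq hcards)).symm
    have hAB : (A \ B).Nonempty := by
      rw [Finset.sdiff_nonempty]
      intro hsub
      exact heq (Finset.eq_of_subset_of_card_le hsub (le_of_eq hcards.symm))
    obtain ⟨z, hz⟩ := hBA
    obtain ⟨w, hw⟩ := hAB
    rw [Finset.mem_sdiff] at hz hw
    have hzS : z ∈ S := (Finset.mem_inter.1 hz.1).2
    have hwS : w ∈ S := (Finset.mem_inter.1 hw.1).2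
    have hzH' : H'.Adj v₀ z := mem_NB.1 (Finset.mem_inter.1 hz.1).1
    have hwH : H.Adj v₀ w := mem_NB.1 (Finset.mem_inter.1 hw.1).1
    have hzH : ¬ H.Adj v₀ z := by
      intro hadj
      exact hz.2 (Finset.mem_inter.2 ⟨mem_NB.2 hadj, hzS⟩)
    have hwH' : ¬ H'.Adj v₀ w := by
      intro hadj
      exact hw.2 (Finset.mem_inter.2 ⟨mem_NB.2 hadj, hwS⟩)
    have hzv₀ : z ≠ v₀ := fun e => (e ▸ hzH' : H'.Adj v₀ v₀).ne rfl
    have hwv₀ : w ≠ v₀ := fun e => (e ▸ hwH : H.Adj v₀ v₀).ne rfl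
    have hzw : z ≠ w := by
      rintro rfl; exact hz.2 hw.1
    by_cases hge : degS S H w ≤ degS S H z
    · obtain ⟨t, htS, hzt, hwt, htw, htv₀⟩ := exchange_t hv₀ hzS hwH hzH hzv₀ hge
      have hOK : SwapOK H w v₀ z t :=
        ⟨hwv₀, fun e => hzw e.symm, fun e => htw e.symm, fun e => hzv₀ e.symm,
          fun e => htv₀ e.symm, hzt.ne, hwH.symm, hzt, hzH, hwt⟩
      set H₂ := mySwap H w v₀ z t with hH₂
      have pstep : PlainSwapIn S H H₂ := ⟨w, v₀, z, t, hwS, hv₀, hzS, htS, hOK, rfl⟩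
      have hNB₂ := NB_mySwap_b hOK
      have hA₂ : NB H₂ v₀ ∩ S = insert z (A.erase w) := by
        show NB (mySwap H w v₀ z t) v₀ ∩ S = _
        rw [hNB₂]
        ext x
        simp only [Finset.mem_inter, Finset.mem_insert, Finset.mem_erase, hA]
        constructor
        · rintro ⟨(rfl | ⟨hxw, hxNB⟩), hxS⟩
          · exact Or.inl rfl
          · exact Or.inr ⟨hxw, hxNB, hxS⟩
        · rintro (rfl | ⟨hxw, hxm1, hxm2⟩)
          · exact ⟨Or.inl rfl, hzS⟩
          · exact ⟨Or.inr ⟨hxw, hxm1⟩, hxm2⟩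
      have hss : (insert z (A.erase w)) ∆ B ⊂ A ∆ B := by
        constructor
        · intro e he
          rw [Finset.mem_symmDiff] at he ⊢
          rcases he with ⟨he1, he2⟩ | ⟨he1, he2⟩
          · rw [Finset.mem_insert, Finset.mem_erase] at he1
            rcases he1 with rfl | ⟨hew, heA⟩
            · exact absurd hz.1 he2
            · exact Or.inl ⟨heA, he2⟩
          · refine Or.inr ⟨he1, ?_⟩
            intro heA
            have hez : e ≠ z := by rintro rfl; exact he2 (Finset.mem_insert_self _ _)
            have hew : e ≠ w := by rintro rfl; exact hw.2 he1
            exact he2 (Finset.mem_insert_of_mem (Finset.mem_erase.2 ⟨hew, heA⟩))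
        · intro hsub
          have hzin : z ∈ A ∆ B := Finset.mem_symmDiff.2 (Or.inr ⟨hz.1, hz.2⟩)
          have hznotin : z ∉ (insert z (A.erase w)) ∆ B := by
            rw [Finset.mem_symmDiff]
            rintro (⟨-, h2⟩ | ⟨-, h2⟩)
            · exact h2 hz.1
            · exact h2 (Finset.mem_insert_self _ _)
          exact hznotin (hsub hzin)
      have hk2 : ((NB H₂ v₀ ∩ S) ∆ (NB H' v₀ ∩ S)).card ≤ k := by
        rw [hA₂, ← hB]
        have := Finset.card_lt_card hss
        omega
      obtain ⟨H₁, H₁', c1, c2, c3, c4, c5⟩ := IH H₂ H'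
        (fun v => (deg_mySwap hOK v).trans (hdeg v))
        (fun a b hab => (pswap_agree pstep hab).trans (hagree a b hab))
        hk2
      exact ⟨H₁, H₁', Relation.ReflTransGen.head pstep c1, c2, c3, c4, c5⟩
    · push_neg at hge
      have hge' : degS S H' z ≤ degS S H' w := by
        have h1 := degS_congr hdeg hagree z
        have h2 := degS_congr hdeg hagree w
        omega
      obtain ⟨t, htS, hwt, hzt, htz, htv₀⟩ := exchange_t hv₀ hwS hzH' hwH' hwv₀ hge'
      have hOK : SwapOK H' z v₀ w t :=
        ⟨hzv₀, hzw, fun e => htz e.symm, fun e => hwv₀ e.symm,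
          fun e => htv₀ e.symm, hwt.ne, hzH'.symm, hwt, hwH', hzt⟩
      set H₂' := mySwap H' z v₀ w t with hH₂'
      have pstep : PlainSwapIn S H' H₂' := ⟨z, v₀, w, t, hzS, hv₀, hwS, htS, hOK, rfl⟩
      have hNB₂ := NB_mySwap_b hOK
      have hB₂ : NB H₂' v₀ ∩ S = insert w (B.erase z) := by
        show NB (mySwap H' z v₀ w t) v₀ ∩ S = _
        rw [hNB₂]
        ext x
        simp only [Finset.mem_inter, Finset.mem_insert, Finset.mem_erase, hB]
        constructor
        · rintro ⟨(rfl | ⟨hxz, hxNB⟩), hxS⟩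
          · exact Or.inl rfl
          · exact Or.inr ⟨hxz, hxNB, hxS⟩
        · rintro (rfl | ⟨hxz, hxm1, hxm2⟩)
          · exact ⟨Or.inl rfl, hwS⟩
          · exact ⟨Or.inr ⟨hxz, hxm1⟩, hxm2⟩
      have hss : A ∆ (insert w (B.erase z)) ⊂ A ∆ B := by
        constructor
        · intro e he
          rw [Finset.mem_symmDiff] at he ⊢
          rcases he with ⟨he1, he2⟩ | ⟨he1, he2⟩
          · refine Or.inl ⟨he1, ?_⟩
            intro heB
            have hew : e ≠ w := by rintro rfl; exact he2 (Finset.mem_insert_self _ _)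
            have hez : e ≠ z := by rintro rfl; exact hz.2 he1
            exact he2 (Finset.mem_insert_of_mem (Finset.mem_erase.2 ⟨hez, heB⟩))
          · rw [Finset.mem_insert, Finset.mem_erase] at he1
            rcases he1 with rfl | ⟨hez, heB⟩
            · exact absurd hw.1 he2
            · exact Or.inr ⟨heB, he2⟩
        · intro hsub
          have hwin : w ∈ A ∆ B := Finset.mem_symmDiff.2 (Or.inl ⟨hw.1, hw.2⟩)
          have hwnotin : w ∉ A ∆ (insert w (B.erase z)) := by
            rw [Finset.mem_symmDiff]
            rintro (⟨-, h2⟩ | ⟨-, h2⟩)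
            · exact h2 (Finset.mem_insert_self _ _)
            · exact h2 hw.1
          exact hwnotin (hsub hwin)
      have hk2 : ((NB H v₀ ∩ S) ∆ (NB H₂' v₀ ∩ S)).card ≤ k := by
        rw [hB₂, ← hA]
        have := Finset.card_lt_card hss
        omega
      obtain ⟨H₁, H₁', c1, c2, c3, c4, c5⟩ := IH H H₂'
        (fun v => (hdeg v).trans (deg_mySwap hOK v).symm)
        (fun a b hab => (hagree a b hab).trans (pswap_agree pstep hab).symm)
        hk2
      exact ⟨H₁, H₁', c1, Relation.ReflTransGen.head pstep c2, c3, c4, c5⟩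


lemma pswap_mono {S T : Finset (Fin n)} (hST : S ⊆ T) {H K : SimpleGraph (Fin n)}
    (h : PlainSwapIn S H K) : PlainSwapIn T H K := by
  obtain ⟨a, b, c, d, ha, hb, hc, hd, hOK, rfl⟩ := h
  exact ⟨a, b, c, d, hST ha, hST hb, hST hc, hST hd, hOK, rfl⟩

lemma conn_in (S : Finset (Fin n)) : ∀ (H H' : SimpleGraph (Fin n)),
    (∀ v, deg H v = deg H' v) →
    (∀ a b : Fin n, (a ∉ S ∨ b ∉ S) → (H.Adj a b ↔ H'.Adj a b)) →
    Relation.ReflTransGen (PlainSwapIn S) H H' := by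
  induction S using Finset.strongInduction with
  | _ S IH =>
    intro H H' hdeg hagree
    by_cases hS : S.card ≤ 1
    · have hHH' : H = H' := by
        ext a b
        by_cases haS : a ∈ S
        · by_cases hbS : b ∈ S
          · have hab : a = b := Finset.card_le_one.1 hS a haS b hbS
            subst hab
            simp [SimpleGraph.irrefl]
          · exact hagree a b (Or.inr hbS)
        · exact hagree a b (Or.inl haS)
      rw [hHH']
    · push_neg at hS
      have hne : S.Nonempty := Finset.card_pos.1 (by omega)
      obtain ⟨v₀, hv₀⟩ := hne
      obtain ⟨H₁, H₁', c1, c2, c3, c4, c5⟩ :=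
        phase S v₀ hv₀ ((NB H v₀ ∩ S) ∆ (NB H' v₀ ∩ S)).card H H' hdeg hagree le_rfl
      have hss : S.erase v₀ ⊂ S := Finset.erase_ssubset hv₀
      have hagree' : ∀ a b : Fin n, (a ∉ S.erase v₀ ∨ b ∉ S.erase v₀) →
          (H₁.Adj a b ↔ H₁'.Adj a b) := by
        intro a b hab
        by_cases haS : a ∈ S
        · by_cases hbS : b ∈ S
          · have hor : a = v₀ ∨ b = v₀ := by
              rcases hab with h | h
              · left; by_contra hne'; exact h (Finset.mem_erase.2 ⟨hne', haS⟩)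
              · right; by_contra hne'; exact h (Finset.mem_erase.2 ⟨hne', hbS⟩)
            rcases hor with rfl | rfl
            · constructor
              · intro hadj
                have : b ∈ NB H₁' a ∩ S := by
                  rw [← c3]; exact Finset.mem_inter.2 ⟨mem_NB.2 hadj, hbS⟩
                exact mem_NB.1 (Finset.mem_inter.1 this).1
              · intro hadj
                have : b ∈ NB H₁ a ∩ S := by
                  rw [c3]; exact Finset.mem_inter.2 ⟨mem_NB.2 hadj, hbS⟩
                exact mem_NB.1 (Finset.mem_inter.1 this).1
            · rw [SimpleGraph.adj_comm, SimpleGraph.adj_comm H₁' a b]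
              constructor
              · intro hadj
                have : a ∈ NB H₁' b ∩ S := by
                  rw [← c3]; exact Finset.mem_inter.2 ⟨mem_NB.2 hadj, haS⟩
                exact mem_NB.1 (Finset.mem_inter.1 this).1
              · intro hadj
                have : a ∈ NB H₁ b ∩ S := by
                  rw [c3]; exact Finset.mem_inter.2 ⟨mem_NB.2 hadj, haS⟩
                exact mem_NB.1 (Finset.mem_inter.1 this).1
          · exact c5 a b (Or.inr hbS)
        · exact c5 a b (Or.inl haS)
      have chain2 : Relation.ReflTransGen (PlainSwapIn (S.erase v₀)) H₁ H₁' :=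
        IH (S.erase v₀) hss H₁ H₁' c4 hagree'
      have chain2' : Relation.ReflTransGen (PlainSwapIn S) H₁ H₁' :=
        Relation.ReflTransGen.mono (fun _ _ h => pswap_mono (Finset.erase_subset _ _) h) _ _ chain2
      exact (c1.trans chain2').trans (rtg_rev c2)


/-! ## partner function for perfect matchings -/

noncomputable def pr (I : SimpleGraph (Fin n)) (v : Fin n) : Fin n :=
  if h : ∃ w, I.Adj v w then h.choose else v

lemma pr_adj {I : SimpleGraph (Fin n)} {v : Fin n} (h1 : deg I v = 1) : I.Adj v (pr I v) := by
  have hne : (NB I v).Nonempty := Finset.card_pos.1 (by rw [← deg_eq_NB, h1]; omega)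
  obtain ⟨w, hw⟩ := hne
  have hex : ∃ w, I.Adj v w := ⟨w, mem_NB.1 hw⟩
  rw [pr, dif_pos hex]
  exact hex.choose_spec

lemma pr_unique {I : SimpleGraph (Fin n)} {v w : Fin n} (h1 : deg I v = 1)
    (h : I.Adj v w) : w = pr I v := by
  have h2 : w ∈ NB I v := mem_NB.2 h
  have h3 : pr I v ∈ NB I v := mem_NB.2 (pr_adj h1)
  have hc : (NB I v).card ≤ 1 := by rw [← deg_eq_NB, h1]
  exact Finset.card_le_one.1 hc w h2 _ h3

lemma pr_iff {I : SimpleGraph (Fin n)} (hmat : ∀ v, deg I v = 1) {v w : Fin n} :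
    I.Adj v w ↔ w = pr I v :=
  ⟨fun h => pr_unique (hmat v) h, fun h => h ▸ pr_adj (hmat v)⟩

lemma pr_pr {I : SimpleGraph (Fin n)} (hmat : ∀ v, deg I v = 1) (v : Fin n) :
    pr I (pr I v) = v :=
  (pr_unique (hmat (pr I v)) (pr_adj (hmat v)).symm).symm

lemma pr_ne {I : SimpleGraph (Fin n)} (hmat : ∀ v, deg I v = 1) (v : Fin n) :
    pr I v ≠ v := by
  intro e
  have h := pr_adj (hmat v)
  rw [e] at h
  exact h.ne rfl

lemma pr_inj {I : SimpleGraph (Fin n)} (hmat : ∀ v, deg I v = 1) {v w : Fin n}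
    (h : pr I v = pr I w) : v = w := by
  have := congrArg (pr I) h
  rwa [pr_pr hmat, pr_pr hmat] at this

lemma exists_good (I : SimpleGraph (Fin n)) (hmat : ∀ v, deg I v = 1)
    (A B : Finset (Fin n)) (h : A.card + B.card < n) :
    ∃ s, s ∉ A ∧ pr I s ∉ B := by
  classical
  have hfil : (Finset.univ.filter fun s => pr I s ∈ B).card ≤ B.card := by
    apply Finset.card_le_card_of_injOn (pr I)
    · intro x hx
      exact (Finset.mem_filter.1 hx).2
    · intro x _ y _ hxy
      exact pr_inj hmat hxy
  by_contra hcon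
  push_neg at hcon
  have hsub : Finset.univ ⊆ A ∪ Finset.univ.filter fun s => pr I s ∈ B := by
    intro s _
    by_cases hs : s ∈ A
    · exact Finset.mem_union_left _ hs
    · exact Finset.mem_union_right _ (Finset.mem_filter.2 ⟨Finset.mem_univ s, hcon s hs⟩)
  have hcard := Finset.card_le_card hsub
  rw [Finset.card_univ, Fintype.card_fin] at hcard
  have := Finset.card_union_le A (Finset.univ.filter fun s => pr I s ∈ B)
  omega

lemma card4 (b c p q : Fin n) : ({b, c, p, q} : Finset (Fin n)).card ≤ 4 := by
  refine le_trans (Finset.card_insert_le _ _) ?_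
  refine le_trans (Nat.add_le_add_right (Finset.card_insert_le _ _) 1) ?_
  refine le_trans (Nat.add_le_add_right (Nat.add_le_add_right (Finset.card_insert_le _ _) 1) 1) ?_
  simp

lemma card6 (b c p q r u : Fin n) : ({b, c, p, q, r, u} : Finset (Fin n)).card ≤ 6 := by
  refine le_trans (Finset.card_insert_le _ _) ?_
  refine le_trans (Nat.add_le_add_right (Finset.card_insert_le _ _) 1) ?_
  exact le_trans (Nat.add_le_add_right (Nat.add_le_add_right (card4 _ _ _ _) 1) 1) le_rfl


lemma clear_edge {G I : SimpleGraph (Fin n)} (hK : KunduState π (G, I))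
    (hΔ : ∀ i, 24 * π i ≤ n) (hn : 24 ≤ n) {b c p q : Fin n} (hbc : I.Adj b c)
    (hpb : p ≠ b) (hpc : p ≠ c) (hqb : q ≠ b) (hqc : q ≠ c) :
    ∃ I₂, Step π (G, I) (G, I₂) ∧ ¬ I₂.Adj b c ∧ (I₂.Adj p q ↔ I.Adj p q) := by
  obtain ⟨hdeg, hmat, hdisj⟩ := hK
  have hmat' : ∀ v, deg I v = 1 := hmat
  have hdeg' : ∀ i, deg G i = π i := hdeg
  have hcb : c = pr I b := pr_unique (hmat' b) hbc
  have hbc' : b = pr I c := pr_unique (hmat' c) hbc.symm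
  have harith : (NB G b ∪ {b, c, p, q}).card + (NB G c ∪ {b, c, p, q}).card < n := by
    have h1 := Finset.card_union_le (NB G b) ({b, c, p, q} : Finset (Fin n))
    have h2 := Finset.card_union_le (NB G c) ({b, c, p, q} : Finset (Fin n))
    have h3 := card4 b c p q
    have hb := hΔ b
    have hc := hΔ c
    have hdb : (NB G b).card = π b := by rw [← deg_eq_NB]; exact hdeg' b
    have hdc : (NB G c).card = π c := by rw [← deg_eq_NB]; exact hdeg' c
    omega
  obtain ⟨s, hsA, htB⟩ := exists_good I hmat' _ _ harith
  set t := pr I s with ht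
  rw [Finset.mem_union, not_or] at hsA htB
  have hs4 := hsA.2
  have ht4 := htB.2
  simp only [Finset.mem_insert, Finset.mem_singleton, not_or] at hs4 ht4
  have hsGb : ¬ G.Adj b s := fun h => hsA.1 (mem_NB.2 h)
  have htGc : ¬ G.Adj c t := fun h => htB.1 (mem_NB.2 h)
  have hst : I.Adj s t := pr_adj (hmat' s)
  have hts : t ≠ s := pr_ne hmat' s
  have hIbs : ¬ I.Adj b s := by
    rw [pr_iff hmat', ← hcb]
    exact hs4.2.1
  have hIct : ¬ I.Adj c t := by
    rw [pr_iff hmat', ← hbc']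
    exact ht4.1
  have hOKI : SwapOK I c b s t :=
    ⟨hbc.ne', fun e => hs4.2.1 e.symm, fun e => ht4.2.1 e.symm,
      fun e => hs4.1 e.symm, fun e => ht4.1 e.symm, fun e => hts e.symm,
      hbc.symm, hst, fun h => hIbs h, fun h => hIct h⟩
  have hstep := mswap_step ⟨hdeg, hmat, hdisj⟩ hbc.ne'
    (fun e => hs4.2.1 e.symm) (fun e => ht4.2.1 e.symm)
    (fun e => hs4.1 e.symm) (fun e => ht4.1 e.symm) (fun e => hts e.symm)
    hbc.symm hst
    (by
      rw [SimpleGraph.sup_adj, not_or]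
      exact ⟨hsGb, hIbs⟩)
    (by
      rw [SimpleGraph.sup_adj, not_or]
      exact ⟨htGc, hIct⟩)
  refine ⟨mySwap I c b s t, hstep, ?_, ?_⟩
  · rw [mySwap_adj hOKI]
    rintro (⟨-, hn2⟩ | hadd)
    · exact hn2 (Or.inl (Or.inr ⟨rfl, rfl⟩))
    · rcases hadd with (⟨e1, e2⟩ | ⟨e1, e2⟩) | ⟨e1, e2⟩ | ⟨e1, e2⟩
      · exact hs4.2.1 e2.symm
      · exact hs4.1 e1.symm
      · exact ht4.2.1 e2.symm
      · exact ht4.1 e1.symm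
  · exact mySwap_adj_off hOKI ⟨hpc, hpb, fun e => hs4.2.2.1 e.symm, fun e => ht4.2.2.1 e.symm⟩

lemma lift_chain {S : Finset (Fin n)} (hΔ : ∀ i, 24 * π i ≤ n) {G G'' : SimpleGraph (Fin n)}
    (hchain : Relation.ReflTransGen (PlainSwapIn S) G G'') :
    ∀ I, KunduState π (G, I) → ∃ I₁, Reach π (G, I) (G'', I₁) ∧ KunduState π (G'', I₁) := by
  induction hchain using Relation.ReflTransGen.head_induction_on with
  | refl => exact fun I hK => ⟨I, Relation.ReflTransGen.refl, hK⟩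
  | head hstep hrest IH =>
    intro I hK
    obtain ⟨a, b, c, d, -, -, -, -, hOK, rfl⟩ := hstep
    obtain ⟨hab, hac, had, hbc, hbd, hcd, h1, h2, h3, h4⟩ := hOK
    have hOK' : SwapOK _ a b c d := ⟨hab, hac, had, hbc, hbd, hcd, h1, h2, h3, h4⟩
    have hπa : 1 ≤ π a := by
      have hmem : b ∈ NB _ a := mem_NB.2 h1
      have := Finset.card_pos.2 ⟨b, hmem⟩
      rw [← deg_eq_NB, hK.1 a] at this
      exact this
    have hn : 24 ≤ n := by
      have := hΔ a
      omega
    obtain ⟨I', r1, hK', hnbc, hpres⟩ : ∃ I',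
        Reach π (_, I) (_, I') ∧ KunduState π (_, I') ∧ ¬ I'.Adj b c ∧
          (I'.Adj a d ↔ I.Adj a d) := by
      by_cases hIbc : I.Adj b c
      · obtain ⟨I₂, hs, hn1, hp⟩ := clear_edge hK hΔ hn hIbc hab hac
          (fun e => hbd e.symm) (fun e => hcd e.symm)
        exact ⟨I₂, Relation.ReflTransGen.single hs, hs.2, hn1, hp⟩
      · exact ⟨I, Relation.ReflTransGen.refl, hK, hIbc, Iff.rfl⟩
    obtain ⟨I'', r2, hK'', hnad, hnbc2⟩ : ∃ I'',
        Reach π (_, I') (_, I'') ∧ KunduState π (_, I'') ∧ ¬ I''.Adj a d ∧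
          ¬ I''.Adj b c := by
      by_cases hIad : I'.Adj a d
      · obtain ⟨I₂, hs, hn1, hp⟩ := clear_edge hK' hΔ hn hIad hab.symm hbd
          hac.symm hcd
        exact ⟨I₂, Relation.ReflTransGen.single hs, hs.2, hn1,
          fun h => hnbc (hp.1 h)⟩
      · exact ⟨I', Relation.ReflTransGen.refl, hK', hIad, hnbc⟩
    have gstep : Step π (_, I'') (mySwap _ a b c d, I'') :=
      gswap_step hK'' hab hac had hbc hbd hcd h1 h2
        (by rw [SimpleGraph.sup_adj, not_or]; exact ⟨h3, hnbc2⟩)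
        (by rw [SimpleGraph.sup_adj, not_or]; exact ⟨h4, hnad⟩)
    obtain ⟨I₁, r3, hK₁⟩ := IH I'' gstep.2
    exact ⟨I₁, ((r1.trans r2).trans (Relation.ReflTransGen.head gstep r3)), hK₁⟩


lemma mySwap_adj_bc {H : SimpleGraph (Fin n)} {a b c d : Fin n} (h : SwapOK H a b c d) :
    (mySwap H a b c d).Adj b c :=
  (mySwap_adj h b c).2 (Or.inr (Or.inl (Or.inl ⟨rfl, rfl⟩)))

lemma mySwap_adj_ad {H : SimpleGraph (Fin n)} {a b c d : Fin n} (h : SwapOK H a b c d) :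
    (mySwap H a b c d).Adj a d :=
  (mySwap_adj h a d).2 (Or.inr (Or.inr (Or.inl ⟨rfl, rfl⟩)))

lemma not_adj_pr {I : SimpleGraph (Fin n)} (hmat : ∀ v, deg I v = 1) {v w : Fin n}
    (h : w ≠ pr I v) : ¬ I.Adj v w := fun hadj => h (pr_unique (hmat v) hadj)

/-- the set of vertices incorrectly matched by `I` relative to `J` -/
noncomputable def MBad (J I : SimpleGraph (Fin n)) : Finset (Fin n) :=
  Finset.univ.filter fun v => ¬ J.Adj v (pr I v)

lemma matching_eq {I J : SimpleGraph (Fin n)} (hmatI : ∀ v, deg I v = 1)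
    (hmatJ : ∀ v, deg J v = 1) (h : ∀ v, J.Adj v (pr I v)) : I = J := by
  ext x y
  constructor
  · intro hadj
    have : y = pr I x := pr_unique (hmatI x) hadj
    rw [this]
    exact h x
  · intro hadj
    have h1 : pr I x = pr J x := pr_unique (hmatJ x) (h x)
    have h2 : y = pr J x := pr_unique (hmatJ x) hadj
    rw [pr_iff hmatI, h1, ← h2]

lemma mphase {G' J : SimpleGraph (Fin n)} (hΔ : ∀ i, 24 * π i ≤ n)
    (hKJ : KunduState π (G', J)) :
    ∀ (k : ℕ) (I : SimpleGraph (Fin n)), KunduState π (G', I) →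
    (MBad J I).card ≤ k → Reach π (G', I) (G', J) := by
  have hdegJ : ∀ i, deg G' i = π i := hKJ.1
  have hmatJ : ∀ v, deg J v = 1 := hKJ.2.1
  have hdisjJ : Disjoint G' J := hKJ.2.2
  intro k
  induction k with
  | zero =>
    intro I hKI hμ
    have hall : ∀ v, J.Adj v (pr I v) := by
      intro v
      by_contra hv
      have : v ∈ MBad J I := Finset.mem_filter.2 ⟨Finset.mem_univ v, hv⟩
      have := Finset.card_pos.2 ⟨v, this⟩
      omega
    have hmatI0 : ∀ v, deg I v = 1 := hKI.2.1
    have hEq : I = J := matching_eq hmatI0 hmatJ hall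
    rw [hEq]
    exact Relation.ReflTransGen.refl
  | succ k IH =>
    intro I hKI hμ
    have hmatI : ∀ v, deg I v = 1 := hKI.2.1
    have hdisjI : Disjoint G' I := hKI.2.2
    by_cases hIJ : ∀ v, J.Adj v (pr I v)
    · have hEq : I = J := matching_eq hmatI hmatJ hIJ
      rw [hEq]
      exact Relation.ReflTransGen.refl
    push_neg at hIJ
    obtain ⟨u₀, hu₀⟩ := hIJ
    set u := u₀ with hu
    set v := pr J u with hv
    have hJuv : J.Adj u v := pr_adj (hmatJ u)
    have hIuv : ¬ I.Adj u v := by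
      intro hadj
      exact hu₀ (by rw [← pr_unique (hmatI u) hadj]; exact hJuv)
    set x := pr I u with hx
    set y := pr I v with hy
    have hIux : I.Adj u x := pr_adj (hmatI u)
    have hIvy : I.Adj v y := pr_adj (hmatI v)
    have huv : u ≠ v := hJuv.ne
    have hxu : x ≠ u := pr_ne hmatI u
    have hyv : y ≠ v := pr_ne hmatI v
    have hxv : x ≠ v := by
      intro e
      exact hIuv (e ▸ hIux)
    have hyu : y ≠ u := by
      intro e
      exact hIuv (e ▸ hIvy).symm
    have hxy : x ≠ y := fun e => huv (pr_inj hmatI e)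
    have hG'uv : ¬ G'.Adj u v := fun h => disj_not_adj hdisjJ.symm hJuv h
    -- badness of the four principal vertices
    have hbadu : u ∈ MBad J I := by
      refine Finset.mem_filter.2 ⟨Finset.mem_univ u, ?_⟩
      rw [← hx]
      intro hadj
      exact hxv (pr_unique (hmatJ u) hadj ▸ rfl)
    have hbadv : v ∈ MBad J I := by
      refine Finset.mem_filter.2 ⟨Finset.mem_univ v, ?_⟩
      rw [← hy]
      intro hadj
      have h2 : y = pr J v := pr_unique (hmatJ v) hadj
      have h3 : pr J v = u := (pr_unique (hmatJ v) hJuv.symm).symm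
      rw [h3] at h2
      exact hyu h2
    have hpJv : u = pr J v := pr_unique (hmatJ v) hJuv.symm
    have hpIx : pr I x = u := by rw [hx, pr_pr hmatI]
    have hpIy : pr I y = v := by rw [hy, pr_pr hmatI]
    have hnJxu : ¬ J.Adj x u := by
      intro hadj
      have : x = pr J u := pr_unique (hmatJ u) hadj.symm
      rw [← hv] at this
      exact hxv this
    have hnJyv : ¬ J.Adj y v := by
      intro hadj
      have : y = pr J v := pr_unique (hmatJ v) hadj.symm
      rw [← hpJv] at this
      exact hyu this
    have hbadx : x ∈ MBad J I := by
      refine Finset.mem_filter.2 ⟨Finset.mem_univ x, ?_⟩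
      rw [hpIx]
      exact hnJxu
    have hbady : y ∈ MBad J I := by
      refine Finset.mem_filter.2 ⟨Finset.mem_univ y, ?_⟩
      rw [hpIy]
      exact hnJyv
    by_cases hG'xy : G'.Adj x y
    · -- blocked case
      have hπx : 1 ≤ π x := by
        have hmem : y ∈ NB G' x := mem_NB.2 hG'xy
        have := Finset.card_pos.2 ⟨y, hmem⟩
        rw [← deg_eq_NB, hdegJ x] at this
        exact this
      have hn24 : 24 ≤ n := by
        have := hΔ x
        omega
      set x' := pr J x with hx'
      set w := pr I x' with hw
      have hJxx' : J.Adj x x' := pr_adj (hmatJ x)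
      have hIx'w : I.Adj x' w := pr_adj (hmatI x')
      have hnJxy : ¬ J.Adj x y := disj_not_adj hdisjJ hG'xy
      have hxx' : x ≠ x' := (pr_ne hmatJ x).symm
      have hux' : u ≠ x' := by
        intro e
        have hadj : J.Adj u x := (e ▸ hJxx').symm
        have : x = pr J u := pr_unique (hmatJ u) hadj
        rw [← hv] at this
        exact hxv this
      have hvx' : v ≠ x' := by
        intro e
        have hadj : J.Adj v x := (e ▸ hJxx').symm
        have : x = pr J v := pr_unique (hmatJ v) hadj
        rw [← hpJv] at this
        exact hxu this
      have hyx' : y ≠ x' := by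
        intro e
        exact hnJxy (e ▸ hJxx')
      have hx'w : x' ≠ w := fun e => pr_ne hmatI x' (hw.symm.trans e.symm)
      have hpIw : pr I w = x' := by rw [hw, pr_pr hmatI]
      have huw : u ≠ w := fun e => hxx' (by rw [hx, e]; exact hpIw)
      have hvw : v ≠ w := fun e => hyx' (by rw [hy, e]; exact hpIw)
      have hxw : x ≠ w := fun e => hux' (by rw [← hpIx, e]; exact hpIw)
      have hyw : y ≠ w := fun e => hvx' (by rw [← hpIy, e]; exact hpIw)
      have hdx : (NB G' x).card = π x := by rw [← deg_eq_NB]; exact hdegJ x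
      have hdw : (NB G' w).card = π w := by rw [← deg_eq_NB]; exact hdegJ w
      have hdu : (NB G' u).card = π u := by rw [← deg_eq_NB]; exact hdegJ u
      have hdy : (NB G' y).card = π y := by rw [← deg_eq_NB]; exact hdegJ y
      have harith : ((NB G' x ∪ NB G' w) ∪ ({u, v, x, y, x', w} : Finset (Fin n))).card
          + ((NB G' u ∪ NB G' y) ∪ ({u, v, x, y, x', w} : Finset (Fin n))).card < n := by
        have c1 := Finset.card_union_le (NB G' x ∪ NB G' w)
          ({u, v, x, y, x', w} : Finset (Fin n))
        have c2 := Finset.card_union_le (NB G' u ∪ NB G' y)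
          ({u, v, x, y, x', w} : Finset (Fin n))
        have c3 := Finset.card_union_le (NB G' x) (NB G' w)
        have c4 := Finset.card_union_le (NB G' u) (NB G' y)
        have c5 := card6 u v x y x' w
        have b1 := hΔ x
        have b2 := hΔ w
        have b3 := hΔ u
        have b4 := hΔ y
        omega
      obtain ⟨s, hsA, htB⟩ := exists_good I hmatI _ _ harith
      set t := pr I s with htdef
      rw [Finset.mem_union, not_or, Finset.mem_union, not_or] at hsA htB
      have hs6 := hsA.2
      have ht6 := htB.2
      simp only [Finset.mem_insert, Finset.mem_singleton, not_or] at hs6 ht6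
      obtain ⟨hsu, hsv, hsx, hsy, hsx', hsw⟩ := hs6
      obtain ⟨htu, htv, htx, hty, htx', htw⟩ := ht6
      have hsGx : ¬ G'.Adj x s := fun h => hsA.1.1 (mem_NB.2 h)
      have hsGw : ¬ G'.Adj w s := fun h => hsA.1.2 (mem_NB.2 h)
      have htGu : ¬ G'.Adj u t := fun h => htB.1.1 (mem_NB.2 h)
      have htGy : ¬ G'.Adj y t := fun h => htB.1.2 (mem_NB.2 h)
      have hIst : I.Adj s t := pr_adj (hmatI s)
      have hts : t ≠ s := pr_ne hmatI s
      have hpIt : pr I t = s := by rw [htdef, pr_pr hmatI]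
      -- swap 1 : remove xu, ts ; add ut, xs
      have hOK₁ : SwapOK I x u t s :=
        ⟨hxu, fun e => htx e.symm, fun e => hsx e.symm, fun e => htu e.symm,
          fun e => hsu e.symm, hts, hIux.symm, hIst.symm,
          not_adj_pr hmatI (by rw [← hx]; exact htx),
          not_adj_pr hmatI (by rw [hpIx]; exact hsu)⟩
      have step1 : Step π (G', I) (G', mySwap I x u t s) :=
        mswap_step hKI hxu (fun e => htx e.symm) (fun e => hsx e.symm)
          (fun e => htu e.symm) (fun e => hsu e.symm) hts
          hIux.symm hIst.symm
          (by
            rw [SimpleGraph.sup_adj, not_or]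
            exact ⟨htGu, not_adj_pr hmatI (by rw [← hx]; exact htx)⟩)
          (by
            rw [SimpleGraph.sup_adj, not_or]
            exact ⟨hsGx, not_adj_pr hmatI (by rw [hpIx]; exact hsu)⟩)
      set I₁ := mySwap I x u t s with hI₁
      have hK₁ : KunduState π (G', I₁) := step1.2
      have hmatI₁ : ∀ z, deg I₁ z = 1 := hK₁.2.1
      have hI₁ut : I₁.Adj u t := mySwap_adj_bc hOK₁
      have hI₁xs : I₁.Adj x s := mySwap_adj_ad hOK₁
      have hI₁vy : I₁.Adj v y :=
        (mySwap_adj_off hOK₁ ⟨hxv.symm, huv.symm, fun e => htv e.symm,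
          fun e => hsv e.symm⟩).2 hIvy
      have hI₁x'w : I₁.Adj x' w :=
        (mySwap_adj_off hOK₁ ⟨fun e => hxx' e.symm, fun e => hux' e.symm,
          fun e => htx' e.symm, fun e => hsx' e.symm⟩).2 hIx'w
      have hprI₁u : pr I₁ u = t := (pr_unique (hmatI₁ u) hI₁ut).symm
      have hprI₁t : pr I₁ t = u := (pr_unique (hmatI₁ t) hI₁ut.symm).symm
      have hprI₁x : pr I₁ x = s := (pr_unique (hmatI₁ x) hI₁xs).symm
      have hprI₁s : pr I₁ s = x := (pr_unique (hmatI₁ s) hI₁xs.symm).symm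
      -- swap 2 : remove tu, vy ; add uv, ty
      have hOK₂ : SwapOK I₁ t u v y :=
        ⟨fun e => htu e, htv, hty, huv, hyu.symm, hyv.symm,
          hI₁ut.symm, hI₁vy,
          not_adj_pr hmatI₁ (by rw [hprI₁u]; exact fun e => htv e.symm),
          not_adj_pr hmatI₁ (by rw [hprI₁t]; exact hyu)⟩
      have step2 : Step π (G', I₁) (G', mySwap I₁ t u v y) :=
        mswap_step hK₁ htu htv hty huv hyu.symm hyv.symm hI₁ut.symm hI₁vy
          (by
            rw [SimpleGraph.sup_adj, not_or]
            exact ⟨hG'uv, not_adj_pr hmatI₁ (by rw [hprI₁u]; exact fun e => htv e.symm)⟩)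
          (by
            rw [SimpleGraph.sup_adj, not_or]
            exact ⟨fun h => htGy h.symm, not_adj_pr hmatI₁ (by rw [hprI₁t]; exact hyu)⟩)
      set I₂ := mySwap I₁ t u v y with hI₂
      have hK₂ : KunduState π (G', I₂) := step2.2
      have hmatI₂ : ∀ z, deg I₂ z = 1 := hK₂.2.1
      have hI₂uv : I₂.Adj u v := mySwap_adj_bc hOK₂
      have hI₂ty : I₂.Adj t y := mySwap_adj_ad hOK₂
      have hI₂xs : I₂.Adj x s :=
        (mySwap_adj_off hOK₂ ⟨fun e => htx e.symm, hxu, hxv, fun e => hxy e⟩).2 hI₁xs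
      have hI₂x'w : I₂.Adj x' w :=
        (mySwap_adj_off hOK₂ ⟨fun e => htx' e.symm, fun e => hux' e.symm,
          fun e => hvx' e.symm, fun e => hyx' e.symm⟩).2 hI₁x'w
      have hprI₂x : pr I₂ x = s := (pr_unique (hmatI₂ x) hI₂xs).symm
      have hprI₂s : pr I₂ s = x := (pr_unique (hmatI₂ s) hI₂xs.symm).symm
      have hprI₂x' : pr I₂ x' = w := (pr_unique (hmatI₂ x') hI₂x'w).symm
      -- swap 3 : remove sx, x'w ; add xx', sw
      have hOK₃ : SwapOK I₂ s x x' w :=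
        ⟨hsx, hsx', hsw, fun e => hxx' e, hxw, hx'w,
          hI₂xs.symm, hI₂x'w,
          not_adj_pr hmatI₂ (by rw [hprI₂x]; exact fun e => hsx' e.symm),
          not_adj_pr hmatI₂ (by rw [hprI₂s]; exact fun e => hxw e.symm)⟩
      have step3 : Step π (G', I₂) (G', mySwap I₂ s x x' w) :=
        mswap_step hK₂ hsx hsx' hsw (fun e => hxx' e) hxw hx'w
          hI₂xs.symm hI₂x'w
          (by
            rw [SimpleGraph.sup_adj, not_or]
            exact ⟨fun h => disj_not_adj hdisjJ h hJxx',
              not_adj_pr hmatI₂ (by rw [hprI₂x]; exact fun e => hsx' e.symm)⟩)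
          (by
            rw [SimpleGraph.sup_adj, not_or]
            exact ⟨fun h => hsGw h.symm,
              not_adj_pr hmatI₂ (by rw [hprI₂s]; exact fun e => hxw e.symm)⟩)
      set I₃ := mySwap I₂ s x x' w with hI₃
      have hK₃ : KunduState π (G', I₃) := step3.2
      have hmatI₃ : ∀ z, deg I₃ z = 1 := hK₃.2.1
      have hI₃xx' : I₃.Adj x x' := mySwap_adj_bc hOK₃
      have hI₃sw : I₃.Adj s w := mySwap_adj_ad hOK₃
      have hI₃uv : I₃.Adj u v :=
        (mySwap_adj_off hOK₃ ⟨fun e => hsu e.symm, hxu.symm, hux', huw⟩).2 hI₂uv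
      have hI₃ty : I₃.Adj t y :=
        (mySwap_adj_off hOK₃ ⟨hts, htx, htx', htw⟩).2 hI₂ty
      have hpr3u : pr I₃ u = v := (pr_unique (hmatI₃ u) hI₃uv).symm
      have hpr3v : pr I₃ v = u := (pr_unique (hmatI₃ v) hI₃uv.symm).symm
      have hpr3x : pr I₃ x = x' := (pr_unique (hmatI₃ x) hI₃xx').symm
      have hpr3x' : pr I₃ x' = x := (pr_unique (hmatI₃ x') hI₃xx'.symm).symm
      have hpJx'x : x = pr J x' := pr_unique (hmatJ x') hJxx'.symm
      have hbadx' : x' ∈ MBad J I := by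
        refine Finset.mem_filter.2 ⟨Finset.mem_univ x', ?_⟩
        rw [← hw]
        intro hadj
        have : w = pr J x' := pr_unique (hmatJ x') hadj
        rw [← hpJx'x] at this
        exact hxw this.symm
      have hsub : MBad J I₃ ⊆ insert s (insert t
          (((((MBad J I).erase u).erase v).erase x).erase x')) := by
        intro z hz
        have hzbad : ¬ J.Adj z (pr I₃ z) := (Finset.mem_filter.1 hz).2
        by_cases hzs : z = s
        · rw [hzs]; exact Finset.mem_insert_self _ _
        by_cases hzt : z = t
        · rw [hzt]; exact Finset.mem_insert_of_mem (Finset.mem_insert_self _ _)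
        by_cases hzu : z = u
        · exact absurd (by rw [hpr3u]; exact hJuv) (hzu ▸ hzbad)
        by_cases hzv : z = v
        · exact absurd (by rw [hpr3v]; exact hJuv.symm) (hzv ▸ hzbad)
        by_cases hzx : z = x
        · exact absurd (by rw [hpr3x]; exact hJxx') (hzx ▸ hzbad)
        by_cases hzx' : z = x'
        · exact absurd (by rw [hpr3x']; exact hJxx'.symm) (hzx' ▸ hzbad)
        have hbase : z ∈ MBad J I := by
          by_cases hzy : z = y
          · rw [hzy]; exact hbady
          by_cases hzw : z = w
          · rw [hzw]
            refine Finset.mem_filter.2 ⟨Finset.mem_univ w, ?_⟩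
            rw [hpIw]
            intro hadj
            have : w = pr J x' := pr_unique (hmatJ x') hadj.symm
            rw [← hpJx'x] at this
            exact hxw this.symm
          · have hpr0 : I.Adj z (pr I z) := pr_adj (hmatI z)
            have hh1 : I₁.Adj z (pr I z) := (mySwap_adj_off hOK₁ ⟨hzx, hzu, hzt, hzs⟩).2 hpr0
            have hh2 : I₂.Adj z (pr I z) := (mySwap_adj_off hOK₂ ⟨hzt, hzu, hzv, hzy⟩).2 hh1
            have hh3 : I₃.Adj z (pr I z) := (mySwap_adj_off hOK₃ ⟨hzs, hzx, hzx', hzw⟩).2 hh2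
            have heq : pr I₃ z = pr I z := (pr_unique (hmatI₃ z) hh3).symm
            refine Finset.mem_filter.2 ⟨Finset.mem_univ z, ?_⟩
            rw [← heq]
            exact hzbad
        exact Finset.mem_insert_of_mem (Finset.mem_insert_of_mem
          (Finset.mem_erase.2 ⟨hzx', Finset.mem_erase.2 ⟨hzx,
            Finset.mem_erase.2 ⟨hzv, Finset.mem_erase.2 ⟨hzu, hbase⟩⟩⟩⟩))
      have hmemv : v ∈ (MBad J I).erase u := Finset.mem_erase.2 ⟨huv.symm, hbadv⟩
      have hmemx : x ∈ ((MBad J I).erase u).erase v :=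
        Finset.mem_erase.2 ⟨hxv, Finset.mem_erase.2 ⟨hxu, hbadx⟩⟩
      have hmemx' : x' ∈ (((MBad J I).erase u).erase v).erase x :=
        Finset.mem_erase.2 ⟨fun e => hxx' e.symm, Finset.mem_erase.2 ⟨fun e => hvx' e.symm,
          Finset.mem_erase.2 ⟨fun e => hux' e.symm, hbadx'⟩⟩⟩
      have hcard : (MBad J I₃).card ≤ k := by
        have e1 := Finset.card_le_card hsub
        have e2 := Finset.card_insert_le s
          (insert t (((((MBad J I).erase u).erase v).erase x).erase x'))
        have e3 := Finset.card_insert_le t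
          (((((MBad J I).erase u).erase v).erase x).erase x')
        have m4 := Finset.card_erase_of_mem hmemx'
        have m3 := Finset.card_erase_of_mem hmemx
        have m2 := Finset.card_erase_of_mem hmemv
        have m1 := Finset.card_erase_of_mem hbadu
        have p1 := Finset.card_pos.2 ⟨x', hmemx'⟩
        have p2 := Finset.card_pos.2 ⟨x, hmemx⟩
        have p3 := Finset.card_pos.2 ⟨v, hmemv⟩
        have p4 := Finset.card_pos.2 ⟨u, hbadu⟩
        omega
      exact Relation.ReflTransGen.head step1 (Relation.ReflTransGen.head step2
        (Relation.ReflTransGen.head step3 (IH I₃ hK₃ hcard)))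
    · -- unblocked case : single swap remove xu, vy ; add uv, xy
      have hOKd : SwapOK I x u v y :=
        ⟨hxu, hxv, hxy, huv, hyu.symm, hyv.symm, hIux.symm, hIvy, hIuv,
          not_adj_pr hmatI (by rw [hpIx]; exact hyu)⟩
      have stepd : Step π (G', I) (G', mySwap I x u v y) :=
        mswap_step hKI hxu hxv hxy huv hyu.symm hyv.symm hIux.symm hIvy
          (by
            rw [SimpleGraph.sup_adj, not_or]
            exact ⟨hG'uv, hIuv⟩)
          (by
            rw [SimpleGraph.sup_adj, not_or]
            exact ⟨hG'xy, not_adj_pr hmatI (by rw [hpIx]; exact hyu)⟩)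
      set I₂ := mySwap I x u v y with hI₂
      have hK₂ : KunduState π (G', I₂) := stepd.2
      have hmatI₂ : ∀ z, deg I₂ z = 1 := hK₂.2.1
      have hI₂uv : I₂.Adj u v := mySwap_adj_bc hOKd
      have hI₂xy : I₂.Adj x y := mySwap_adj_ad hOKd
      have hpr2u : pr I₂ u = v := (pr_unique (hmatI₂ u) hI₂uv).symm
      have hpr2v : pr I₂ v = u := (pr_unique (hmatI₂ v) hI₂uv.symm).symm
      have hsub : MBad J I₂ ⊆ ((MBad J I).erase u).erase v := by
        intro z hz
        have hzbad : ¬ J.Adj z (pr I₂ z) := (Finset.mem_filter.1 hz).2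
        by_cases hzu : z = u
        · exact absurd (by rw [hpr2u]; exact hJuv) (hzu ▸ hzbad)
        by_cases hzv : z = v
        · exact absurd (by rw [hpr2v]; exact hJuv.symm) (hzv ▸ hzbad)
        have hbase : z ∈ MBad J I := by
          by_cases hzx : z = x
          · rw [hzx]; exact hbadx
          by_cases hzy : z = y
          · rw [hzy]; exact hbady
          · have hpr0 : I.Adj z (pr I z) := pr_adj (hmatI z)
            have hh1 : I₂.Adj z (pr I z) := (mySwap_adj_off hOKd ⟨hzx, hzu, hzv, hzy⟩).2 hpr0
            have heq : pr I₂ z = pr I z := (pr_unique (hmatI₂ z) hh1).symm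
            refine Finset.mem_filter.2 ⟨Finset.mem_univ z, ?_⟩
            rw [← heq]
            exact hzbad
        exact Finset.mem_erase.2 ⟨hzv, Finset.mem_erase.2 ⟨hzu, hbase⟩⟩
      have hcard : (MBad J I₂).card ≤ k := by
        have e1 := Finset.card_le_card hsub
        have m2 := Finset.card_erase_of_mem (Finset.mem_erase.2 ⟨huv.symm, hbadv⟩)
        have m1 := Finset.card_erase_of_mem hbadu
        have p3 := Finset.card_pos.2 ⟨v, Finset.mem_erase.2 ⟨huv.symm, hbadv⟩⟩
        have p4 := Finset.card_pos.2 ⟨u, hbadu⟩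
        omega
      exact Relation.ReflTransGen.head stepd (IH I₂ hK₂ hcard)


lemma reach_format {p q : SimpleGraph (Fin n) × SimpleGraph (Fin n)}
    (h : Reach π p q) (hp : KunduState π p) :
    ∃ (m : ℕ) (f : ℕ → SimpleGraph (Fin n) × SimpleGraph (Fin n)),
      f 0 = p ∧ f m = q ∧
      (∀ k < m, KSwap (f k) (f (k + 1))) ∧
      (∀ k ≤ m, KunduState π (f k)) := by
  induction h with
  | refl =>
    refine ⟨0, fun _ => p, rfl, rfl, ?_, ?_⟩
    · intro k hk
      exact absurd hk (Nat.not_lt_zero k)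
    · intro k _
      exact hp
  | @tail b c hab hbc ih =>
    obtain ⟨m, f, h0, hm, hsw, hks⟩ := ih
    refine ⟨m + 1, fun k => if k ≤ m then f k else c, ?_, ?_, ?_, ?_⟩
    · simp only [Nat.zero_le, if_pos]
      exact h0
    · have hnot : ¬ (m + 1 ≤ m) := by omega
      simp only [hnot, if_neg, if_false]
    · intro k hk
      by_cases hkm : k < m
      · have h1 : k ≤ m := by omega
        have h2 : k + 1 ≤ m := by omega
        simp only [h1, h2, if_pos]
        exact hsw k hkm
      · have hke : k = m := by omega
        subst hke
        have h1 : k ≤ k := le_rfl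
        have h2 : ¬ (k + 1 ≤ k) := by omega
        simp only [h1, h2, if_pos, if_neg, if_false]
        rw [hm]
        exact hbc.1
    · intro k hk
      by_cases h1 : k ≤ m
      · simp only [h1, if_pos]
        exact hks k h1
      · have h2 : ¬ (k ≤ m) := h1
        simp only [h2, if_neg, if_false]
        exact hbc.2

end KAux

/-- Any two Kundu realizations of `π + 1` can be transformed into each other by a finite
sequence of K-swaps such that every intermediate pair is again a Kundu realization of
`π + 1` (at each step the image of the displayed 1-factor is the next displayed 1-factor). -/
theorem kundu_realizations_connected {n : ℕ} (π : Fin n → ℕ)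
    (hgraphic : IsGraphic π)
    (hΔ : ∀ i, 24 * π i ≤ n)
    (hplus : IsGraphic (fun i => π i + 1))
    (G I G' J : SimpleGraph (Fin n))
    (h₁ : KunduState π (G, I)) (h₂ : KunduState π (G', J)) :
    ∃ (m : ℕ) (f : ℕ → SimpleGraph (Fin n) × SimpleGraph (Fin n)),
      f 0 = (G, I) ∧ f m = (G', J) ∧
      (∀ k < m, KSwap (f k) (f (k + 1))) ∧
      (∀ k ≤ m, KunduState π (f k)) := by
  have hdeg : ∀ v, deg G v = deg G' v := fun v => (h₁.1 v).trans (h₂.1 v).symm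
  have hchain := KAux.conn_in (Finset.univ) G G' hdeg
    (fun a b hab => hab.elim (fun h => absurd (Finset.mem_univ a) h)
      (fun h => absurd (Finset.mem_univ b) h))
  obtain ⟨I₁, hreach1, hK1⟩ := KAux.lift_chain hΔ hchain I h₁
  have hreach2 := KAux.mphase hΔ h₂ (KAux.MBad J I₁).card I₁ hK1 le_rfl
  exact KAux.reach_format (hreach1.trans hreach2) h₁
end

section
/- Let G and G′ be bipartite simple graphs with the same bipartition (A, B) of a common finite vertex set, such that d_G(v) = d_{G′}(v) for every vertex v. Then the symmetric difference ∇ = E(G) △ E(G′), with edges colored red (in G) and blue (in G′), can be decomposed into red–blue alternating cycles, where no cycle contains any vertex twice. -/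
open scoped Classical

/-- A list of edges is alternating with respect to the coloring in which edges of `G`
are red (and the remaining edges blue): the edges at even positions are all of one color
and the edges at odd positions all of the other color. -/
def Alternating {V : Type*} (G : SimpleGraph V) (l : List (Sym2 V)) : Prop :=
  ∃ b : Bool, ∀ i : Fin l.length, (l.get i ∈ G.edgeSet ↔ (Even (i : ℕ) ↔ b = true))

namespace AltDecompAux

variable {V : Type*}

/-- Alternating list of edges, first edge has color `c` (`true` = in `G`). -/
def ListAlt (G : SimpleGraph V) : Bool → List (Sym2 V) → Prop
  | _, [] => True
  | c, e :: l => ((e ∈ G.edgeSet) ↔ c = true) ∧ ListAlt G (!c) l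

@[simp] lemma listAlt_nil (G : SimpleGraph V) (c : Bool) : ListAlt G c [] := trivial

@[simp] lemma listAlt_cons (G : SimpleGraph V) (c : Bool) (e : Sym2 V) (l : List (Sym2 V)) :
    ListAlt G c (e :: l) ↔ ((e ∈ G.edgeSet) ↔ c = true) ∧ ListAlt G (!c) l := Iff.rfl

lemma listAlt_append (G : SimpleGraph V) :
    ∀ (l₁ l₂ : List (Sym2 V)) (c : Bool),
      ListAlt G c (l₁ ++ l₂) ↔
        ListAlt G c l₁ ∧ ListAlt G (if Even l₁.length then c else !c) l₂ := by
  intro l₁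
  induction l₁ with
  | nil => intro l₂ c; simp
  | cons e l ih =>
    intro l₂ c
    simp only [List.cons_append, listAlt_cons, ih l₂ (!c), List.length_cons]
    rcases Nat.even_or_odd l.length with he | ho
    · have h1 : ¬ Even (l.length + 1) := by simp [Nat.even_add_one, he]
      simp [he, h1]; tauto
    · have hno : ¬ Even l.length := Nat.not_even_iff_odd.mpr ho
      have h1 : Even (l.length + 1) := by simpa [Nat.even_add_one] using hno
      simp [hno, h1]; tauto

lemma listAlt_get (G : SimpleGraph V) :
    ∀ (l : List (Sym2 V)) (c : Bool), ListAlt G c l →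
      ∀ (i : ℕ) (h : i < l.length), (l.get ⟨i, h⟩ ∈ G.edgeSet ↔ (Even i ↔ c = true)) := by
  intro l
  induction l with
  | nil => intro c _ i h; simp at h
  | cons e l ih =>
    intro c hc i h
    rcases hc with ⟨h1, h2⟩
    cases i with
    | zero => simpa using h1
    | succ j =>
      have hj : j < l.length := by simpa using Nat.lt_of_succ_lt_succ h
      have hI := ih (!c) h2 j hj
      have hget : (e :: l).get ⟨j+1, h⟩ = l.get ⟨j, hj⟩ := rfl
      rw [hget, hI]
      cases c <;> simp [Nat.even_add_one] <;> tauto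

/-- Alternating list of edges (the theorem's sense) from `ListAlt`. -/
lemma listAlt_alternating (G : SimpleGraph V) (l : List (Sym2 V)) (c : Bool)
    (h : ListAlt G c l) :
    ∃ b : Bool, ∀ i : Fin l.length, (l.get i ∈ G.edgeSet ↔ (Even (i : ℕ) ↔ b = true)) :=
  ⟨c, fun i => listAlt_get G l c h i.1 i.2⟩

lemma listAlt_rotate (G : SimpleGraph V) (l₁ l₂ : List (Sym2 V)) (c : Bool)
    (h : ListAlt G c (l₁ ++ l₂)) (heven : Even (l₁ ++ l₂).length) :
    ∃ c', ListAlt G c' (l₂ ++ l₁) := by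
  rw [listAlt_append] at h
  rcases h with ⟨h1, h2⟩
  rw [List.length_append] at heven
  refine ⟨if Even l₁.length then c else !c, ?_⟩
  rw [listAlt_append]
  refine ⟨h2, ?_⟩
  rcases Nat.even_or_odd l₁.length with he | ho
  · have he2 : Even l₂.length := by
      rcases he with ⟨k, hk⟩; rcases heven with ⟨m, hm⟩; exact ⟨m - k, by omega⟩
    simpa [he, he2] using h1
  · have hno : ¬ Even l₁.length := Nat.not_even_iff_odd.mpr ho
    have hno2 : ¬ Even l₂.length := by
      rintro ⟨k, hk⟩; rcases heven with ⟨m, hm⟩; rcases ho with ⟨j, hj⟩; omega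
    simpa [hno, hno2] using h1

/-- Count of edges in `l` incident to `x` with color `tc`. -/
noncomputable def cntP (G : SimpleGraph V) (tc : Bool) (x : V) (l : List (Sym2 V)) : ℕ :=
  l.countP (fun e => decide (x ∈ e ∧ ((e ∈ G.edgeSet) ↔ tc = true)))

lemma cntP_cons (G : SimpleGraph V) (tc : Bool) (x : V) (e : Sym2 V) (l : List (Sym2 V)) :
    cntP G tc x (e :: l) =
      cntP G tc x l + if (x ∈ e ∧ ((e ∈ G.edgeSet) ↔ tc = true)) then 1 else 0 := by
  unfold cntP
  rw [List.countP_cons]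
  congr 1
  by_cases h : (x ∈ e ∧ ((e ∈ G.edgeSet) ↔ tc = true)) <;> simp [h]

lemma countP_nodup_card {α : Type*} [DecidableEq α] {l : List α} (hl : l.Nodup) (f : α → Bool)
    (q : α → Prop) [DecidablePred q] (hfq : ∀ a, f a = true ↔ q a) :
    l.countP f = (l.toFinset.filter q).card := by
  classical
  have h1 : (l.filter f).toFinset = l.toFinset.filter q := by
    ext a
    simp [List.mem_filter, hfq]
  rw [← h1, List.toFinset_card_of_nodup (hl.filter _), List.countP_eq_length_filter]

variable {G H : SimpleGraph V}

@[simp] lemma cntP_nil (G : SimpleGraph V) (tc : Bool) (x : V) :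
    cntP G tc x ([] : List (Sym2 V)) = 0 := rfl

/-- Key counting identity along an alternating walk. -/
lemma cnt_sub :
    ∀ {u v : V} (p : H.Walk u v) (c : Bool), p.length ≠ 0 → ListAlt G c p.edges →
      ∀ x : V,
        (cntP G c x p.edges : ℤ) - cntP G (!c) x p.edges =
          (if x = u then 1 else 0) +
            (if x = v then (if Even (p.length - 1) then 1 else -1) else 0) := by
  intro u v p
  induction p with
  | nil => intro c h; simp at h
  | @cons u w v h q ih =>
    intro c _ halt x
    rw [SimpleGraph.Walk.edges_cons] at halt
    rcases halt with ⟨h1, h2⟩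
    have huw : u ≠ w := h.ne
    have hxe : (if (x ∈ s(u,w) ∧ ((s(u,w) ∈ G.edgeSet) ↔ c = true)) then (1:ℤ) else 0)
        = (if x = u then 1 else 0) + (if x = w then 1 else 0) := by
      by_cases hx : x ∈ s(u,w)
      · rw [Sym2.mem_iff] at hx
        rcases hx with rfl | rfl
        · simp [h1, huw]
        · simp [h1, huw.symm]
      · rw [Sym2.mem_iff] at hx
        push_neg at hx
        rw [if_neg, if_neg hx.1, if_neg hx.2]
        · ring
        · rintro ⟨hmem, -⟩
          rw [Sym2.mem_iff] at hmem
          tauto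
    have hxe' : (if (x ∈ s(u,w) ∧ ((s(u,w) ∈ G.edgeSet) ↔ (!c) = true)) then (1:ℤ) else 0)
        = 0 := by
      have hnot : ¬ ((s(u,w) ∈ G.edgeSet) ↔ (!c) = true) := by
        cases c <;> simp_all
      rw [if_neg]
      rintro ⟨-, hco⟩
      exact hnot hco
    by_cases hq : q.length = 0
    · -- q is nil
      have hwv : w = v := by
        cases q with
        | nil => rfl
        | cons h' q' => simp at hq
      subst hwv
      have hqe : q.edges = [] := by
        have hter := q.length_edges
        rw [hq] at hter
        exact List.length_eq_zero_iff.mp hter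
      rw [SimpleGraph.Walk.edges_cons, hqe]
      simp only [cntP_cons, cntP_nil, SimpleGraph.Walk.length_cons, hq]
      push_cast
      rw [hxe, hxe']
      norm_num
    · -- q nonempty; use ih
      have ihq := ih (!c) hq h2 x
      rw [Bool.not_not] at ihq
      rw [SimpleGraph.Walk.edges_cons]
      simp only [cntP_cons, SimpleGraph.Walk.length_cons]
      push_cast
      rw [hxe, hxe']
      have hpar : ¬ Even q.length ↔ Even (q.length - 1) := by
        rcases Nat.even_or_odd q.length with he | ho
        · constructor
          · intro hc; exact absurd he hc
          · rintro ⟨m, hm⟩; rcases he with ⟨k, hk⟩; omega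
        · constructor
          · intro _; rcases ho with ⟨k, hk⟩; exact ⟨k, by omega⟩
          · intro _; exact Nat.not_even_iff_odd.mpr ho
      split_ifs at ihq ⊢ <;> first | omega | (exfalso; tauto) | tauto

/-- A closed even alternating walk is color-balanced at every vertex. -/
lemma cnt_balanced {s : V} (p : H.Walk s s) (c : Bool) (hne : p.length ≠ 0)
    (halt : ListAlt G c p.edges) (heven : Even p.length) (x : V) (tc : Bool) :
    cntP G tc x p.edges = cntP G (!tc) x p.edges := by
  have key := cnt_sub (G := G) p c hne halt x
  have hodd : ¬ Even (p.length - 1) := by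
    rcases heven with ⟨k, hk⟩
    rintro ⟨m, hm⟩
    omega
  rw [if_neg hodd] at key
  have hz : cntP G c x p.edges = cntP G (!c) x p.edges := by
    by_cases hx : x = s
    · rw [if_pos hx, if_pos hx] at key; omega
    · rw [if_neg hx, if_neg hx] at key; omega
  cases tc <;> cases c <;> simp_all

/-- The set of available edges of color `tc`. -/
noncomputable def Ecol (ER EB : Finset (Sym2 V)) (tc : Bool) : Finset (Sym2 V) :=
  if tc then ER else EB

@[simp] lemma Ecol_true (ER EB : Finset (Sym2 V)) : Ecol ER EB true = ER := rfl

@[simp] lemma Ecol_false (ER EB : Finset (Sym2 V)) : Ecol ER EB false = EB := rfl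

/-- Extension-edge lemma: a nonempty alternating trail that is not a closed even walk
can be extended at its front by a fresh edge of the opposite color. -/
lemma extend_edge [Fintype V] (ER EB : Finset (Sym2 V))
    (hR : ∀ e ∈ ER, e ∈ H.edgeSet ∧ e ∈ G.edgeSet)
    (hB : ∀ e ∈ EB, e ∈ H.edgeSet ∧ e ∉ G.edgeSet)
    (hbal : ∀ v : V, (ER.filter (fun e => v ∈ e)).card = (EB.filter (fun e => v ∈ e)).card)
    {v s : V} (c : Bool) (p : H.Walk v s) (hne : p.length ≠ 0) (hnd : p.edges.Nodup)
    (hsub : ∀ e ∈ p.edges, e ∈ ER ∪ EB) (halt : ListAlt G c p.edges)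
    (hdone : ¬ (v = s ∧ Even p.length)) :
    ∃ (w : V) (hadj : H.Adj w v), s(w,v) ∉ p.edges ∧ s(w,v) ∈ ER ∪ EB ∧
      ((s(w,v) ∈ G.edgeSet) ↔ (!c) = true) := by
  classical
  -- color membership facts
  have hcol : ∀ tc : Bool, ∀ e ∈ Ecol ER EB tc, ((e ∈ G.edgeSet) ↔ tc = true) := by
    intro tc e he
    cases tc with
    | true => rw [Ecol_true] at he; simp [(hR e he).2]
    | false => rw [Ecol_false] at he; simp [(hB e he).2]
  have hcolmem : ∀ e ∈ ER ∪ EB, e ∈ Ecol ER EB (decide (e ∈ G.edgeSet)) := by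
    intro e he
    rcases Finset.mem_union.mp he with h' | h'
    · have hg := (hR e h').2
      simp [hg, h']
    · have hg := (hB e h').2
      simp [hg, h']
  -- the counting inequality
  have key := cnt_sub (G := G) p c hne halt v
  have hlt : cntP G (!c) v p.edges < cntP G c v p.edges := by
    by_cases hvs : v = s
    · subst hvs
      have hnev : ¬ Even p.length := fun hc => hdone ⟨rfl, hc⟩
      have hev1 : Even (p.length - 1) := by
        rcases Nat.not_even_iff_odd.mp hnev with ⟨k, hk⟩
        exact ⟨k, by omega⟩
      rw [if_pos rfl, if_pos rfl, if_pos hev1] at key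
      omega
    · rw [if_pos rfl, if_neg hvs] at key
      omega
  -- finsets
  set F : Finset (Sym2 V) := (Ecol ER EB (!c)).filter (fun e => v ∈ e) with hF
  set F' : Finset (Sym2 V) := (Ecol ER EB c).filter (fun e => v ∈ e) with hF'
  have hFF' : F.card = F'.card := by
    cases c
    · simpa [hF, hF'] using hbal v
    · simpa [hF, hF'] using (hbal v).symm
  have hUcard : ∀ tc : Bool,
      cntP G tc v p.edges
        = (p.edges.toFinset.filter (fun e => v ∈ e ∧ ((e ∈ G.edgeSet) ↔ tc = true))).card := by
    intro tc
    unfold cntP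
    exact countP_nodup_card hnd _ _ (fun a => by cases tc <;> by_cases hg : a ∈ G.edgeSet <;> simp [hg])
  have hUsub : ∀ tc : Bool,
      p.edges.toFinset.filter (fun e => v ∈ e ∧ ((e ∈ G.edgeSet) ↔ tc = true))
        ⊆ (Ecol ER EB tc).filter (fun e => v ∈ e) := by
    intro tc e he
    rw [Finset.mem_filter] at he ⊢
    rcases he with ⟨hep, hv, hcoltc⟩
    have heE := hsub e (List.mem_toFinset.mp hep)
    have := hcolmem e heE
    refine ⟨?_, hv⟩
    cases tc with
    | true =>
      have hg : e ∈ G.edgeSet := hcoltc.mpr rfl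
      simpa [hg] using this
    | false =>
      have hnotG : ¬ e ∈ G.edgeSet := by simpa using hcoltc
      simpa [hnotG] using this
  -- get an unused edge
  have hcards : (p.edges.toFinset.filter
      (fun e => v ∈ e ∧ ((e ∈ G.edgeSet) ↔ (!c) = true))).card < F.card := by
    calc (p.edges.toFinset.filter (fun e => v ∈ e ∧ ((e ∈ G.edgeSet) ↔ (!c) = true))).card
        = cntP G (!c) v p.edges := (hUcard (!c)).symm
      _ < cntP G c v p.edges := hlt
      _ = (p.edges.toFinset.filter (fun e => v ∈ e ∧ ((e ∈ G.edgeSet) ↔ c = true))).card :=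
          hUcard c
      _ ≤ F'.card := Finset.card_le_card (hUsub c)
      _ = F.card := hFF'.symm
  have hex : ∃ e ∈ F, e ∉ p.edges.toFinset.filter
      (fun e => v ∈ e ∧ ((e ∈ G.edgeSet) ↔ (!c) = true)) := by
    by_contra hcon
    push_neg at hcon
    exact absurd (Finset.card_le_card hcon) (Nat.not_le.mpr hcards)
  rcases hex with ⟨e, heF, heU⟩
  rw [hF, Finset.mem_filter] at heF
  rcases heF with ⟨heE, hve⟩
  have hecol : (e ∈ G.edgeSet) ↔ (!c) = true := hcol (!c) e heE
  have heEE : e ∈ ER ∪ EB := by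
    cases c
    · rw [Bool.not_false, Ecol_true] at heE; exact Finset.mem_union_left _ heE
    · rw [Bool.not_true, Ecol_false] at heE; exact Finset.mem_union_right _ heE
  have henp : e ∉ p.edges := by
    intro hmem
    exact heU (Finset.mem_filter.mpr ⟨List.mem_toFinset.mpr hmem, hve, hecol⟩)
  rcases Sym2.mem_iff_exists.mp hve with ⟨w, rfl⟩
  have hvw : H.Adj v w := by
    rcases Finset.mem_union.mp heEE with h' | h'
    · exact (SimpleGraph.mem_edgeSet H).mp (hR _ h').1
    · exact (SimpleGraph.mem_edgeSet H).mp (hB _ h').1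
  refine ⟨w, hvw.symm, ?_, ?_, ?_⟩
  · rwa [Sym2.eq_swap]
  · rwa [Sym2.eq_swap]
  · rwa [Sym2.eq_swap]

/-- From any nonempty alternating trail we obtain a closed even alternating trail. -/
lemma extend_trail [Fintype V] (ER EB : Finset (Sym2 V))
    (hR : ∀ e ∈ ER, e ∈ H.edgeSet ∧ e ∈ G.edgeSet)
    (hB : ∀ e ∈ EB, e ∈ H.edgeSet ∧ e ∉ G.edgeSet)
    (hbal : ∀ v : V, (ER.filter (fun e => v ∈ e)).card = (EB.filter (fun e => v ∈ e)).card) :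
    ∀ (n : ℕ) {v s : V} (c : Bool) (p : H.Walk v s), p.length ≠ 0 → p.edges.Nodup →
      (∀ e ∈ p.edges, e ∈ ER ∪ EB) → ListAlt G c p.edges →
      (ER ∪ EB).card ≤ n + p.length →
      ∃ (t : V) (q : H.Walk t t), q.length ≠ 0 ∧ q.edges.Nodup ∧
        (∀ e ∈ q.edges, e ∈ ER ∪ EB) ∧ (∃ c', ListAlt G c' q.edges) ∧ Even q.length := by
  classical
  intro n
  induction n with
  | zero =>
    intro v s c p hne hnd hsub halt hcard
    by_cases hdone : v = s ∧ Even p.length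
    · rcases hdone with ⟨rfl, he⟩
      exact ⟨v, p, hne, hnd, hsub, ⟨c, halt⟩, he⟩
    · exfalso
      obtain ⟨w, hadj, henp, heEE, _⟩ :=
        extend_edge ER EB hR hB hbal c p hne hnd hsub halt hdone
      have h1 : insert s(w,v) p.edges.toFinset ⊆ ER ∪ EB := by
        intro a ha
        rcases Finset.mem_insert.mp ha with rfl | ha
        · exact heEE
        · exact hsub a (List.mem_toFinset.mp ha)
      have h2 : (insert s(w,v) p.edges.toFinset).card = p.length + 1 := by
        rw [Finset.card_insert_of_notMem (fun hc => henp (List.mem_toFinset.mp hc)),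
          List.toFinset_card_of_nodup hnd, SimpleGraph.Walk.length_edges]
      have := Finset.card_le_card h1
      omega
  | succ n ih =>
    intro v s c p hne hnd hsub halt hcard
    by_cases hdone : v = s ∧ Even p.length
    · rcases hdone with ⟨rfl, he⟩
      exact ⟨v, p, hne, hnd, hsub, ⟨c, halt⟩, he⟩
    · obtain ⟨w, hadj, henp, heEE, hecol⟩ :=
        extend_edge ER EB hR hB hbal c p hne hnd hsub halt hdone
      refine ih (!c) (SimpleGraph.Walk.cons hadj p) (by simp) ?_ ?_ ?_ ?_
      · rw [SimpleGraph.Walk.edges_cons]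
        exact List.nodup_cons.mpr ⟨henp, hnd⟩
      · intro e he
        rw [SimpleGraph.Walk.edges_cons] at he
        rcases List.mem_cons.mp he with rfl | he
        · exact heEE
        · exact hsub e he
      · rw [SimpleGraph.Walk.edges_cons, listAlt_cons, Bool.not_not]
        exact ⟨hecol, halt⟩
      · rw [SimpleGraph.Walk.length_cons]
        omega

/-- In a bipartite graph, a walk has even length iff its endpoints are on the same side. -/
lemma bipartite_walk_parity {A : Set V} (hbip : ∀ a b, H.Adj a b → (a ∈ A ↔ b ∉ A)) :
    ∀ {u v : V} (p : H.Walk u v), Even p.length ↔ (u ∈ A ↔ v ∈ A) := by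
  intro u v p
  induction p with
  | nil => simp
  | @cons u w v h q ih =>
    rw [SimpleGraph.Walk.length_cons, Nat.even_add_one, ih]
    have := hbip u w h
    by_cases hu : u ∈ A <;> by_cases hw : w ∈ A <;> by_cases hv : v ∈ A <;> tauto

/-- Closed walks in a bipartite graph have even length. -/
lemma bipartite_closed_even {A : Set V} (hbip : ∀ a b, H.Adj a b → (a ∈ A ↔ b ∉ A))
    {u : V} (p : H.Walk u u) : Even p.length :=
  (bipartite_walk_parity hbip p).mpr Iff.rfl

/-- A nonempty closed alternating trail in a bipartite graph decomposes into
alternating cycles. -/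
lemma toCycles {A : Set V} (hbip : ∀ a b, H.Adj a b → (a ∈ A ↔ b ∉ A))
    (G : SimpleGraph V) :
    ∀ (n : ℕ) {s : V} (p : H.Walk s s), p.length ≤ n → p.length ≠ 0 → p.edges.Nodup →
      (∃ c, ListAlt G c p.edges) →
      ∃ ws : List (Σ v : V, H.Walk v v),
        (∀ w ∈ ws, w.2.IsCycle ∧ ∃ c', ListAlt G c' w.2.edges) ∧
        ((ws.map fun w => (w.2.edges : Multiset (Sym2 V))).sum = (p.edges : Multiset (Sym2 V))) := by
  classical
  intro n
  induction n with
  | zero =>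
    intro s p hlen hne _ _
    omega
  | succ n ih =>
    intro s p hlen hne hnd halt
    by_cases hcyc : p.support.tail.Nodup
    · refine ⟨[⟨s, p⟩], ?_, by simp⟩
      intro w hw
      rw [List.mem_singleton] at hw
      subst hw
      refine ⟨⟨⟨⟨hnd⟩, ?_⟩, hcyc⟩, halt⟩
      intro hnil
      have hnil' : p = SimpleGraph.Walk.nil := hnil
      rw [hnil'] at hne
      exact hne rfl
    · obtain ⟨x, hxdup⟩ := List.exists_duplicate_iff_not_nodup.mpr hcyc
      have hxcount : 2 ≤ p.support.tail.count x := List.duplicate_iff_two_le_count.mp hxdup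
      have hxsup : x ∈ p.support := List.mem_of_mem_tail hxdup.mem
      set q := p.rotate x hxsup with hqdef
      have hperm : q.edges.Perm p.edges := (p.rotate_edges x hxsup).perm
      have hqlen : q.length = p.length := by
        rw [← SimpleGraph.Walk.length_edges, ← SimpleGraph.Walk.length_edges]
        exact hperm.length_eq
      have hqcount : 2 ≤ q.support.tail.count x := by
        rw [(p.support_rotate x hxsup).perm.count_eq]
        exact hxcount
      have hqnd : q.edges.Nodup := (hperm.nodup_iff).mpr hnd
      have hqalt : ∃ c', ListAlt G c' q.edges := by
        rcases halt with ⟨c, halt⟩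
        have hps : (p.takeUntil x hxsup).append (p.dropUntil x hxsup) = p := p.take_spec hxsup
        have hpe : p.edges = (p.takeUntil x hxsup).edges ++ (p.dropUntil x hxsup).edges := by
          conv_lhs => rw [← hps]
          rw [SimpleGraph.Walk.edges_append]
        have hqe : q.edges = (p.dropUntil x hxsup).edges ++ (p.takeUntil x hxsup).edges := by
          rw [hqdef]
          show ((p.dropUntil x hxsup).append (p.takeUntil x hxsup)).edges = _
          rw [SimpleGraph.Walk.edges_append]
        have hevlen : Even ((p.takeUntil x hxsup).edges ++ (p.dropUntil x hxsup).edges).length := by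
          rw [← hpe, SimpleGraph.Walk.length_edges]
          exact bipartite_closed_even hbip p
        rw [hpe] at halt
        rw [hqe]
        exact listAlt_rotate G _ _ c halt hevlen
      clear_value q
      clear hqdef
      cases q with
      | nil =>
        rw [SimpleGraph.Walk.length_nil] at hqlen
        omega
      | @cons _ y _ h r =>
        have hrcount : 2 ≤ r.support.count x := by
          rwa [SimpleGraph.Walk.support_cons, List.tail_cons] at hqcount
        have hxr : x ∈ r.support := by
          have : 0 < r.support.count x := by omega
          exact List.count_pos_iff.mp this
        set t := r.takeUntil x hxr with htdef
        set d := r.dropUntil x hxr with hddef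
        have hts : t.append d = r := r.take_spec hxr
        have hsplit : SimpleGraph.Walk.cons h r = (SimpleGraph.Walk.cons h t).append d := by
          rw [SimpleGraph.Walk.cons_append, hts]
        have hdne : d.length ≠ 0 := by
          intro hd0
          have hdnil : d = SimpleGraph.Walk.nil :=
            SimpleGraph.Walk.Nil.eq_nil (SimpleGraph.Walk.nil_iff_length_eq.mpr hd0)
          have hrt : r = t := by rw [← hts, hdnil, SimpleGraph.Walk.append_nil]
          have hone : List.count x t.support = 1 := by
            rw [htdef]
            exact SimpleGraph.Walk.count_support_takeUntil_eq_one r hxr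
          rw [hrt] at hrcount
          omega
        have hedges : (SimpleGraph.Walk.cons h r).edges
            = (SimpleGraph.Walk.cons h t).edges ++ d.edges := by
          rw [hsplit, SimpleGraph.Walk.edges_append]
        have hlens : (SimpleGraph.Walk.cons h t).length + d.length
            = (SimpleGraph.Walk.cons h r).length := by
          rw [hsplit, SimpleGraph.Walk.length_append]
        have hq1ne : (SimpleGraph.Walk.cons h t).length ≠ 0 := by
          rw [SimpleGraph.Walk.length_cons]; omega
        rcases hqalt with ⟨c', hqalt⟩
        rw [hedges] at hqalt hqnd
        rw [listAlt_append] at hqalt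
        rcases hqalt with ⟨halt1, halt2⟩
        rcases List.nodup_append.mp hqnd with ⟨hnd1, hnd2, _⟩
        have hlenp : (SimpleGraph.Walk.cons h r).length = p.length := hqlen
        obtain ⟨ws₁, hws₁, hsum₁⟩ := ih (SimpleGraph.Walk.cons h t) (by omega) hq1ne hnd1 ⟨c', halt1⟩
        obtain ⟨ws₂, hws₂, hsum₂⟩ := ih d (by omega) hdne hnd2 ⟨_, halt2⟩
        refine ⟨ws₁ ++ ws₂, ?_, ?_⟩
        · intro w hw
          rcases List.mem_append.mp hw with hw | hw
          · exact hws₁ w hw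
          · exact hws₂ w hw
        · rw [List.map_append, List.sum_append, hsum₁, hsum₂, Multiset.coe_add, ← hedges]
          exact Multiset.coe_eq_coe.mpr hperm

/-- Main decomposition lemma. -/
lemma decomp [Fintype V] {A : Set V} (hbip : ∀ a b, H.Adj a b → (a ∈ A ↔ b ∉ A))
    (G : SimpleGraph V) :
    ∀ (n : ℕ) (ER EB : Finset (Sym2 V)), (ER ∪ EB).card ≤ n →
      (∀ e ∈ ER, e ∈ H.edgeSet ∧ e ∈ G.edgeSet) →
      (∀ e ∈ EB, e ∈ H.edgeSet ∧ e ∉ G.edgeSet) →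
      (∀ v : V, (ER.filter (fun e => v ∈ e)).card = (EB.filter (fun e => v ∈ e)).card) →
      ∃ ws : List (Σ v : V, H.Walk v v),
        (∀ w ∈ ws, w.2.IsCycle ∧ ∃ c', ListAlt G c' w.2.edges) ∧
        ((ws.map fun w => (w.2.edges : Multiset (Sym2 V))).sum = (ER ∪ EB).val) := by
  classical
  intro n
  induction n with
  | zero =>
    intro ER EB hcard _ _ _
    have hE : ER ∪ EB = ∅ := Finset.card_eq_zero.mp (Nat.le_zero.mp hcard)
    exact ⟨[], by simp, by simp [hE]⟩
  | succ n ih =>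
    intro ER EB hcard hR hB hbal
    by_cases hE : ER ∪ EB = ∅
    · exact ⟨[], by simp, by simp [hE]⟩
    · obtain ⟨e₀, he₀⟩ := Finset.nonempty_of_ne_empty hE
      obtain ⟨a, b, rfl⟩ : ∃ a b, e₀ = s(a, b) := by
        induction e₀ using Sym2.ind with | _ a b => exact ⟨a, b, rfl⟩
      have hemem : s(a,b) ∈ H.edgeSet := by
        rcases Finset.mem_union.mp he₀ with h' | h'
        · exact (hR _ h').1
        · exact (hB _ h').1
      have hadj : H.Adj a b := (SimpleGraph.mem_edgeSet H).mp hemem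
      set p₀ : H.Walk a b := SimpleGraph.Walk.cons hadj SimpleGraph.Walk.nil with hp₀
      have hp₀e : p₀.edges = [s(a,b)] := rfl
      have hp₀alt : ListAlt G (decide (s(a,b) ∈ G.edgeSet)) p₀.edges := by
        rw [hp₀e, listAlt_cons]
        exact ⟨by simp [decide_eq_true_iff], trivial⟩
      obtain ⟨t, q, hqne, hqnd, hqsub, hqalt, hqeven⟩ :=
        extend_trail ER EB hR hB hbal ((ER ∪ EB).card) (decide (s(a,b) ∈ G.edgeSet)) p₀
          (by simp [hp₀]) (by rw [hp₀e]; simp) (by rw [hp₀e]; simpa using he₀) hp₀alt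
          (by simp [hp₀])
      obtain ⟨ws₁, hws₁, hsum₁⟩ := toCycles hbip G q.length q le_rfl hqne hqnd hqalt
      -- remove the used edges
      set S : Finset (Sym2 V) := q.edges.toFinset with hS
      have hSsub : S ⊆ ER ∪ EB := by
        intro e he
        exact hqsub e (List.mem_toFinset.mp he)
      have hSne : S.Nonempty := by
        have : q.edges ≠ [] := by
          intro hq
          have := q.length_edges
          rw [hq] at this
          simp at this
          omega
        rcases List.exists_mem_of_ne_nil _ this with ⟨e, he⟩
        exact ⟨e, List.mem_toFinset.mpr he⟩
      have hcard' : ((ER \ S) ∪ (EB \ S)).card ≤ n := by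
        rw [← Finset.union_sdiff_distrib]
        have h1 : ((ER ∪ EB) \ S).card = (ER ∪ EB).card - S.card := Finset.card_sdiff_of_subset hSsub
        have h2 : 1 ≤ S.card := Finset.card_pos.mpr hSne
        omega
      have hR' : ∀ e ∈ ER \ S, e ∈ H.edgeSet ∧ e ∈ G.edgeSet :=
        fun e he => hR e (Finset.mem_sdiff.mp he).1
      have hB' : ∀ e ∈ EB \ S, e ∈ H.edgeSet ∧ e ∉ G.edgeSet :=
        fun e he => hB e (Finset.mem_sdiff.mp he).1
      have hbal' : ∀ v : V,
          ((ER \ S).filter (fun e => v ∈ e)).card = ((EB \ S).filter (fun e => v ∈ e)).card := by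
        intro v
        rcases hqalt with ⟨c, hqaltc⟩
        set Ur : Finset (Sym2 V) :=
          S.filter (fun e => v ∈ e ∧ ((e ∈ G.edgeSet) ↔ true = true)) with hUr
        set Ub : Finset (Sym2 V) :=
          S.filter (fun e => v ∈ e ∧ ((e ∈ G.edgeSet) ↔ false = true)) with hUb
        have hcntr : cntP G true v q.edges = Ur.card := by
          unfold cntP
          exact countP_nodup_card hqnd _ _
            (fun e => by by_cases hg : e ∈ G.edgeSet <;> simp [hg])
        have hcntb : cntP G false v q.edges = Ub.card := by
          unfold cntP
          exact countP_nodup_card hqnd _ _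
            (fun e => by by_cases hg : e ∈ G.edgeSet <;> simp [hg])
        have hrb : cntP G true v q.edges = cntP G false v q.edges := by
          have := cnt_balanced (G := G) q c hqne hqaltc hqeven v true
          rwa [Bool.not_true] at this
        have hUrsub : Ur ⊆ ER.filter (fun e => v ∈ e) := by
          intro e he
          rw [hUr, Finset.mem_filter] at he
          rcases he with ⟨heS, hv, hred⟩
          have heE := hSsub heS
          rw [Finset.mem_filter]
          refine ⟨?_, hv⟩
          rcases Finset.mem_union.mp heE with h' | h'
          · exact h'
          · exact absurd (hred.mpr rfl) (hB _ h').2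
        have hUbsub : Ub ⊆ EB.filter (fun e => v ∈ e) := by
          intro e he
          rw [hUb, Finset.mem_filter] at he
          rcases he with ⟨heS, hv, hblue⟩
          have heE := hSsub heS
          rw [Finset.mem_filter]
          refine ⟨?_, hv⟩
          rcases Finset.mem_union.mp heE with h' | h'
          · exact absurd (hR _ h').2 (by simpa using hblue)
          · exact h'
        have hkeyr : (ER \ S).filter (fun e => v ∈ e) = ER.filter (fun e => v ∈ e) \ Ur := by
          ext e
          simp only [hUr, Finset.mem_sdiff, Finset.mem_filter]
          constructor
          · rintro ⟨⟨heR, hq⟩, hv⟩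
            exact ⟨⟨heR, hv⟩, fun hc => hq hc.1⟩
          · rintro ⟨⟨heR, hv⟩, hnq⟩
            refine ⟨⟨heR, fun hq => hnq ⟨hq, hv, ?_⟩⟩, hv⟩
            simp [(hR e heR).2]
        have hkeyb : (EB \ S).filter (fun e => v ∈ e) = EB.filter (fun e => v ∈ e) \ Ub := by
          ext e
          simp only [hUb, Finset.mem_sdiff, Finset.mem_filter]
          constructor
          · rintro ⟨⟨heB, hq⟩, hv⟩
            exact ⟨⟨heB, hv⟩, fun hc => hq hc.1⟩
          · rintro ⟨⟨heB, hv⟩, hnq⟩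
            refine ⟨⟨heB, fun hq => hnq ⟨hq, hv, ?_⟩⟩, hv⟩
            simp [(hB e heB).2]
        rw [hkeyr, hkeyb, Finset.card_sdiff_of_subset hUrsub, Finset.card_sdiff_of_subset hUbsub, hbal v]
        have h1 := Finset.card_le_card hUrsub
        have h2 := Finset.card_le_card hUbsub
        omega
      obtain ⟨ws₂, hws₂, hsum₂⟩ := ih (ER \ S) (EB \ S) hcard' hR' hB' hbal'
      refine ⟨ws₁ ++ ws₂, ?_, ?_⟩
      · intro w hw
        rcases List.mem_append.mp hw with hw | hw
        · exact hws₁ w hw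
        · exact hws₂ w hw
      · rw [List.map_append, List.sum_append, hsum₁, hsum₂, ← Finset.union_sdiff_distrib]
        have hval : (q.edges : Multiset (Sym2 V)) = S.val := by
          rw [hS]
          change _ = (Multiset.toFinset (q.edges : Multiset (Sym2 V))).val
          rw [Multiset.toFinset_val, Multiset.dedup_eq_self.mpr (Multiset.coe_nodup.mpr hqnd)]
        rw [hval, Finset.sdiff_val]
        exact add_tsub_cancel_of_le (Finset.val_le_iff.mpr hSsub)

end AltDecompAux

section FinalAux

open AltDecompAux

variable {V : Type*} [Fintype V]

lemma deg_eq_card_filter (K : SimpleGraph V) (v : V) (F : Finset (Sym2 V))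
    (hF : ∀ e, e ∈ F ↔ (e ∈ K.edgeSet ∧ v ∈ e)) : deg K v = F.card := by
  classical
  unfold deg
  apply Finset.card_bij (fun w _ => s(v, w))
  · intro w hw
    rw [Finset.mem_filter] at hw
    rw [hF]
    exact ⟨K.mem_edgeSet.mpr hw.2, by simp⟩
  · intro w1 h1 w2 h2 heq
    exact Sym2.congr_right.mp heq
  · intro e he
    rw [hF] at he
    rcases he with ⟨heE, hv⟩
    rcases Sym2.mem_iff_exists.mp hv with ⟨w, rfl⟩
    exact ⟨w, by simp [K.mem_edgeSet.mp heE], rfl⟩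

lemma deg_split (G G' : SimpleGraph V) (v : V) :
    deg (G \ G') v + (Finset.univ.filter (fun w => G.Adj v w ∧ G'.Adj v w)).card
      = deg G v := by
  classical
  unfold deg
  have key := Finset.card_filter_add_card_filter_not
    (s := Finset.univ.filter (fun w => G.Adj v w)) (p := fun w => G'.Adj v w)
  rw [Finset.filter_filter, Finset.filter_filter] at key
  simp only [SimpleGraph.sdiff_adj]
  omega

end FinalAux

theorem bipartite_symmDiff_decomposes_into_alternating_cycles'
    {V : Type*} [Fintype V] (G G' : SimpleGraph V) (A : Set V)
    (hGbip : ∀ a b, G.Adj a b → (a ∈ A ↔ b ∉ A))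
    (hG'bip : ∀ a b, G'.Adj a b → (a ∈ A ↔ b ∉ A))
    (hdeg : ∀ v, deg G v = deg G' v) :
    ∃ ws : List (Σ v : V, ((G \ G') ⊔ (G' \ G)).Walk v v),
      (∀ w ∈ ws, w.2.IsCycle ∧ Alternating G w.2.edges) ∧
      ((ws.map fun w => (w.2.edges : Multiset (Sym2 V))).sum).Nodup ∧
      (∀ e : Sym2 V,
        e ∈ (ws.map fun w => (w.2.edges : Multiset (Sym2 V))).sum ↔
          e ∈ ((G \ G') ⊔ (G' \ G)).edgeSet) := by
  classical
  set H : SimpleGraph V := (G \ G') ⊔ (G' \ G) with hH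
  set ER : Finset (Sym2 V) := Finset.univ.filter (fun e : Sym2 V => e ∈ (G \ G').edgeSet)
    with hER
  set EB : Finset (Sym2 V) := Finset.univ.filter (fun e : Sym2 V => e ∈ (G' \ G).edgeSet)
    with hEB
  have hbipH : ∀ a b, H.Adj a b → (a ∈ A ↔ b ∉ A) := by
    intro a b hab
    rw [hH, SimpleGraph.sup_adj, SimpleGraph.sdiff_adj, SimpleGraph.sdiff_adj] at hab
    rcases hab with ⟨h1, -⟩ | ⟨h1, -⟩
    · exact hGbip a b h1
    · exact hG'bip a b h1
  have hR : ∀ e ∈ ER, e ∈ H.edgeSet ∧ e ∈ G.edgeSet := by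
    intro e he
    rw [hER, Finset.mem_filter] at he
    have h1 := he.2
    constructor
    · rw [hH, SimpleGraph.edgeSet_sup]
      exact Or.inl h1
    · rw [SimpleGraph.edgeSet_sdiff] at h1
      exact h1.1
  have hB : ∀ e ∈ EB, e ∈ H.edgeSet ∧ e ∉ G.edgeSet := by
    intro e he
    rw [hEB, Finset.mem_filter] at he
    have h1 := he.2
    constructor
    · rw [hH, SimpleGraph.edgeSet_sup]
      exact Or.inr h1
    · rw [SimpleGraph.edgeSet_sdiff] at h1
      exact h1.2
  have hbal : ∀ v : V, (ER.filter (fun e => v ∈ e)).card = (EB.filter (fun e => v ∈ e)).card := by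
    intro v
    have e1 : deg (G \ G') v = (ER.filter (fun e => v ∈ e)).card := by
      apply deg_eq_card_filter
      intro e
      rw [Finset.mem_filter, hER, Finset.mem_filter]
      constructor
      · rintro ⟨⟨-, h⟩, hv⟩; exact ⟨h, hv⟩
      · rintro ⟨h, hv⟩; exact ⟨⟨Finset.mem_univ e, h⟩, hv⟩
    have e2 : deg (G' \ G) v = (EB.filter (fun e => v ∈ e)).card := by
      apply deg_eq_card_filter
      intro e
      rw [Finset.mem_filter, hEB, Finset.mem_filter]
      constructor
      · rintro ⟨⟨-, h⟩, hv⟩; exact ⟨h, hv⟩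
      · rintro ⟨h, hv⟩; exact ⟨⟨Finset.mem_univ e, h⟩, hv⟩
    rw [← e1, ← e2]
    have hs1 := deg_split G G' v
    have hs2 := deg_split G' G v
    have hmid : (Finset.univ.filter (fun w => G.Adj v w ∧ G'.Adj v w)).card
        = (Finset.univ.filter (fun w => G'.Adj v w ∧ G.Adj v w)).card := by
      congr 1
      ext w
      simp only [Finset.mem_filter]
      tauto
    have hdv := hdeg v
    omega
  obtain ⟨ws, hws, hsum⟩ :=
    AltDecompAux.decomp (H := H) hbipH G ((ER ∪ EB).card) ER EB le_rfl hR hB hbal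
  refine ⟨ws, ?_, ?_, ?_⟩
  · intro w hw
    obtain ⟨hcyc, c', halt⟩ := hws w hw
    exact ⟨hcyc, AltDecompAux.listAlt_alternating G _ c' halt⟩
  · rw [hsum]
    exact (ER ∪ EB).nodup
  · intro e
    rw [hsum, Finset.mem_val]
    rw [Finset.mem_union, hER, hEB, Finset.mem_filter, Finset.mem_filter]
    rw [hH, SimpleGraph.edgeSet_sup]
    simp [Set.mem_union]

/-- Let `G`, `G'` be bipartite simple graphs with the same bipartition `(A, B)` of a common
finite vertex set, with `d_G(v) = d_{G'}(v)` for every `v`. Then `∇ = E(G) △ E(G')`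
(edges of `G` red, edges of `G'` blue) decomposes into red–blue alternating cycles, where
no cycle contains any vertex twice: there is a list of closed walks in the graph
`(G \ G') ⊔ (G' \ G)`, each of which is a cycle and alternating, whose edges taken all
together use every edge of `∇` exactly once. -/
theorem bipartite_symmDiff_decomposes_into_alternating_cycles
    {V : Type*} [Fintype V] (G G' : SimpleGraph V) (A : Set V)
    (hGbip : ∀ a b, G.Adj a b → (a ∈ A ↔ b ∉ A))
    (hG'bip : ∀ a b, G'.Adj a b → (a ∈ A ↔ b ∉ A))
    (hdeg : ∀ v, deg G v = deg G' v) :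
    ∃ ws : List (Σ v : V, ((G \ G') ⊔ (G' \ G)).Walk v v),
      (∀ w ∈ ws, w.2.IsCycle ∧ Alternating G w.2.edges) ∧
      ((ws.map fun w => (w.2.edges : Multiset (Sym2 V))).sum).Nodup ∧
      (∀ e : Sym2 V,
        e ∈ (ws.map fun w => (w.2.edges : Multiset (Sym2 V))).sum ↔
          e ∈ ((G \ G') ⊔ (G' \ G)).edgeSet) :=
  bipartite_symmDiff_decomposes_into_alternating_cycles' G G' A hGbip hG'bip hdeg
end

section
/- Let G be a simple graph with maximum degree Δ, and let I and J be two edge-disjoint perfect matchings on the same vertex set, each edge-disjoint from G. Let C be an alternating cycle of the symmetric difference I △ J of length L, where edges of I are red and edges of J are blue. If L > 4Δ + 6, then there exist two red edges e = ab and f = cd of C that are non-consecutive along C, with a, b, c, d occurring in this cyclic order on C, such that neither bc nor ad is an edge of G. -/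
open scoped Classical

lemma getVert_eq_support_getElem' {V : Type*} {G : SimpleGraph V} {u v : V} (p : G.Walk u v) :
    ∀ i (h : i < p.support.length), p.getVert i = p.support[i]
  | i, h => by
    induction p generalizing i with
    | nil =>
      cases i with
      | zero => simp [SimpleGraph.Walk.getVert]
      | succ n => simp at h
    | cons hadj q ih =>
      cases i with
      | zero => simp [SimpleGraph.Walk.getVert]
      | succ n =>
        simp only [SimpleGraph.Walk.support_cons, List.getElem_cons_succ,
          SimpleGraph.Walk.getVert_cons_succ]
        exact ih n (by simpa [SimpleGraph.Walk.support_cons] using h)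

lemma cycle_getVert_inj {V : Type*} {G : SimpleGraph V} {v : V} {w : G.Walk v v}
    (hc : w.IsCycle) {i j : ℕ} (hi1 : 1 ≤ i) (hi : i ≤ w.length) (hj1 : 1 ≤ j)
    (hj : j ≤ w.length) (h : w.getVert i = w.getVert j) : i = j := by
  have hlen : w.support.length = w.length + 1 := SimpleGraph.Walk.length_support w
  have htl : w.support.tail.Nodup := hc.2
  have htlen : w.support.tail.length = w.length := by
    simp [List.length_tail, hlen]
  obtain ⟨i, rfl⟩ : ∃ i', i = i' + 1 := ⟨i - 1, by omega⟩
  obtain ⟨j, rfl⟩ : ∃ j', j = j' + 1 := ⟨j - 1, by omega⟩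
  have e1 : w.getVert (i+1) = w.support.tail[i]'(by omega) := by
    rw [getVert_eq_support_getElem' w (i+1) (by omega), List.getElem_tail]
  have e2 : w.getVert (j+1) = w.support.tail[j]'(by omega) := by
    rw [getVert_eq_support_getElem' w (j+1) (by omega), List.getElem_tail]
  have := (htl.getElem_inj_iff (i := i) (j := j) (hi := by omega) (hj := by omega)).mp
    (by rw [← e1, ← e2, h])
  omega

lemma cycle_getVert_inj0 {V : Type*} {G : SimpleGraph V} {v : V} {w : G.Walk v v}
    (hc : w.IsCycle) {i j : ℕ} (hi : i < w.length) (hj : j < w.length)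
    (h : w.getVert i = w.getVert j) : i = j := by
  have h0 : w.getVert 0 = w.getVert w.length := by
    simp [SimpleGraph.Walk.getVert_zero, SimpleGraph.Walk.getVert_length]
  rcases Nat.eq_zero_or_pos i with rfl | hi1
  · rcases Nat.eq_zero_or_pos j with rfl | hj1
    · rfl
    · have := cycle_getVert_inj hc hj1 (le_of_lt hj) (by omega) le_rfl (by rw [← h, h0])
      omega
  · rcases Nat.eq_zero_or_pos j with rfl | hj1
    · have := cycle_getVert_inj hc hi1 (le_of_lt hi) (by omega) le_rfl (by rw [h, h0])
      omega
    · exact cycle_getVert_inj hc hi1 (le_of_lt hi) hj1 (le_of_lt hj) h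

/-- Let `G` have maximum degree `Δ`, and let `I`, `J` be edge-disjoint perfect matchings,
each edge-disjoint from `G` (edges of `I` red, edges of `J` blue). Let `C` be an
alternating cycle of the symmetric difference `I △ J` of length `L > 4Δ + 6`, given as
the closed walk `w`. Then there are two red edges `e = ab` and `f = cd` of `C`,
non-consecutive along `C` (their positions `i < j` satisfy `j ≠ i + 2` and
`j + 2 ≠ i + L`, so no blue edge of `C` joins them), with `a, b, c, d` in this cyclic
order on `C`, such that neither `bc` nor `ad` is an edge of `G`. -/
theorem process_club_applies {V : Type*} [Fintype V] (G I J : SimpleGraph V) (Δ : ℕ)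
    (hΔ : ∀ v, deg G v ≤ Δ)
    (hI : ∀ v, deg I v = 1) (hJ : ∀ v, deg J v = 1)
    (hIJ : Disjoint I J) (hGI : Disjoint G I) (hGJ : Disjoint G J)
    (v : V) (w : (symmDiff I J).Walk v v) (hcycle : w.IsCycle)
    (hL : 4 * Δ + 6 < w.length) :
    ∃ i j : ℕ, i < j ∧ j < w.length ∧ j ≠ i + 2 ∧ j + 2 ≠ i + w.length ∧
      s(w.getVert i, w.getVert (i + 1)) ∈ I.edgeSet ∧
      s(w.getVert j, w.getVert (j + 1)) ∈ I.edgeSet ∧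
      ¬ G.Adj (w.getVert (i + 1)) (w.getVert j) ∧
      ¬ G.Adj (w.getVert i) (w.getVert (j + 1)) := by
  classical
  set L := w.length with hLdef
  have hL3 : 3 ≤ L := hcycle.three_le_length
  -- matchings give uniqueness of neighbors
  have uniq : ∀ (K : SimpleGraph V), (∀ x, deg K x = 1) →
      ∀ x y z : V, K.Adj x y → K.Adj x z → y = z := by
    intro K hK x y z hy hz
    have h1 : (Finset.univ.filter fun w => K.Adj x w).card ≤ 1 := le_of_eq (hK x)
    exact Finset.card_le_one.mp h1 y (by simp [hy]) z (by simp [hz])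
  have uniqI := uniq I hI
  have uniqJ := uniq J hJ
  have hnotboth : ∀ x y : V, ¬(I.Adj x y ∧ J.Adj x y) := by
    intro x y ⟨h1, h2⟩
    have h3 : (I ⊓ J).Adj x y := ⟨h1, h2⟩
    rw [disjoint_iff] at hIJ
    rw [hIJ] at h3
    exact h3
  have hsym : ∀ x y : V, (symmDiff I J).Adj x y ↔
      ((I.Adj x y ∧ ¬ J.Adj x y) ∨ (J.Adj x y ∧ ¬ I.Adj x y)) := by
    intro x y
    rw [symmDiff_def]
    simp [SimpleGraph.sup_adj, SimpleGraph.sdiff_adj]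
  have hgL : w.getVert L = v := SimpleGraph.Walk.getVert_length w
  have hg0 : w.getVert 0 = v := SimpleGraph.Walk.getVert_zero w
  have hcolor : ∀ q, q < L →
      (I.Adj (w.getVert q) (w.getVert (q+1)) ↔ ¬ J.Adj (w.getVert q) (w.getVert (q+1))) := by
    intro q hq
    have hadj := (hsym _ _).mp (w.adj_getVert_succ hq)
    have := hnotboth (w.getVert q) (w.getVert (q+1))
    tauto
  -- consecutive edges have different colors
  have halt : ∀ q, q + 1 < L →
      (I.Adj (w.getVert q) (w.getVert (q+1)) ↔
        ¬ I.Adj (w.getVert (q+1)) (w.getVert (q+2))) := by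
    intro q hq
    have hadj1 := w.adj_getVert_succ (show q < w.length by omega)
    have hadj2 := w.adj_getVert_succ (show q + 1 < w.length by omega)
    have hne : w.getVert q ≠ w.getVert (q+2) := by
      intro h
      rcases eq_or_lt_of_le (show q + 2 ≤ L by omega) with heq | hlt
      · have h0 : w.getVert (q+2) = w.getVert 0 := by
          rw [heq, hgL, hg0]
        have := cycle_getVert_inj0 hcycle (show q < w.length by omega)
          (show 0 < w.length by omega) (h.trans h0)
        omega
      · have := cycle_getVert_inj0 hcycle (show q < w.length by omega) hlt h
        omega
    have c1 := hcolor q (by omega)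
    have c2 := hcolor (q+1) (by omega)
    rw [show q + 1 + 1 = q + 2 from rfl] at c2
    constructor
    · intro h1 h2
      exact hne (uniqI _ _ _ h1.symm h2)
    · intro h2
      by_contra h1
      have hb1 : J.Adj (w.getVert q) (w.getVert (q+1)) := by tauto
      have hb2 : J.Adj (w.getVert (q+1)) (w.getVert (q+2)) := by tauto
      exact hne (uniqJ _ _ _ hb1.symm hb2)
  -- the main argument, given a red edge at position i0 ∈ {0,1}
  have main : ∀ i0 : ℕ, i0 ≤ 1 → I.Adj (w.getVert i0) (w.getVert (i0+1)) →
      ∃ i j : ℕ, i < j ∧ j < w.length ∧ j ≠ i + 2 ∧ j + 2 ≠ i + w.length ∧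
      s(w.getVert i, w.getVert (i + 1)) ∈ I.edgeSet ∧
      s(w.getVert j, w.getVert (j + 1)) ∈ I.edgeSet ∧
      ¬ G.Adj (w.getVert (i + 1)) (w.getVert j) ∧
      ¬ G.Adj (w.getVert i) (w.getVert (j + 1)) := by
    intro i0 hi01 hred0
    -- parity characterization of red edges
    have hpar : ∀ p, p < L → (I.Adj (w.getVert p) (w.getVert (p+1)) ↔ p % 2 = i0 % 2) := by
      intro p
      induction p using Nat.strong_induction_on with
      | _ p ih =>
        intro hp
        match p with
        | 0 =>
          interval_cases i0
          · exact iff_of_true hred0 rfl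
          · have h1 := halt 0 (by omega)
            simp only [Nat.reduceAdd, Nat.zero_add] at h1 hred0 ⊢
            exact iff_of_false (fun h => (h1.mp h) hred0) (by omega)
        | 1 =>
          interval_cases i0
          · have h1 := halt 0 (by omega)
            simp only [Nat.reduceAdd, Nat.zero_add] at h1 hred0 ⊢
            exact iff_of_false (h1.mp hred0) (by omega)
          · exact iff_of_true hred0 rfl
        | (q+2) =>
          have h1 := ih q (by omega) (by omega)
          have h2 := halt q (by omega)
          have h3 := halt (q+1) (by omega)
          rw [show q + 1 + 1 = q + 2 from rfl] at h3
          rw [show q + 1 + 2 = q + 3 from rfl] at h3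
          rw [show q + 2 + 1 = q + 3 from rfl]
          have hq2 : (q + 2) % 2 = i0 % 2 ↔ q % 2 = i0 % 2 := by omega
          tauto
    -- the cycle has even length
    have hwrap : I.Adj (w.getVert (L-1)) (w.getVert L) ↔
        ¬ I.Adj (w.getVert 0) (w.getVert 1) := by
      have hadj1 := w.adj_getVert_succ (show L - 1 < w.length by omega)
      rw [show L - 1 + 1 = L from by omega] at hadj1
      have hadj2 := w.adj_getVert_succ (show 0 < w.length by omega)
      rw [show (0:ℕ) + 1 = 1 from rfl] at hadj2
      have hv0 : w.getVert 0 = w.getVert L := hg0.trans hgL.symm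
      have hne : w.getVert (L-1) ≠ w.getVert 1 := by
        intro h
        have := cycle_getVert_inj0 hcycle (show L - 1 < w.length by omega)
          (show 1 < w.length by omega) h
        omega
      have c1 := hcolor (L-1) (by omega)
      rw [show L - 1 + 1 = L from by omega] at c1
      have c2 := hcolor 0 (by omega)
      rw [show (0:ℕ) + 1 = 1 from rfl] at c2
      rw [hsym] at hadj1
      rw [hsym] at hadj2
      constructor
      · intro h1 h2
        rw [hv0] at h2
        exact hne (uniqI _ _ _ h1.symm h2)
      · intro h2
        by_contra h1
        have hb1 : J.Adj (w.getVert (L-1)) (w.getVert L) := by tauto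
        have hb2 : J.Adj (w.getVert 0) (w.getVert 1) := by tauto
        rw [hv0] at hb2
        exact hne (uniqJ _ _ _ hb1.symm hb2)
    have hLeven : L % 2 = 0 := by
      have h1 := hpar 0 (by omega)
      rw [show (0:ℕ) + 1 = 1 from rfl] at h1
      have h2 := hpar (L-1) (by omega)
      rw [show L - 1 + 1 = L from by omega] at h2
      have h3 : ((L-1) % 2 = i0 % 2) ↔ ¬ (0 % 2 = i0 % 2) := by tauto
      omega
    -- counting
    set a := w.getVert i0 with ha
    set b := w.getVert (i0+1) with hb
    set T := (Finset.range L).filter (fun p => p % 2 = i0 % 2) with hT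
    set Bad := T.filter (fun p => p = i0 ∨ p = i0 + 2 ∨ p + 2 = i0 + L ∨
      G.Adj b (w.getVert p) ∨ G.Adj a (w.getVert (p+1))) with hBad
    have hTcard : 2*Δ + 4 ≤ T.card := by
      have := Finset.card_le_card_of_injOn (f := fun k => i0 + 2*k)
        (s := Finset.range (2*Δ+4)) (t := T)
        (by intro k hk
            simp only [Finset.mem_coe, Finset.mem_range] at hk
            simp only [Finset.mem_coe, hT, Finset.mem_filter, Finset.mem_range]
            omega)
        (by intro x hx y hy hxy; simp only at hxy; omega)
      simpa using this
    set N1 := (Finset.range L).filter (fun p => G.Adj b (w.getVert p)) with hN1d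
    set N2 := (Finset.range L).filter (fun p => G.Adj a (w.getVert (p+1))) with hN2d
    have hN1 : N1.card ≤ Δ := by
      refine le_trans (Finset.card_le_card_of_injOn (f := w.getVert)
        (t := Finset.univ.filter fun x => G.Adj b x) ?_ ?_) (hΔ b)
      · intro p hp
        simp only [Finset.mem_coe, hN1d, Finset.mem_filter, Finset.mem_range] at hp
        simp [hp.2]
      · intro p hp q hq h
        simp only [hN1d, Finset.coe_filter, Set.mem_setOf_eq, Finset.mem_range] at hp hq
        exact cycle_getVert_inj0 hcycle hp.1 hq.1 h
    have hN2 : N2.card ≤ Δ := by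
      refine le_trans (Finset.card_le_card_of_injOn (f := fun p => w.getVert (p+1))
        (t := Finset.univ.filter fun x => G.Adj a x) ?_ ?_) (hΔ a)
      · intro p hp
        simp only [Finset.mem_coe, hN2d, Finset.mem_filter, Finset.mem_range] at hp
        simp [hp.2]
      · intro p hp q hq h
        simp only [hN2d, Finset.coe_filter, Set.mem_setOf_eq, Finset.mem_range] at hp hq
        have := cycle_getVert_inj hcycle (i := p+1) (j := q+1) (by omega) (by omega)
          (by omega) (by omega) h
        omega
    have hBadcard : Bad.card ≤ 2*Δ + 3 := by
      have hsub : Bad ⊆ ((({i0} : Finset ℕ) ∪ {i0+2} ∪ {i0 + L - 2}) ∪ N1 ∪ N2) := by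
        intro p hp
        simp only [hBad, hT, Finset.mem_filter, Finset.mem_range] at hp
        simp only [Finset.mem_union, Finset.mem_singleton, hN1d, hN2d,
          Finset.mem_filter, Finset.mem_range]
        obtain ⟨⟨hpL, hpar2⟩, hd⟩ := hp
        rcases hd with h | h | h | h | h
        · exact Or.inl (Or.inl (Or.inl (Or.inl h)))
        · exact Or.inl (Or.inl (Or.inl (Or.inr h)))
        · exact Or.inl (Or.inl (Or.inr (by omega)))
        · exact Or.inl (Or.inr ⟨hpL, h⟩)
        · exact Or.inr ⟨hpL, h⟩
      have c3 : (({i0} : Finset ℕ) ∪ {i0+2} ∪ {i0 + L - 2}).card ≤ 3 := by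
        apply le_trans (Finset.card_union_le _ _)
        have := Finset.card_union_le ({i0} : Finset ℕ) ({i0+2} : Finset ℕ)
        simp only [Finset.card_singleton] at *
        omega
      have c4 := Finset.card_union_le ((({i0} : Finset ℕ) ∪ {i0+2} ∪ {i0 + L - 2}) ∪ N1) N2
      have c5 := Finset.card_union_le (({i0} : Finset ℕ) ∪ {i0+2} ∪ {i0 + L - 2}) N1
      have c6 := Finset.card_le_card hsub
      omega
    have hnotsub : ¬ (T ⊆ Bad) := by
      intro h
      have := Finset.card_le_card h
      omega
    obtain ⟨p, hpT, hpB⟩ := Finset.not_subset.mp hnotsub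
    have hpT' : p < L ∧ p % 2 = i0 % 2 := by
      simpa only [hT, Finset.mem_filter, Finset.mem_range] using hpT
    have hnB : ¬(p = i0 ∨ p = i0 + 2 ∨ p + 2 = i0 + L ∨
        G.Adj b (w.getVert p) ∨ G.Adj a (w.getVert (p+1))) := by
      intro h
      exact hpB (by simp only [hBad, Finset.mem_filter]; exact ⟨hpT, h⟩)
    push_neg at hnB
    have hpred : I.Adj (w.getVert p) (w.getVert (p+1)) := (hpar p hpT'.1).mpr hpT'.2
    refine ⟨i0, p, by omega, hpT'.1, hnB.2.1, hnB.2.2.1,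
      I.mem_edgeSet.mpr hred0, I.mem_edgeSet.mpr hpred, hnB.2.2.2.1, hnB.2.2.2.2⟩
  -- find a red edge at position 0 or 1
  by_cases hr0 : I.Adj (w.getVert 0) (w.getVert (0+1))
  · exact main 0 (by omega) hr0
  · have h1 := halt 0 (by omega)
    rw [show (0:ℕ) + 1 = 1 from rfl, show (0:ℕ) + 2 = 2 from rfl] at h1
    rw [show (0:ℕ) + 1 = 1 from rfl] at hr0
    have : I.Adj (w.getVert 1) (w.getVert 2) := by tauto
    exact main 1 le_rfl (by rw [show (1:ℕ) + 1 = 2 from rfl]; exact this)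
end

section
/- Let π be a graphic sequence with n terms in which each term is at most n/24 and such that π + 1 is graphic, and let (G, I) and (G, J) be two Kundu realizations of π + 1 with the same underlying realization G of π (the perfect matchings I and J need not be edge-disjoint). Then there exists a finite sequence of K-swaps transforming (G ∪ I, displayed 1-factor I) into (G ∪ J, displayed 1-factor J) such that at every intermediate step the non-matching part of the realization equals G (i.e. G does not change at any step of the process; only the displayed perfect matching changes). -/
open scoped Classical
set_option linter.unusedSectionVars false
set_option maxHeartbeats 1000000

namespace KP

variable {V : Type*} [Fintype V] [DecidableEq V]

def Match (I : SimpleGraph V) (ι : V → V) : Prop := ∀ v w, I.Adj v w ↔ w = ι v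

lemma Match.adj {I : SimpleGraph V} {ι : V → V} (h : Match I ι) (v : V) :
    I.Adj v (ι v) := (h v (ι v)).2 rfl

lemma Match.invol {I : SimpleGraph V} {ι : V → V} (h : Match I ι) (v : V) :
    ι (ι v) = v := ((h (ι v) v).1 (h.adj v).symm).symm

lemma Match.nofix {I : SimpleGraph V} {ι : V → V} (h : Match I ι) (v : V) :
    ι v ≠ v := fun he => I.loopless.irrefl v (by nth_rewrite 2 [← he]; exact h.adj v)

lemma Match.deg_one {I : SimpleGraph V} {ι : V → V} (h : Match I ι) (v : V) :
    deg I v = 1 := by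
  have : (Finset.univ.filter fun w => I.Adj v w) = {ι v} := by
    ext w
    simp [h v w]
  rw [deg, this, Finset.card_singleton]

lemma exists_match {I : SimpleGraph V} (h : ∀ v, deg I v = 1) : ∃ ι, Match I ι := by
  have h1 : ∀ v, ∃ w, I.Adj v w ∧ ∀ u, I.Adj v u → u = w := by
    intro v
    obtain ⟨a, ha⟩ := Finset.card_eq_one.mp (h v)
    refine ⟨a, ?_, ?_⟩
    · have : a ∈ Finset.univ.filter fun w => I.Adj v w := ha ▸ Finset.mem_singleton_self a
      exact (Finset.mem_filter.mp this).2
    · intro u hu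
      have : u ∈ Finset.univ.filter fun w => I.Adj v w :=
        Finset.mem_filter.mpr ⟨Finset.mem_univ u, hu⟩
      rw [ha] at this
      exact Finset.mem_singleton.mp this
  refine ⟨fun v => (h1 v).choose, fun v w => ⟨fun hw => (h1 v).choose_spec.2 w hw,
    fun hw => hw ▸ (h1 v).choose_spec.1⟩⟩

def rewire (ι : V → V) (a b c d : V) : V → V :=
  fun v => if v = a then d else if v = b then c else if v = c then b else if v = d then a else ι v

section Rewire

variable {I : SimpleGraph V} {ι : V → V} {a b c d : V}

lemma rewire_eq_iff (h : Match I ι)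
    (hab : ι a = b) (hcd : ι c = d)
    (h1 : a ≠ b) (h2 : a ≠ c) (h3 : a ≠ d) (h4 : b ≠ c) (h5 : b ≠ d) (h6 : c ≠ d)
    (v w : V) :
    w = rewire ι a b c d v ↔
      ((w = ι v ∧ ¬((v = a ∧ w = b) ∨ (v = b ∧ w = a)) ∧
          ¬((v = c ∧ w = d) ∨ (v = d ∧ w = c)))
       ∨ ((v = b ∧ w = c) ∨ (v = c ∧ w = b))
       ∨ ((v = a ∧ w = d) ∨ (v = d ∧ w = a))) := by
  have hba : ι b = a := by rw [← hab, h.invol]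
  have hdc : ι d = c := by rw [← hcd, h.invol]
  unfold rewire
  split_ifs with k1 k2 k3 k4
  · subst k1
    simp [hab, h1, h2, h3, h1.symm, h2.symm, h3.symm]
  · subst k2
    simp [k1, hba, h1, h4, h5, h1.symm, h4.symm, h5.symm]
  · subst k3
    simp [k1, k2, hcd, h2, h4, h6, h2.symm, h4.symm, h6.symm]
  · subst k4
    simp [k1, k2, k3, hdc, h3, h5, h6, h3.symm, h5.symm, h6.symm]
  · simp [k1, k2, k3, k4]

lemma rewire_invol (hinv : ∀ v, ι (ι v) = v)
    (hab : ι a = b) (hcd : ι c = d)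
    (h1 : a ≠ b) (h2 : a ≠ c) (h3 : a ≠ d) (h4 : b ≠ c) (h5 : b ≠ d) (h6 : c ≠ d) :
    ∀ v, rewire ι a b c d (rewire ι a b c d v) = v := by
  intro v
  unfold rewire
  by_cases k1 : v = a
  · subst k1; simp [h3.symm, h6.symm, h5.symm]
  by_cases k2 : v = b
  · subst k2; simp [k1, h2.symm, h4.symm, h6, h4]
  by_cases k3 : v = c
  · subst k3; simp [k1, k2, h4.symm, h1.symm, h4, h5]
  by_cases k4 : v = d
  · subst k4; simp [k1, k2, k3, h3.symm, h1, h2, h3]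
  · have na : ι v ≠ a := fun he => k2 (by rw [← hinv v, he, hab])
    have nb : ι v ≠ b := fun he => k1 (by rw [← hinv v, he, ← hab, hinv])
    have nc : ι v ≠ c := fun he => k4 (by rw [← hinv v, he, hcd])
    have nd : ι v ≠ d := fun he => k3 (by rw [← hinv v, he, ← hcd, hinv])
    simp [k1, k2, k3, k4, na, nb, nc, nd, hinv v]

lemma rewire_nofix (hne : ∀ v, ι v ≠ v)
    (h1 : a ≠ b) (h2 : a ≠ c) (h3 : a ≠ d) (h4 : b ≠ c) (h5 : b ≠ d) (h6 : c ≠ d) :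
    ∀ v, rewire ι a b c d v ≠ v := by
  intro v
  unfold rewire
  by_cases k1 : v = a
  · subst k1; simp [h3.symm]
  by_cases k2 : v = b
  · subst k2; simp [k1, h4.symm]
  by_cases k3 : v = c
  · subst k3; simp [k1, k2, h4]
  by_cases k4 : v = d
  · subst k4; simp [k1, k2, k3, h3]
  · simp [k1, k2, k3, k4, hne v]

lemma rewire_val_a (h : b ≠ a) : rewire ι a b c d a = d := by simp [rewire]
lemma rewire_val_b (h1 : b ≠ a) : rewire ι a b c d b = c := by simp [rewire, h1]
lemma rewire_val_c (h1 : c ≠ a) (h2 : c ≠ b) : rewire ι a b c d c = b := by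
  simp [rewire, h1, h2]
lemma rewire_val_d (h1 : d ≠ a) (h2 : d ≠ b) (h3 : d ≠ c) : rewire ι a b c d d = a := by
  simp [rewire, h1, h2, h3]
lemma rewire_val_other {v : V} (h1 : v ≠ a) (h2 : v ≠ b) (h3 : v ≠ c) (h4 : v ≠ d) :
    rewire ι a b c d v = ι v := by simp [rewire, h1, h2, h3, h4]

end Rewire

def invGraph (ι : V → V) (hinv : ∀ v, ι (ι v) = v) (hne : ∀ v, ι v ≠ v) : SimpleGraph V where
  Adj v w := w = ι v
  symm := ⟨fun v w (h : w = ι v) => show v = ι w by rw [h, hinv]⟩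
  loopless := ⟨fun v (h : v = ι v) => hne v h.symm⟩

lemma invGraph_match {ι : V → V} (hinv : ∀ v, ι (ι v) = v) (hne : ∀ v, ι v ≠ v) :
    Match (invGraph ι hinv hne) ι := fun _ _ => Iff.rfl

lemma disjoint_adj {G I : SimpleGraph V} (h : Disjoint G I) {x y : V}
    (hi : I.Adj x y) : ¬ G.Adj x y := by
  intro hg
  have h0 : G ⊓ I = ⊥ := disjoint_iff.mp h
  have : (G ⊓ I).Adj x y := ⟨hg, hi⟩
  rw [h0] at this
  exact this.elim

lemma kswap_step (G : SimpleGraph V) {I : SimpleGraph V} {ι : V → V} (hI : Match I ι)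
    (hdisj : Disjoint G I) {a b c d : V}
    (hab : ι a = b) (hcd : ι c = d)
    (h2 : a ≠ c) (h3 : a ≠ d) (h4 : b ≠ c) (h5 : b ≠ d)
    (hGbc : ¬ G.Adj b c) (hGad : ¬ G.Adj a d) :
    ∃ I' : SimpleGraph V, Match I' (rewire ι a b c d) ∧ Disjoint G I' ∧
      KSwap (G, I) (G, I') := by
  have h1 : a ≠ b := fun he => hI.nofix a (by rw [hab, ← he])
  have h6 : c ≠ d := fun he => hI.nofix c (by rw [hcd, ← he])
  set ι' := rewire ι a b c d with hι'
  have hinv' := rewire_invol (ι := ι) hI.invol hab hcd h1 h2 h3 h4 h5 h6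
  have hne' := rewire_nofix (ι := ι) hI.nofix h1 h2 h3 h4 h5 h6
  set I' := invGraph ι' hinv' hne' with hI'def
  have hM' : Match I' ι' := invGraph_match hinv' hne'
  have hIab : I.Adj a b := (hI a b).2 hab.symm
  have hIcd : I.Adj c d := (hI c d).2 hcd.symm
  have hGab : ¬ G.Adj a b := disjoint_adj hdisj hIab
  have hGcd : ¬ G.Adj c d := disjoint_adj hdisj hIcd
  have hIbc : ¬ I.Adj b c := by
    rw [hI b c]
    intro he
    have hba : ι b = a := by rw [← hab, hI.invol]
    exact h2 ((he.trans hba).symm)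
  have hIad : ¬ I.Adj a d := by
    rw [hI a d, hab]
    exact fun he => h5 he.symm
  have hIedge : I'.edgeSet = (I.edgeSet \ {s(a, b), s(c, d)}) ∪ {s(b, c), s(a, d)} := by
    ext e
    induction e using Sym2.ind with
    | _ v w =>
      simp only [SimpleGraph.mem_edgeSet, Set.mem_union, Set.mem_diff, Set.mem_insert_iff,
        Set.mem_singleton_iff, Sym2.eq_iff]
      rw [show I'.Adj v w ↔ w = ι' v from Iff.rfl, hι',
        rewire_eq_iff hI hab hcd h1 h2 h3 h4 h5 h6 v w, ← hI v w]
      simp only [not_or, and_assoc]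
  have hHedge : (G ⊔ I').edgeSet
      = ((G ⊔ I).edgeSet \ {s(a, b), s(c, d)}) ∪ {s(b, c), s(a, d)} := by
    rw [SimpleGraph.edgeSet_sup, SimpleGraph.edgeSet_sup, hIedge]
    have e1 : s(a, b) ∉ G.edgeSet := hGab
    have e2 : s(c, d) ∉ G.edgeSet := hGcd
    ext e
    simp only [Set.mem_union, Set.mem_diff, Set.mem_insert_iff, Set.mem_singleton_iff]
    constructor
    · rintro (hg | ⟨⟨hi, hne⟩ | hy⟩)
      · exact Or.inl ⟨Or.inl hg, by rintro (rfl | rfl) <;> [exact e1 hg; exact e2 hg]⟩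
      · exact Or.inl ⟨Or.inr hi, hne⟩
      · exact Or.inr hy
    · rintro (⟨hg | hi, hne⟩ | hy)
      · exact Or.inl hg
      · exact Or.inr (Or.inl ⟨hi, hne⟩)
      · exact Or.inr (Or.inr hy)
  have hdisj' : Disjoint G I' := by
    rw [← SimpleGraph.disjoint_edgeSet, hIedge, Set.disjoint_union_right]
    constructor
    · exact Set.disjoint_of_subset_right Set.diff_subset
        (SimpleGraph.disjoint_edgeSet.mpr hdisj)
    · rw [Set.disjoint_right]
      rintro e (rfl | rfl)
      · exact fun hg => hGbc hg
      · exact fun hg => hGad hg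
  refine ⟨I', hM', hdisj', a, b, c, d, ?_, Or.inl ⟨hIab, hIcd, rfl, hIedge⟩⟩
  exact ⟨h1, h2, h3, h4, h5, h6, Or.inr hIab, Or.inr hIcd,
    fun hadj => hadj.elim hGbc hIbc, fun hadj => hadj.elim hGad hIad, hHedge⟩

section Chain

variable {n : ℕ} {π : Fin n → ℕ} {G : SimpleGraph (Fin n)}
  {p q r : SimpleGraph (Fin n) × SimpleGraph (Fin n)}

def Chain (π : Fin n → ℕ) (G : SimpleGraph (Fin n))
    (p q : SimpleGraph (Fin n) × SimpleGraph (Fin n)) : Prop :=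
  ∃ (m : ℕ) (f : ℕ → SimpleGraph (Fin n) × SimpleGraph (Fin n)), f 0 = p ∧ f m = q ∧ (∀ k < m, KSwap (f k) (f (k + 1))) ∧
    (∀ k ≤ m, KunduState π (f k)) ∧ (∀ k ≤ m, (f k).1 = G)

lemma Chain.refl (h : KunduState π p) (hG : p.1 = G) : Chain π G p p :=
  ⟨0, fun _ => p, rfl, rfl, fun k hk => absurd hk (Nat.not_lt_zero k),
    fun _ _ => h, fun _ _ => hG⟩

lemma Chain.single (hs : KSwap p q) (h1 : KunduState π p) (h2 : KunduState π q)
    (hG1 : p.1 = G) (hG2 : q.1 = G) : Chain π G p q := by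
  refine ⟨1, fun k => if k = 0 then p else q, by simp, by simp, ?_, ?_, ?_⟩
  · intro k hk
    have : k = 0 := by omega
    subst this
    simpa using hs
  · intro k _
    by_cases hk : k = 0 <;> simp [hk, h1, h2]
  · intro k _
    by_cases hk : k = 0 <;> simp [hk, hG1, hG2]

lemma Chain.trans (h1 : Chain π G p q) (h2 : Chain π G q r) : Chain π G p r := by
  obtain ⟨m, f, hf0, hfm, hfs, hfk, hfg⟩ := h1
  obtain ⟨m', g, hg0, hgm, hgs, hgk, hgg⟩ := h2
  refine ⟨m + m', fun k => if k < m then f k else g (k - m), ?_, ?_, ?_, ?_, ?_⟩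
  · by_cases hm : 0 < m
    · simpa [hm] using hf0
    · have : m = 0 := by omega
      subst this
      simpa [hg0, hfm] using hf0
  · have : ¬ (m + m' < m) := by omega
    simp [this, hgm]
  · intro k hk
    by_cases hk1 : k + 1 < m
    · have hk0 : k < m := by omega
      simp only [if_pos hk0, if_pos hk1]
      exact hfs k hk0
    · by_cases hk0 : k < m
      · have he : k + 1 = m := by omega
        have h0 : k + 1 - m = 0 := by omega
        simp only []
        rw [if_pos hk0, if_neg hk1, h0, hg0, ← hfm, ← he]
        exact hfs k hk0
      · have h1k : ¬ (k + 1 < m) := by omega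
        simp only [if_neg hk0, if_neg h1k]
        have : k + 1 - m = (k - m) + 1 := by omega
        rw [this]
        exact hgs (k - m) (by omega)
  · intro k hk
    by_cases hk0 : k < m
    · simp only [if_pos hk0]; exact hfk k (by omega)
    · simp only [if_neg hk0]; exact hgk (k - m) (by omega)
  · intro k hk
    by_cases hk0 : k < m
    · simp only [if_pos hk0]; exact hfg k (by omega)
    · simp only [if_neg hk0]; exact hgg (k - m) (by omega)

end Chain

lemma pigeon {ι : V → V} (hinv : ∀ v, ι (ι v) = v) (X Y : Finset V)
    (h : X.card + Y.card < Fintype.card V) : ∃ x, x ∉ X ∧ ι x ∉ Y := by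
  by_contra hc
  push_neg at hc
  have hsub : (Finset.univ : Finset V) ⊆ X ∪ Y.image ι := by
    intro x _
    by_cases hx : x ∈ X
    · exact Finset.mem_union_left _ hx
    · exact Finset.mem_union_right _ (Finset.mem_image.mpr ⟨ι x, hc x hx, hinv x⟩)
  have h1 := Finset.card_le_card hsub
  rw [Finset.card_univ] at h1
  have h2 := Finset.card_union_le X (Y.image ι)
  have h3 := Finset.card_image_le (s := Y) (f := ι)
  omega

lemma card_le_seven {α : Type*} [DecidableEq α] (a b c d e f g : α) :
    ({a, b, c, d, e, f, g} : Finset α).card ≤ 7 := by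
  apply le_trans (Finset.card_insert_le _ _); apply Nat.succ_le_succ
  apply le_trans (Finset.card_insert_le _ _); apply Nat.succ_le_succ
  apply le_trans (Finset.card_insert_le _ _); apply Nat.succ_le_succ
  apply le_trans (Finset.card_insert_le _ _); apply Nat.succ_le_succ
  apply le_trans (Finset.card_insert_le _ _); apply Nat.succ_le_succ
  apply le_trans (Finset.card_insert_le _ _); apply Nat.succ_le_succ
  simp

section Step

variable {n : ℕ} {π : Fin n → ℕ}

lemma step_lemma (G I J : SimpleGraph (Fin n)) (ι κ : Fin n → Fin n)
    (hG : ∀ i, deg G i = π i) (hΔ : ∀ i, 24 * π i ≤ n)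
    (hI : Match I ι) (hJ : Match J κ)
    (hdI : Disjoint G I) (hdJ : Disjoint G J)
    (u : Fin n) (hu : ι u ≠ κ u) :
    ∃ (I' : SimpleGraph (Fin n)) (ι' : Fin n → Fin n),
      Match I' ι' ∧ Disjoint G I' ∧ Chain π G (G, I) (G, I') ∧
      (Finset.univ.filter fun z => ι' z ≠ κ z).card
        < (Finset.univ.filter fun z => ι z ≠ κ z).card := by
  set v := κ u with hv
  set u' := ι u with hu'
  set v' := ι v with hv'
  have hκv : κ v = u := hJ.invol u
  have hιu' : ι u' = u := hI.invol u
  have hιv' : ι v' = v := hI.invol v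
  have hιinj : ∀ x y : Fin n, ι x = ι y → x = y := by
    intro x y hxy
    rw [← hI.invol x, hxy, hI.invol]
  have huv : u ≠ v := fun he => hJ.nofix u (hv ▸ he.symm)
  have hu'u : u' ≠ u := hI.nofix u
  have hv'v : v' ≠ v := hI.nofix v
  have hu'v : u' ≠ v := hu
  have hv'u : v' ≠ u := fun he => hu (by rw [hu', ← he, hιv'])
  have hu'v' : u' ≠ v' := fun he => huv (hιinj u v he)
  have hJuv : J.Adj u v := (hJ u v).2 rfl
  have hGuv : ¬ G.Adj u v := disjoint_adj hdJ hJuv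
  -- the measure set
  set D := Finset.univ.filter (fun z => ι z ≠ κ z) with hD
  have huD : u ∈ D := Finset.mem_filter.mpr ⟨Finset.mem_univ u, hu⟩
  have hSI : KunduState π (G, I) := ⟨hG, fun z => hI.deg_one z, hdI⟩
  by_cases hGu'v' : G.Adj u' v'
  · -- hard case: helper edge needed
    set u'' := κ u' with hu''
    set v'' := κ v' with hv''
    set w := ι v'' with hw
    have hκu'' : κ u'' = u' := hJ.invol u'
    have hκv'' : κ v'' = v' := hJ.invol v'
    have hιw : ι w = v'' := hI.invol v''
    have hGJ : ∀ x y : Fin n, J.Adj x y → ¬ G.Adj x y := fun x y hj => disjoint_adj hdJ hj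
    have hJu'u'' : J.Adj u' u'' := (hJ u' u'').2 hu''
    have hJv'v'' : J.Adj v' v'' := (hJ v' v'').2 hv''
    have hu''v' : u'' ≠ v' := fun he => hGJ u' v' (he ▸ hJu'u'') hGu'v'
    have hv''u' : v'' ≠ u' := fun he => hu''v' (by rw [hu'', ← he, hκv''])
    have hv''u : v'' ≠ u := by
      intro he
      have hc : κ u = v' := by rw [← he, hκv'']
      exact hv'v (hv.trans hc).symm
    have hv''v : v'' ≠ v := by
      intro he
      have hc : κ v = v' := by rw [← he, hκv'']
      exact hv'u (hκv.symm.trans hc).symm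
    have hv''v' : v'' ≠ v' := hJ.nofix v'
    have hwv'' : w ≠ v'' := hI.nofix v''
    have hwu : w ≠ u := fun he => hv''u' (hιinj v'' u' (by rw [← hw, he, hιu']))
    have hwv : w ≠ v := fun he => hv''v' (by rw [← hιw, he])
    have hwu' : w ≠ u' := fun he => hv''u (by rw [← hιw, he, hιu'])
    have hwv' : w ≠ v' := fun he => hv''v (by rw [← hιw, he, hιv'])
    have huv' : u ≠ v' := fun he => hv'u he.symm
    have hn24 : 24 ≤ n := by
      have h1 : 0 < deg G u' := by
        rw [deg]
        exact Finset.card_pos.mpr ⟨v', Finset.mem_filter.mpr ⟨Finset.mem_univ v', hGu'v'⟩⟩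
      rw [hG u'] at h1
      have h2 := hΔ u'
      omega
    -- choose the helper edge x -- y
    have hfX1 : (Finset.univ.filter (fun z => G.Adj u z)).card = π u := hG u
    have hfX2 : (Finset.univ.filter (fun z => G.Adj v' z)).card = π v' := hG v'
    have hfX3 : (Finset.univ.filter (fun z => G.Adj w z)).card = π w := hG w
    have hfY1 : (Finset.univ.filter (fun z => G.Adj u' z)).card = π u' := hG u'
    set X := (({u, v, u', v', v'', w, κ w} : Finset (Fin n))
      ∪ Finset.univ.filter (fun z => G.Adj u z)
      ∪ Finset.univ.filter (fun z => G.Adj v' z))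
      ∪ Finset.univ.filter (fun z => G.Adj w z) with hX
    set Y := ({u, v, u', v', v'', w, u''} : Finset (Fin n))
      ∪ Finset.univ.filter (fun z => G.Adj u' z) with hY
    have hXcard : X.card ≤ 7 + π u + π v' + π w := by
      have t0 := card_le_seven u v u' v' v'' w (κ w)
      have t1 := Finset.card_union_le (({u, v, u', v', v'', w, κ w} : Finset (Fin n)))
        (Finset.univ.filter (fun z => G.Adj u z))
      have t2 := Finset.card_union_le (({u, v, u', v', v'', w, κ w} : Finset (Fin n))
        ∪ Finset.univ.filter (fun z => G.Adj u z))
        (Finset.univ.filter (fun z => G.Adj v' z))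
      have t3 := Finset.card_union_le ((({u, v, u', v', v'', w, κ w} : Finset (Fin n))
        ∪ Finset.univ.filter (fun z => G.Adj u z))
        ∪ Finset.univ.filter (fun z => G.Adj v' z))
        (Finset.univ.filter (fun z => G.Adj w z))
      rw [hX]
      omega
    have hYcard : Y.card ≤ 7 + π u' := by
      have t0 := card_le_seven u v u' v' v'' w u''
      have t1 := Finset.card_union_le (({u, v, u', v', v'', w, u''} : Finset (Fin n)))
        (Finset.univ.filter (fun z => G.Adj u' z))
      rw [hY]
      omega
    have hlt : X.card + Y.card < Fintype.card (Fin n) := by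
      rw [Fintype.card_fin]
      have c1 := hΔ u
      have c2 := hΔ v'
      have c3 := hΔ w
      have c4 := hΔ u'
      omega
    obtain ⟨x, hxX, hyY⟩ := pigeon hI.invol X Y hlt
    set y := ι x with hy
    rw [hX] at hxX
    rw [hY] at hyY
    simp only [Finset.mem_union, Finset.mem_insert, Finset.mem_singleton, Finset.mem_filter,
      Finset.mem_univ, true_and, not_or] at hxX hyY
    obtain ⟨⟨⟨⟨hxu, hxv, hxu', hxv', hxv'', hxw, hxκw⟩, hxGu⟩, hxGv'⟩, hxGw⟩ := hxX
    obtain ⟨⟨hyu, hyv, hyu', hyv', hyv'', hyw, hyu''⟩, hyGu'⟩ := hyY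
    have hyx : y ≠ x := hI.nofix x
    have hιy : ι y = x := hI.invol x
    -- swap 1 : remove u'u and xy, add ux and u'y
    obtain ⟨I1, hM1, hd1, hks1⟩ := kswap_step G hI hdI hιu' hy.symm
      (Ne.symm hxu') (Ne.symm hyu') (Ne.symm hxu) (Ne.symm hyu) hxGu hyGu'
    -- swap 2 : remove v'v and ux, add vu and v'x
    have hι1v' : rewire ι u' u x y v' = v := by
      rw [rewire_val_other hu'v'.symm hv'u (Ne.symm hxv') (Ne.symm hyv')]
      exact hιv'
    have hι1u : rewire ι u' u x y u = x := rewire_val_b hu'u.symm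
    obtain ⟨I2, hM2, hd2, hks2⟩ := kswap_step G hM1 hd1 hι1v' hι1u
      hv'u (Ne.symm hxv') huv.symm (Ne.symm hxv) (fun h : G.Adj v u => hGuv h.symm) hxGv'
    -- swap 3 : remove xv' and v''w, add v'v'' and xw
    have hι2x : rewire (rewire ι u' u x y) v' v u x x = v' :=
      rewire_val_d hxv' hxv hxu
    have hι2v'' : rewire (rewire ι u' u x y) v' v u x v'' = w := by
      rw [rewire_val_other hv''v' hv''v hv''u (Ne.symm hxv''),
        rewire_val_other hv''u' hv''u (Ne.symm hxv'') (Ne.symm hyv'')]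
    obtain ⟨I3, hM3, hd3, hks3⟩ := kswap_step G hM2 hd2 hι2x hι2v''
      hxv'' hxw hv''v'.symm (Ne.symm hwv') (hGJ v' v'' hJv'v'') (fun h : G.Adj x w => hxGw h.symm)
    set ι3 := rewire (rewire (rewire ι u' u x y) v' v u x) x v' v'' w with hι3
    -- the chain of three K-swaps
    have hS1 : KunduState π (G, I1) := ⟨hG, fun z => hM1.deg_one z, hd1⟩
    have hS2 : KunduState π (G, I2) := ⟨hG, fun z => hM2.deg_one z, hd2⟩
    have hS3 : KunduState π (G, I3) := ⟨hG, fun z => hM3.deg_one z, hd3⟩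
    have hchain : Chain π G (G, I) (G, I3) :=
      (Chain.single hks1 hSI hS1 rfl rfl).trans
        ((Chain.single hks2 hS1 hS2 rfl rfl).trans (Chain.single hks3 hS2 hS3 rfl rfl))
    -- values of the new matching
    have val3_u : ι3 u = v := by
      rw [hι3, rewire_val_other (Ne.symm hxu) huv' hv''u.symm hwu.symm,
        rewire_val_c huv' huv]
    have val3_v : ι3 v = u := by
      rw [hι3, rewire_val_other (Ne.symm hxv) hv'v.symm hv''v.symm hwv.symm,
        rewire_val_b hv'v.symm]
    have val3_v' : ι3 v' = v'' := by
      rw [hι3, rewire_val_b (Ne.symm hxv')]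
    have val3_v'' : ι3 v'' = v' := by
      rw [hι3, rewire_val_c (Ne.symm hxv'') hv''v']
    have val3_x : ι3 x = w := by
      rw [hι3, rewire_val_a (Ne.symm hxv')]
    have val3_w : ι3 w = x := by
      rw [hι3, rewire_val_d (Ne.symm hxw) hwv' hwv'']
    have val3_u' : ι3 u' = y := by
      rw [hι3, rewire_val_other (Ne.symm hxu') hu'v' hv''u'.symm hwu'.symm,
        rewire_val_other hu'v' hu'v hu'u (Ne.symm hxu'),
        rewire_val_a hu'u.symm]
    have val3_y : ι3 y = u' := by
      rw [hι3, rewire_val_other hyx hyv' hyv'' hyw,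
        rewire_val_other hyv' hyv hyu hyx,
        rewire_val_d hyu' hyu hyx]
    -- the measure decreases
    set S : Finset (Fin n) := {u, v, v', v''} with hSdef
    have hSsub : S ⊆ D := by
      intro z hz
      rw [hSdef] at hz
      simp only [Finset.mem_insert, Finset.mem_singleton] at hz
      refine Finset.mem_filter.mpr ⟨Finset.mem_univ z, ?_⟩
      rcases hz with rfl | rfl | rfl | rfl
      · exact hu
      · rw [← hv', hκv]; exact hv'u
      · rw [hιv', ← hv'']; exact fun he => hv''v he.symm
      · rw [← hw, hκv'']; exact hwv'
    have hScard : S.card = 4 := by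
      rw [hSdef]
      rw [Finset.card_insert_of_notMem (by simp [huv, huv', hv''u.symm]),
        Finset.card_insert_of_notMem (by simp [hv'v.symm, hv''v.symm]),
        Finset.card_insert_of_notMem (by simp only [Finset.mem_singleton]; exact fun h => hv''v' h.symm),
        Finset.card_singleton]
    refine ⟨I3, ι3, hM3, hd3, hchain, ?_⟩
    have hsub3 : (Finset.univ.filter fun z => ι3 z ≠ κ z) ⊆ (D \ S) ∪ {x, y} := by
      intro z hz
      have hz' : ι3 z ≠ κ z := (Finset.mem_filter.mp hz).2
      by_cases hzx : z = x
      · exact Finset.mem_union_right _ (by simp [hzx])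
      by_cases hzy : z = y
      · exact Finset.mem_union_right _ (by simp [hzy])
      by_cases hzu : z = u
      · subst hzu; exact absurd (val3_u.trans hv) hz'
      by_cases hzv : z = v
      · subst hzv; exact absurd (val3_v.trans hκv.symm) hz'
      by_cases hzv' : z = v'
      · subst hzv'; exact absurd (val3_v'.trans hv'') hz'
      by_cases hzv'' : z = v''
      · subst hzv''; exact absurd (val3_v''.trans hκv''.symm) hz'
      have hzD : ι z ≠ κ z := by
        by_cases hzu' : z = u'
        · subst hzu'
          rw [hιu']
          intro he
          have hc : κ u = u' := by rw [he, hJ.invol]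
          exact hu'v (hv.trans hc).symm
        by_cases hzw : z = w
        · subst hzw
          rw [hιw]
          intro he
          have hc : κ v'' = w := by rw [he, hJ.invol]
          exact hwv' (hκv''.symm.trans hc).symm
        · rwa [hι3, rewire_val_other hzx hzv' hzv'' hzw,
            rewire_val_other hzv' hzv hzu hzx,
            rewire_val_other hzu' hzu hzx hzy] at hz'
      refine Finset.mem_union_left _ (Finset.mem_sdiff.mpr
        ⟨Finset.mem_filter.mpr ⟨Finset.mem_univ z, hzD⟩, ?_⟩)
      rw [hSdef]
      simp [hzu, hzv, hzv', hzv'']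
    have hc1 := Finset.card_le_card hsub3
    have hc2 := Finset.card_union_le (D \ S) ({x, y} : Finset (Fin n))
    have hc3 : (D \ S).card = D.card - 4 := by rw [Finset.card_sdiff_of_subset hSsub, hScard]
    have hc4 : ({x, y} : Finset (Fin n)).card ≤ 2 :=
      le_trans (Finset.card_insert_le _ _) (by simp)
    have hc5 : 4 ≤ D.card := hScard ▸ Finset.card_le_card hSsub
    omega
  · -- easy case: single swap
    obtain ⟨I', hM', hdisj', hks⟩ := kswap_step G hI hdI hιu' hv'.symm
      hu'v hu'v' huv (fun he => hv'u he.symm) hGuv hGu'v'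
    set ι' := rewire ι u' u v v' with hι'
    have val_u : ι' u = v := rewire_val_b hu'u.symm
    have val_v : ι' v = u := rewire_val_c hu'v.symm huv.symm
    have val_u' : ι' u' = v' := rewire_val_a hu'u.symm
    have val_v' : ι' v' = u' := rewire_val_d hu'v'.symm (fun he => hv'u he) hv'v
    refine ⟨I', ι', hM', hdisj',
      Chain.single hks hSI ⟨hG, fun z => hM'.deg_one z, hdisj'⟩ rfl rfl, ?_⟩
    apply Finset.card_lt_card
    rw [Finset.ssubset_iff_of_subset ?hsub]
    case hsub =>
      intro z hz
      have hz' : ι' z ≠ κ z := (Finset.mem_filter.mp hz).2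
      refine Finset.mem_filter.mpr ⟨Finset.mem_univ z, ?_⟩
      by_cases h1 : z = u
      · subst h1; exact absurd (val_u.trans hv) hz'
      by_cases h2 : z = v
      · subst h2; exact absurd (val_v.trans hκv.symm) hz'
      by_cases h3 : z = u'
      · subst h3
        rw [hιu']
        intro he
        have hc : κ u = u' := by rw [he, hJ.invol]
        exact hu'v (hv.trans hc).symm
      by_cases h4 : z = v'
      · subst h4
        rw [hιv']
        intro he
        have hc : κ v = v' := by rw [he, hJ.invol]
        exact hv'u (hκv.symm.trans hc).symm
      · rwa [hι', rewire_val_other h3 h1 h2 h4] at hz'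
    · refine ⟨u, huD, ?_⟩
      intro hmem
      exact (Finset.mem_filter.mp hmem).2 (by rw [val_u])

lemma chain_main {n : ℕ} {π : Fin n → ℕ} (G J : SimpleGraph (Fin n)) (κ : Fin n → Fin n)
    (hG : ∀ i, deg G i = π i) (hΔ : ∀ i, 24 * π i ≤ n)
    (hJ : Match J κ) (hdJ : Disjoint G J) :
    ∀ (N : ℕ) (I : SimpleGraph (Fin n)) (ι : Fin n → Fin n), Match I ι → Disjoint G I →
      (Finset.univ.filter fun z => ι z ≠ κ z).card ≤ N → Chain π G (G, I) (G, J) := by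
  have heqcase : ∀ (I : SimpleGraph (Fin n)) (ι : Fin n → Fin n), Match I ι →
      Disjoint G I → (∀ z, ι z = κ z) → Chain π G (G, I) (G, J) := by
    intro I ι hI hdI h0
    have hIJ : I = J := by
      ext v w
      rw [hI v w, hJ v w, h0 v]
    rw [hIJ]
    exact Chain.refl ⟨hG, fun z => hJ.deg_one z, hdJ⟩ rfl
  intro N
  induction N with
  | zero =>
    intro I ι hI hdI hcard
    refine heqcase I ι hI hdI ?_
    intro z
    by_contra hz
    have hm : z ∈ Finset.univ.filter fun z => ι z ≠ κ z :=
      Finset.mem_filter.mpr ⟨Finset.mem_univ z, hz⟩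
    rw [Finset.card_eq_zero.mp (Nat.le_zero.mp hcard)] at hm
    exact absurd hm (Finset.notMem_empty z)
  | succ N ih =>
    intro I ι hI hdI hcard
    by_cases hall : ∀ z, ι z = κ z
    · exact heqcase I ι hI hdI hall
    · push_neg at hall
      obtain ⟨u, hu⟩ := hall
      obtain ⟨I', ι', hM', hd', hchain, hlt⟩ :=
        step_lemma G I J ι κ hG hΔ hI hJ hdI hdJ u hu
      exact hchain.trans (ih I' ι' hM' hd' (by omega))

end Step

end KP


/-- Let `(G, I)` and `(G, J)` be two Kundu realizations of `π + 1` with the same underlying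
realization `G` of `π` (the matchings `I` and `J` need not be edge-disjoint). Then there is
a finite sequence of K-swaps transforming `(G, I)` into `(G, J)` such that at every
intermediate step the non-matching part of the realization equals `G`. -/
theorem kswap_sequence_fixed_G {n : ℕ} (π : Fin n → ℕ)
    (hgraphic : IsGraphic π)
    (hΔ : ∀ i, 24 * π i ≤ n)
    (hplus : IsGraphic (fun i => π i + 1))
    (G I J : SimpleGraph (Fin n))
    (h₁ : KunduState π (G, I)) (h₂ : KunduState π (G, J)) :
    ∃ (m : ℕ) (f : ℕ → SimpleGraph (Fin n) × SimpleGraph (Fin n)),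
      f 0 = (G, I) ∧ f m = (G, J) ∧
      (∀ k < m, KSwap (f k) (f (k + 1))) ∧
      (∀ k ≤ m, KunduState π (f k)) ∧
      (∀ k ≤ m, (f k).1 = G) := by
  obtain ⟨ι, hι⟩ := KP.exists_match h₁.2.1
  obtain ⟨κ, hκ⟩ := KP.exists_match h₂.2.1
  have hch := KP.chain_main G J κ h₁.1 hΔ hκ h₂.2.2
    ((Finset.univ.filter fun z => ι z ≠ κ z).card) I ι hι h₁.2.2 le_rfl
  obtain ⟨m, f, h0, hm, hs, hk, hg⟩ := hch
  exact ⟨m, f, h0, hm, hs, hk, hg⟩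
end

section
/- Let n ≥ 4 be even, let G be a simple graph on n vertices with maximum degree at most n/24, and let I and J be perfect matchings on the same vertex set. Then there exists a perfect matching I′ on this vertex set that is edge-disjoint from each of G, I, and J. -/
open scoped Classical

section Aux
variable {V : Type*} [Fintype V]

/-- A (partial) matching in `K` supported on `s`, given by an involution `f`. -/
def IsPM (K : SimpleGraph V) (s : Finset V) (f : V → V) : Prop :=
  ∀ v ∈ s, f v ∈ s ∧ f v ≠ v ∧ f (f v) = v ∧ K.Adj v (f v)

set_option linter.unusedSectionVars false in
lemma isPM_even_card (K : SimpleGraph V) :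
    ∀ s : Finset V, ∀ f, IsPM K s f → Even s.card := by
  intro s
  induction s using Finset.strongInduction with
  | _ s ih =>
    intro f hf
    rcases s.eq_empty_or_nonempty with rfl | ⟨a, ha⟩
    · simp
    · obtain ⟨hfa, hne, hinv, -⟩ := hf a ha
      have hsub : ({a, f a} : Finset V) ⊆ s := by
        intro x hx; simp at hx; rcases hx with rfl | rfl <;> assumption
      have hss : s \ {a, f a} ⊂ s :=
        Finset.sdiff_ssubset hsub ⟨a, by simp⟩
      have hpm : IsPM K (s \ {a, f a}) f := by
        intro v hv
        simp only [Finset.mem_sdiff, Finset.mem_insert, Finset.mem_singleton] at hv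
        obtain ⟨hvs, hv2⟩ := hv
        obtain ⟨h1, h2, h3, h4⟩ := hf v hvs
        refine ⟨?_, h2, h3, h4⟩
        simp only [Finset.mem_sdiff, Finset.mem_insert, Finset.mem_singleton]
        push_neg at hv2
        refine ⟨h1, ?_⟩
        push_neg
        constructor
        · intro h; apply hv2.2; rw [← h3, h]
        · intro h; apply hv2.1; rw [← h3, h, hinv]
      obtain ⟨r, hr⟩ := ih _ hss f hpm
      have hcard : (s \ {a, f a}).card = s.card - 2 := by
        rw [Finset.card_sdiff_of_subset hsub, Finset.card_pair (Ne.symm hne)]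
      have h2le : 2 ≤ s.card := by
        calc 2 = ({a, f a} : Finset V).card := (Finset.card_pair (Ne.symm hne)).symm
        _ ≤ s.card := Finset.card_le_card hsub
      exact ⟨r + 1, by omega⟩

lemma deg_eq_one_of (X : SimpleGraph V) (v t : V) (h : ∀ w, X.Adj v w ↔ w = t) :
    deg X v = 1 := by
  unfold deg
  rw [show (Finset.univ.filter fun w => X.Adj v w) = Finset.univ.filter fun w => w = t from
    Finset.filter_congr (by simp [h])]
  rw [Finset.card_eq_one]
  exact ⟨t, by ext w; simp⟩

end Aux

/-- Let `n ≥ 4` be even, let `G` be a simple graph on `n` vertices with maximum degree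
at most `n/24`, and let `I` and `J` be perfect matchings on the same vertex set. Then
there exists a perfect matching `I′` edge-disjoint from each of `G`, `I` and `J`. -/
theorem exists_disjoint_one_factor {V : Type*} [Fintype V] (n : ℕ)
    (hn : Fintype.card V = n) (heven : Even n) (h4 : 4 ≤ n)
    (G I J : SimpleGraph V)
    (hΔ : ∀ v, 24 * deg G v ≤ n)
    (hI : ∀ v, deg I v = 1) (hJ : ∀ v, deg J v = 1) :
    ∃ I' : SimpleGraph V, (∀ v, deg I' v = 1) ∧
      Disjoint I' G ∧ Disjoint I' I ∧ Disjoint I' J := by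
  classical
  obtain ⟨H, hH⟩ : ∃ H : SimpleGraph V, H = G ⊔ I ⊔ J := ⟨_, rfl⟩
  obtain ⟨K, hK⟩ : ∃ K : SimpleGraph V, K = Hᶜ := ⟨_, rfl⟩
  -- pick a maximum matching (s, f) in K
  have hne : (Finset.univ.filter fun p : Finset V × (V → V) => IsPM K p.1 p.2).Nonempty :=
    ⟨(∅, id), Finset.mem_filter.mpr ⟨Finset.mem_univ _, fun v hv => by simp at hv⟩⟩
  obtain ⟨p, hp, hmaxp⟩ := Finset.exists_max_image _ (fun p : Finset V × (V → V) => p.1.card) hne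
  rw [Finset.mem_filter] at hp
  obtain ⟨-, hPM⟩ := hp
  obtain ⟨s, f⟩ := p
  simp only at hPM hmaxp
  have hmax : ∀ s' : Finset V, ∀ f' : V → V, IsPM K s' f' → s'.card ≤ s.card := by
    intro s' f' h
    exact hmaxp (s', f') (by simp [Finset.mem_filter, h])
  -- basic degree facts
  have hHne : ∀ a b : V, H.Adj a b → a ≠ b := fun a b h => h.ne
  have hdegsum : ∀ w : V, deg K w + deg H w = n - 1 := by
    intro w
    have hdisj : Disjoint (Finset.univ.filter fun x => K.Adj w x)
        (Finset.univ.filter fun x => H.Adj w x) := by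
      rw [Finset.disjoint_left]
      intro x hx hx'
      simp only [Finset.mem_filter, Finset.mem_univ, true_and] at hx hx'
      rw [hK, SimpleGraph.compl_adj] at hx
      exact hx.2 hx'
    have hunion : (Finset.univ.filter fun x => K.Adj w x) ∪
        (Finset.univ.filter fun x => H.Adj w x) = Finset.univ.erase w := by
      ext x
      simp only [Finset.mem_union, Finset.mem_filter, Finset.mem_univ, true_and,
        Finset.mem_erase]
      constructor
      · rintro (h | h)
        · exact ⟨(SimpleGraph.Adj.ne h).symm, trivial⟩
        · exact ⟨(SimpleGraph.Adj.ne h).symm, trivial⟩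
      · rintro ⟨hxw, -⟩
        by_cases hadj : H.Adj w x
        · exact Or.inr hadj
        · exact Or.inl (by rw [hK, SimpleGraph.compl_adj]; exact ⟨Ne.symm hxw, hadj⟩)
    have := Finset.card_union_of_disjoint hdisj
    rw [hunion, Finset.card_erase_of_mem (Finset.mem_univ w), Finset.card_univ, hn] at this
    unfold deg
    omega
  have hdegH : ∀ w : V, deg H w ≤ deg G w + 2 := by
    intro w
    have hsub : (Finset.univ.filter fun x => H.Adj w x) ⊆
        (Finset.univ.filter fun x => G.Adj w x) ∪
        ((Finset.univ.filter fun x => I.Adj w x) ∪ (Finset.univ.filter fun x => J.Adj w x)) := by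
      intro x hx
      simp only [Finset.mem_filter, Finset.mem_univ, true_and, Finset.mem_union] at hx ⊢
      rw [hH] at hx
      rcases hx with (h | h) | h
      · exact Or.inl h
      · exact Or.inr (Or.inl h)
      · exact Or.inr (Or.inr h)
    calc deg H w = (Finset.univ.filter fun x => H.Adj w x).card := rfl
    _ ≤ _ := Finset.card_le_card hsub
    _ ≤ deg G w + ((Finset.univ.filter fun x => I.Adj w x) ∪
        (Finset.univ.filter fun x => J.Adj w x)).card := Finset.card_union_le _ _
    _ ≤ deg G w + (deg I w + deg J w) := by
        exact Nat.add_le_add_left (Finset.card_union_le _ _) _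
    _ = deg G w + 2 := by rw [hI w, hJ w]
  -- K.Adj from H-nonadjacency
  have hKadj : ∀ a b : V, a ≠ b → ¬H.Adj a b → K.Adj a b := by
    intro a b h1 h2
    rw [hK, SimpleGraph.compl_adj]; exact ⟨h1, h2⟩
  -- step 1: two uncovered vertices are H-adjacent
  have step1 : ∀ a b : V, a ∉ s → b ∉ s → a ≠ b → ¬K.Adj a b := by
    intro a b ha hb hab hadj
    set f' : V → V := fun z => if z = a then b else if z = b then a else f z with hf'
    have hpm' : IsPM K (insert a (insert b s)) f' := by
      intro v hv
      simp only [Finset.mem_insert] at hv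
      have hfo : ∀ x, x ≠ a → x ≠ b → f' x = f x := by
        intro x h1 h2; simp [hf', h1, h2]
      rcases hv with rfl | rfl | hv
      · have : f' v = b := by simp [hf']
        rw [this]
        refine ⟨by simp, Ne.symm hab, ?_, hadj⟩
        simp [hf', Ne.symm hab]
      · have : f' v = a := by simp [hf', Ne.symm hab]
        rw [this]
        refine ⟨by simp, hab, ?_, hadj.symm⟩
        simp [hf']
      · obtain ⟨h1, h2, h3, h4⟩ := hPM v hv
        have hva : v ≠ a := fun h => ha (h ▸ hv)
        have hvb : v ≠ b := fun h => hb (h ▸ hv)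
        have hfva : f v ≠ a := fun h => ha (h ▸ h1)
        have hfvb : f v ≠ b := fun h => hb (h ▸ h1)
        rw [hfo v hva hvb]
        refine ⟨by simp [h1], h2, ?_, h4⟩
        rw [hfo (f v) hfva hfvb, h3]
    have hcard : (insert a (insert b s)).card = s.card + 2 := by
      rw [Finset.card_insert_of_notMem (by simp [hab, ha]),
        Finset.card_insert_of_notMem hb]
    have := hmax _ _ hpm'
    omega
  -- main claim : s = univ
  have hsuniv : s = Finset.univ := by
    by_contra hsu
    have heq := Finset.eq_univ_iff_forall.not.mp hsu
    push_neg at heq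
    obtain ⟨u, hu⟩ := heq
    have hevens := isPM_even_card K s f hPM
    have hscard : s.card ≤ n := by rw [← hn, ← Finset.card_univ]; exact Finset.card_le_card (Finset.subset_univ s)
    -- find a second uncovered vertex
    obtain ⟨v, hv, hvu⟩ : ∃ v, v ∉ s ∧ v ≠ u := by
      by_contra h
      push_neg at h
      have : Finset.univ \ s ⊆ {u} := by
        intro x hx
        simp only [Finset.mem_sdiff, Finset.mem_univ, true_and] at hx
        simp [h x hx]
      have h1 : (Finset.univ \ s).card ≤ 1 := le_trans (Finset.card_le_card this) (by simp)
      have h2 : (Finset.univ \ s).card = n - s.card := by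
        rw [Finset.card_sdiff_of_subset (Finset.subset_univ s), Finset.card_univ, hn]
      have h3 : u ∈ Finset.univ \ s := by simp [hu]
      have h4 : 1 ≤ (Finset.univ \ s).card := Finset.card_pos.mpr ⟨u, h3⟩
      obtain ⟨r, hr⟩ := hevens
      obtain ⟨r', hr'⟩ := heven
      omega
    -- uncovered vertices are H-adjacent
    have hHuv : H.Adj u v := by
      by_contra hadj
      exact step1 u v hu hv (Ne.symm hvu) (hKadj u v (Ne.symm hvu) hadj)
    -- step 2 : neighbors of uncovered vertices are covered
    have step2 : ∀ w x : V, w ∉ s → K.Adj w x → x ∈ s := by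
      intro w x hw hadj
      by_contra hx
      exact step1 w x hw hx hadj.ne hadj
    -- step 3 : no augmenting configuration
    have step3 : ∀ x ∈ s, ¬(K.Adj u x ∧ K.Adj v (f x)) := by
      rintro x hx ⟨hux, hvfx⟩
      obtain ⟨hx1, hx2, hx3, hx4⟩ := hPM x hx
      set y := f x with hy
      have hxu : x ≠ u := fun h => hu (h ▸ hx)
      have hxv : x ≠ v := fun h => hv (h ▸ hx)
      have hyu : y ≠ u := fun h => hu (h ▸ hx1)
      have hyv : y ≠ v := fun h => hv (h ▸ hx1)
      have hxy : x ≠ y := Ne.symm hx2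
      set f' : V → V := fun z =>
        if z = u then x else if z = x then u else if z = v then y else if z = y then v else f z
        with hf'
      have hpm' : IsPM K (insert u (insert v s)) f' := by
        intro w hw
        simp only [Finset.mem_insert] at hw
        have hf'u : f' u = x := by simp [hf']
        have hf'x : f' x = u := by simp [hf', hxu]
        have hf'v : f' v = y := by simp [hf', hvu, Ne.symm hxv]
        have hf'y : f' y = v := by simp [hf', hyu, Ne.symm hxy, hyv]
        rcases hw with rfl | rfl | hws
        · rw [hf'u]
          exact ⟨by simp [hx], hxu, by rw [hf'x], hux⟩
        · rw [hf'v]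
          exact ⟨by simp [hx1], hyv, by rw [hf'y], hvfx⟩
        · rcases eq_or_ne w x with rfl | hwx
          · rw [hf'x]
            exact ⟨by simp, by first | exact Ne.symm hxu | exact hxu | exact fun h => hxu h.symm, by rw [hf'u], hux.symm⟩
          rcases eq_or_ne w y with rfl | hwy
          · rw [hf'y]
            exact ⟨by simp, by first | exact Ne.symm hyv | exact hyv | exact fun h => hyv h.symm, by rw [hf'v], hvfx.symm⟩
          obtain ⟨h1, h2, h3, h4⟩ := hPM w hws
          have hwu : w ≠ u := fun h => hu (h ▸ hws)
          have hwv : w ≠ v := fun h => hv (h ▸ hws)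
          have hfwu : f w ≠ u := fun h => hu (h ▸ h1)
          have hfwv : f w ≠ v := fun h => hv (h ▸ h1)
          have hfwx : f w ≠ x := by
            intro h
            apply hwy
            rw [← h3, h, ← hy]
          have hfwy : f w ≠ y := by
            intro h
            apply hwx
            rw [← h3, h, hy, hx3]
          have hfw : f' w = f w := by simp [hf', hwu, hwx, hwv, hwy]
          rw [hfw]
          refine ⟨by simp [h1], h2, ?_, h4⟩
          simp [hf', hfwu, hfwx, hfwv, hfwy, h3]
      have hcard : (insert u (insert v s)).card = s.card + 2 := by
        rw [Finset.card_insert_of_notMem (by simp [Ne.symm hvu, hu]),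
          Finset.card_insert_of_notMem hv]
      have := hmax _ _ hpm'
      omega
    -- counting
    have hsub2 : s ⊆ Finset.univ \ {u, v} := by
      intro x hx
      simp only [Finset.mem_sdiff, Finset.mem_univ, true_and, Finset.mem_insert,
        Finset.mem_singleton]
      push_neg
      exact ⟨fun h => hu (h ▸ hx), fun h => hv (h ▸ hx)⟩
    have hsn2 : s.card ≤ n - 2 := by
      have := Finset.card_le_card hsub2
      rwa [Finset.card_sdiff_of_subset (Finset.subset_univ _), Finset.card_univ, hn,
        Finset.card_pair (Ne.symm hvu)] at this
    have hAeq : Finset.univ.filter (fun x => K.Adj u x) = s.filter (fun x => K.Adj u x) := by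
      ext x
      simp only [Finset.mem_filter, Finset.mem_univ, true_and]
      exact ⟨fun h => ⟨step2 u x hu h, h⟩, fun h => h.2⟩
    have hBeq : (s.filter (fun x => K.Adj v (f x))).card = deg K v := by
      unfold deg
      apply Finset.card_bij (fun x _ => f x)
      · intro x hx
        simp only [Finset.mem_filter, Finset.mem_univ, true_and] at hx ⊢
        exact hx.2
      · intro x hx x' hx' hxx
        simp only [Finset.mem_filter] at hx hx'
        have h3 := (hPM x hx.1).2.2.1
        have h3' := (hPM x' hx'.1).2.2.1
        rw [← h3, ← h3', hxx]
      · intro y hy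
        simp only [Finset.mem_filter, Finset.mem_univ, true_and] at hy
        have hys : y ∈ s := step2 v y hv hy
        obtain ⟨h1, h2, h3, h4⟩ := hPM y hys
        exact ⟨f y, Finset.mem_filter.mpr ⟨h1, by rw [h3]; exact hy⟩, h3⟩
    have hdisjAB : Disjoint (s.filter (fun x => K.Adj u x)) (s.filter (fun x => K.Adj v (f x))) := by
      rw [Finset.disjoint_left]
      intro x hx hx'
      simp only [Finset.mem_filter] at hx hx'
      exact step3 x hx.1 ⟨hx.2, hx'.2⟩
    have hABsub : (s.filter (fun x => K.Adj u x)) ∪ (s.filter (fun x => K.Adj v (f x))) ⊆ s := by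
      intro x hx
      simp only [Finset.mem_union, Finset.mem_filter] at hx
      rcases hx with h | h <;> exact h.1
    have hcount : deg K u + deg K v ≤ s.card := by
      have h1 : deg K u = (s.filter (fun x => K.Adj u x)).card := by
        unfold deg; rw [hAeq]
      rw [h1, ← hBeq, ← Finset.card_union_of_disjoint hdisjAB]
      exact Finset.card_le_card hABsub
    -- final contradiction
    have hu1 := hdegsum u
    have hv1 := hdegsum v
    have hu2 := hdegH u
    have hv2 := hdegH v
    have hgu := hΔ u
    have hgv := hΔ v
    rcases Nat.lt_or_ge n 5 with h5 | h5
    · -- n = 4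
      have hG0 : ∀ a b : V, ¬G.Adj a b := by
        intro a b hab
        have : 1 ≤ deg G a := by
          apply Finset.card_pos.mpr
          exact ⟨b, by simp [hab]⟩
        have := hΔ a
        omega
      have hIJuv : I.Adj u v ∨ J.Adj u v := by
        rw [hH] at hHuv
        simp only [SimpleGraph.sup_adj] at hHuv
        rcases hHuv with (h | h) | h
        · exact absurd h (hG0 u v)
        · exact Or.inl h
        · exact Or.inr h
      by_cases hthird : ∃ w, w ∉ s ∧ w ≠ u ∧ w ≠ v
      · -- everything uncovered : contradiction with deg H u ≤ 2
        obtain ⟨w, hw, hwu, hwv⟩ := hthird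
        have hs0 : s = ∅ := by
          rcases s.eq_empty_or_nonempty with h | ⟨z, hz⟩
          · exact h
          exfalso
          obtain ⟨h1, h2, h3, h4⟩ := hPM z hz
          have hsub3 : s ⊆ Finset.univ \ {u, v, w} := by
            intro x hx
            simp only [Finset.mem_sdiff, Finset.mem_univ, true_and, Finset.mem_insert,
              Finset.mem_singleton]
            push_neg
            exact ⟨fun h => hu (h ▸ hx), fun h => hv (h ▸ hx), fun h => hw (h ▸ hx)⟩
          have hc3 : ({u, v, w} : Finset V).card = 3 := by
            rw [Finset.card_insert_of_notMem (by simp [Ne.symm hvu, Ne.symm hwu]),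
              Finset.card_pair (Ne.symm hwv)]
          have hle : s.card ≤ n - 3 := by
            have := Finset.card_le_card hsub3
            rwa [Finset.card_sdiff_of_subset (Finset.subset_univ _), Finset.card_univ, hn, hc3] at this
          have hpairsub : ({z, f z} : Finset V) ⊆ s := by
            intro x hx
            simp only [Finset.mem_insert, Finset.mem_singleton] at hx
            rcases hx with rfl | rfl <;> assumption
          have h2le : 2 ≤ s.card := by
            calc 2 = ({z, f z} : Finset V).card := (Finset.card_pair (Ne.symm h2)).symm
            _ ≤ s.card := Finset.card_le_card hpairsub
          omega
        -- get the fourth vertex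
        have hc3 : ({u, v, w} : Finset V).card = 3 := by
          rw [Finset.card_insert_of_notMem (by simp [Ne.symm hvu, Ne.symm hwu]),
            Finset.card_pair (Ne.symm hwv)]
        have hcz : (Finset.univ \ ({u, v, w} : Finset V)).card = 1 := by
          rw [Finset.card_sdiff_of_subset (Finset.subset_univ _), Finset.card_univ, hn, hc3]
          omega
        obtain ⟨z, hz⟩ := Finset.card_eq_one.mp hcz
        have hzmem : z ∈ Finset.univ \ ({u, v, w} : Finset V) := by rw [hz]; simp
        simp only [Finset.mem_sdiff, Finset.mem_univ, true_and, Finset.mem_insert,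
          Finset.mem_singleton] at hzmem
        push_neg at hzmem
        obtain ⟨hzu, hzv, hzw⟩ := hzmem
        have hHuw : H.Adj u w := by
          by_contra hadj
          exact step1 u w hu (hs0 ▸ (by simp)) (Ne.symm hwu) (hKadj u w (Ne.symm hwu) hadj)
        have hHuz : H.Adj u z := by
          by_contra hadj
          exact step1 u z hu (hs0 ▸ (by simp)) (Ne.symm hzu) (hKadj u z (Ne.symm hzu) hadj)
        have hsub4 : ({v, w, z} : Finset V) ⊆ Finset.univ.filter (fun x => H.Adj u x) := by
          intro x hx
          simp only [Finset.mem_insert, Finset.mem_singleton] at hx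
          simp only [Finset.mem_filter, Finset.mem_univ, true_and]
          rcases hx with rfl | rfl | rfl
          · exact hHuv
          · exact hHuw
          · exact hHuz
        have hc4 : ({v, w, z} : Finset V).card = 3 := by
          rw [Finset.card_insert_of_notMem (by simp [Ne.symm hwv, Ne.symm hzv]),
            Finset.card_pair (Ne.symm hzw)]
        have h3le : 3 ≤ deg H u := by
          rw [← hc4]; exact Finset.card_le_card hsub4
        omega
      · -- exactly two uncovered
        push_neg at hthird
        have hs_eq : s = Finset.univ \ {u, v} := by
          apply Finset.eq_of_subset_of_card_le hsub2
          rw [Finset.card_sdiff_of_subset (Finset.subset_univ _), Finset.card_univ, hn,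
            Finset.card_pair (Ne.symm hvu)]
          by_contra hlt
          push_neg at hlt
          -- there is x ∈ univ \ {u,v} \ s
          have : ¬ (Finset.univ \ {u, v} ⊆ s) := by
            intro hsub5
            have := Finset.card_le_card hsub5
            rw [Finset.card_sdiff_of_subset (Finset.subset_univ _), Finset.card_univ, hn,
              Finset.card_pair (Ne.symm hvu)] at this
            omega
          obtain ⟨x, hx1, hx2⟩ := Finset.not_subset.mp this
          simp only [Finset.mem_sdiff, Finset.mem_univ, true_and, Finset.mem_insert,
            Finset.mem_singleton] at hx1
          push_neg at hx1
          exact hx1.2 (hthird x hx2 hx1.1)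
        have hscard2 : s.card = n - 2 := by
          rw [hs_eq, Finset.card_sdiff_of_subset (Finset.subset_univ _), Finset.card_univ, hn,
            Finset.card_pair (Ne.symm hvu)]
        obtain ⟨x, hx⟩ : s.Nonempty := Finset.card_pos.mp (by omega)
        obtain ⟨hx1, hx2, hx3, hx4⟩ := hPM x hx
        have hsxy : s = {x, f x} := by
          symm
          apply Finset.eq_of_subset_of_card_le
          · intro z hz
            simp only [Finset.mem_insert, Finset.mem_singleton] at hz
            rcases hz with rfl | rfl <;> assumption
          · rw [Finset.card_pair (Ne.symm hx2)]; omega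
        -- the I (or J) partner of x must be f x, contradiction with K.Adj x (f x)
        have hxmem := hsub2 hx
        simp only [Finset.mem_sdiff, Finset.mem_univ, true_and, Finset.mem_insert,
          Finset.mem_singleton] at hxmem
        push_neg at hxmem
        obtain ⟨hxu, hxv⟩ := hxmem
        have hKxy : K.Adj x (f x) := hx4
        have hnH : ¬H.Adj x (f x) := by
          rw [hK, SimpleGraph.compl_adj] at hKxy
          exact hKxy.2
        rcases hIJuv with hIuv | hJuv
        · -- I.Adj u v
          obtain ⟨t, ht⟩ := Finset.card_eq_one.mp (hI x)
          have hIxt : I.Adj x t := by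
            have : t ∈ Finset.univ.filter fun w => I.Adj x w := by rw [ht]; simp
            simpa using this
          have htu : t ≠ u := by
            rintro rfl
            obtain ⟨t', ht'⟩ := Finset.card_eq_one.mp (hI t)
            have hm1 : x ∈ Finset.univ.filter fun w => I.Adj t w := by simp [hIxt.symm]
            have hm2 : v ∈ Finset.univ.filter fun w => I.Adj t w := by simp [hIuv]
            rw [ht'] at hm1 hm2
            simp only [Finset.mem_singleton] at hm1 hm2
            exact hxv (hm1.trans hm2.symm)
          have htv : t ≠ v := by
            rintro rfl
            obtain ⟨t', ht'⟩ := Finset.card_eq_one.mp (hI t)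
            have hm1 : x ∈ Finset.univ.filter fun w => I.Adj t w := by simp [hIxt.symm]
            have hm2 : u ∈ Finset.univ.filter fun w => I.Adj t w := by simp [hIuv.symm]
            rw [ht'] at hm1 hm2
            simp only [Finset.mem_singleton] at hm1 hm2
            exact hxu (hm1.trans hm2.symm)
          have hts : t ∈ s := by
            rw [hs_eq]
            simp [htu, htv]
          have htfx : t = f x := by
            rw [hsxy] at hts
            simp only [Finset.mem_insert, Finset.mem_singleton] at hts
            rcases hts with rfl | rfl
            · exact absurd rfl hIxt.ne'
            · rfl
          apply hnH
          rw [hH]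
          simp only [SimpleGraph.sup_adj]
          exact Or.inl (Or.inr (htfx ▸ hIxt))
        · -- J.Adj u v
          obtain ⟨t, ht⟩ := Finset.card_eq_one.mp (hJ x)
          have hJxt : J.Adj x t := by
            have : t ∈ Finset.univ.filter fun w => J.Adj x w := by rw [ht]; simp
            simpa using this
          have htu : t ≠ u := by
            rintro rfl
            obtain ⟨t', ht'⟩ := Finset.card_eq_one.mp (hJ t)
            have hm1 : x ∈ Finset.univ.filter fun w => J.Adj t w := by simp [hJxt.symm]
            have hm2 : v ∈ Finset.univ.filter fun w => J.Adj t w := by simp [hJuv]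
            rw [ht'] at hm1 hm2
            simp only [Finset.mem_singleton] at hm1 hm2
            exact hxv (hm1.trans hm2.symm)
          have htv : t ≠ v := by
            rintro rfl
            obtain ⟨t', ht'⟩ := Finset.card_eq_one.mp (hJ t)
            have hm1 : x ∈ Finset.univ.filter fun w => J.Adj t w := by simp [hJxt.symm]
            have hm2 : u ∈ Finset.univ.filter fun w => J.Adj t w := by simp [hJuv.symm]
            rw [ht'] at hm1 hm2
            simp only [Finset.mem_singleton] at hm1 hm2
            exact hxu (hm1.trans hm2.symm)
          have hts : t ∈ s := by
            rw [hs_eq]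
            simp [htu, htv]
          have htfx : t = f x := by
            rw [hsxy] at hts
            simp only [Finset.mem_insert, Finset.mem_singleton] at hts
            rcases hts with rfl | rfl
            · exact absurd rfl hJxt.ne'
            · rfl
          apply hnH
          rw [hH]
          simp only [SimpleGraph.sup_adj]
          exact Or.inr (htfx ▸ hJxt)
    · -- n ≥ 5 : pure counting
      omega
  -- build the perfect matching from (univ, f)
  rw [hsuniv] at hPM
  have hPMu : ∀ v : V, f v ≠ v ∧ f (f v) = v ∧ K.Adj v (f v) := by
    intro v
    obtain ⟨-, h2, h3, h4⟩ := hPM v (Finset.mem_univ v)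
    exact ⟨h2, h3, h4⟩
  set I' : SimpleGraph V :=
    { Adj := fun a b => a ≠ b ∧ f a = b ∧ f b = a
      symm := by
        constructor
        rintro a b ⟨h1, h2, h3⟩
        exact ⟨h1.symm, h3, h2⟩
      loopless := by
        constructor
        rintro a ⟨h1, -⟩
        exact h1 rfl } with hI'
  have hI'adj : ∀ a b : V, I'.Adj a b ↔ a ≠ b ∧ f a = b ∧ f b = a := fun a b => Iff.rfl
  have hI'K : ∀ a b : V, I'.Adj a b → K.Adj a b := by
    rintro a b ⟨h1, h2, h3⟩
    have := (hPMu a).2.2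
    rwa [h2] at this
  have hI'nH : ∀ a b : V, I'.Adj a b → ¬H.Adj a b := by
    intro a b h
    have := hI'K a b h
    rw [hK, SimpleGraph.compl_adj] at this
    exact this.2
  refine ⟨I', ?_, ?_, ?_, ?_⟩
  · intro v
    apply deg_eq_one_of I' v (f v)
    intro w
    constructor
    · rintro ⟨h1, h2, h3⟩
      exact h2.symm
    · rintro rfl
      obtain ⟨h2, h3, -⟩ := hPMu v
      exact ⟨Ne.symm h2, rfl, h3⟩
  · rw [disjoint_iff_inf_le]
    rintro a b ⟨h1, h2⟩
    exact absurd (by rw [hH]; exact Or.inl (Or.inl h2) : H.Adj a b) (hI'nH a b h1)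
  · rw [disjoint_iff_inf_le]
    rintro a b ⟨h1, h2⟩
    exact absurd (by rw [hH]; exact Or.inl (Or.inr h2) : H.Adj a b) (hI'nH a b h1)
  · rw [disjoint_iff_inf_le]
    rintro a b ⟨h1, h2⟩
    exact absurd (by rw [hH]; exact Or.inr h2 : H.Adj a b) (hI'nH a b h1)
end
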